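/- arXiv:2010.09995 — 6 statements merged into one kernel-verified Lean document; each statement's English description precedes it below -/
import Mathlib

section
/- Max-weight comparison lemma: Let Q^{(k)}_j ≥ 0, r̂_{i,j} ∈ ℝ, V ≥ 0 and ε ∈ ℝ be constants (i ∈ {1,…,N}, j ∈ {1,…,M}, k ∈ {1,…,K}). Let Λ = (Λ_i) be nonnegative random variables with Λ_i ≤ C_λ and E[Λ_i] = λ_i, and let w^{(k)}_{i,j}(t) and ρ^{(k)}_j(t) be integrable random variables, independent of Λ, with |w^{(k)}_{i,j}(t)| ≤ C_u, E[w^{(k)}_{i,j}(t)] = w^{(k)}_{i,j} and E[ρ^{(k)}_j(t)] = ρ^{(k)}_j. Let x(t) be a random N×M matrix that almost surely maximizes Σ_{i,j}(V·r̂_{i,j} − Σ_k w^{(k)}_{i,j}(t)Q^{(k)}_j)·x_{i,j} over matrices x ≥ 0 with Σ_j x_{i,j} = Λ_i for all i. Then for every deterministic matrix x_ε ≥ 0 with Σ_j x_{ε,i,j} = λ_i for all i: E[ Σ_{j,k} Q^{(k)}_j (Σ_i w^{(k)}_{i,j}(t)x_{i,j}(t) − ρ^{(k)}_j(t) + ε)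 − V·Σ_{i,j} r̂_{i,j}x_{i,j}(t) ] ≤ Σ_{j,k} Q^{(k)}_j (Σ_i w^{(k)}_{i,j}x_{ε,i,j} − ρ^{(k)}_j + ε) − V·Σ_{i,j} r̂_{i,j}x_{ε,i,j}. -/
open MeasureTheory ProbabilityTheory

lemma mw_rearrange (N M K : ℕ) (Q : Fin K → Fin M → ℝ) (R : Fin N → Fin M → ℝ)
    (V ε : ℝ) (A : Fin K → Fin N → Fin M → ℝ) (B : Fin K → Fin M → ℝ) (X : Fin N → Fin M → ℝ) :
    ∑ j, ∑ k, Q k j * (∑ i, A k i j * X i j - B k j + ε) - V * ∑ i, ∑ j, R i j * X i j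
    = -(∑ i, ∑ j, (V * R i j - ∑ k, A k i j * Q k j) * X i j) + ∑ j, ∑ k, Q k j * (ε - B k j) := by
  have key : ∑ j, ∑ k, Q k j * ∑ i, A k i j * X i j
      = ∑ i, ∑ j, (∑ k, A k i j * Q k j) * X i j := by
    simp only [Finset.mul_sum, Finset.sum_mul]
    calc ∑ j, ∑ k, ∑ i, Q k j * (A k i j * X i j)
        = ∑ j, ∑ i, ∑ k, Q k j * (A k i j * X i j) :=
          Finset.sum_congr rfl fun j _ => Finset.sum_comm
      _ = ∑ i, ∑ j, ∑ k, Q k j * (A k i j * X i j) := Finset.sum_comm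
      _ = ∑ i, ∑ j, ∑ k, A k i j * Q k j * X i j :=
          Finset.sum_congr rfl fun i _ => Finset.sum_congr rfl fun j _ =>
            Finset.sum_congr rfl fun k _ => by ring
  have e1 : ∀ j k, Q k j * (∑ i, A k i j * X i j - B k j + ε)
      = Q k j * ∑ i, A k i j * X i j + Q k j * (ε - B k j) := fun j k => by ring
  have e2 : ∀ i j, (V * R i j - ∑ k, A k i j * Q k j) * X i j
      = V * (R i j * X i j) - (∑ k, A k i j * Q k j) * X i j := fun i j => by ring
  simp only [e1, Finset.sum_add_distrib, key, e2, Finset.sum_sub_distrib, ← Finset.mul_sum]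
  ring

/-- **Max-weight comparison lemma.** With queue values `Q ≥ 0`, reward estimates `r̂`, `V ≥ 0`,
`ε ∈ ℝ` fixed, arrivals `Λ i ∈ [0, C_λ]` with means `λ i`, constraint data `(W, P)` bounded by
`C_u`, integrable, with means `(w, ρ)` and independent of `Λ`, and `x` a random nonnegative
matrix with row sums `Λ` that a.s. maximizes the weight
`∑_{i,j} (V r̂ i j - ∑ k W k i j · Q k j) x i j`, one has for every deterministic `x_ε ≥ 0`
with row sums `λ`:
`E[∑_{j,k} Q k j (∑ i W k i j x i j - P k j + ε) - V ∑_{i,j} r̂ i j x i j]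
  ≤ ∑_{j,k} Q k j (∑ i w k i j x_ε i j - ρ k j + ε) - V ∑_{i,j} r̂ i j x_ε i j`. -/
theorem maxweight_comparison (N M K : ℕ)
    {Ω : Type*} [MeasurableSpace Ω] (μ : Measure Ω) [IsProbabilityMeasure μ]
    (Q : Fin K → Fin M → ℝ) (hQ : ∀ k j, 0 ≤ Q k j)
    (rhat : Fin N → Fin M → ℝ) (V : ℝ) (hV : 0 ≤ V) (ε : ℝ)
    (Clam Cu : ℝ)
    (Λ : Fin N → Ω → ℝ) (lam : Fin N → ℝ)
    (hΛmeas : ∀ i, Measurable (Λ i))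
    (hΛnonneg : ∀ i ω, 0 ≤ Λ i ω) (hΛbdd : ∀ i ω, Λ i ω ≤ Clam)
    (hΛmean : ∀ i, ∫ ω, Λ i ω ∂μ = lam i)
    (W : Fin K → Fin N → Fin M → Ω → ℝ) (P : Fin K → Fin M → Ω → ℝ)
    (w : Fin K → Fin N → Fin M → ℝ) (ρ : Fin K → Fin M → ℝ)
    (hWmeas : ∀ k i j, Measurable (W k i j)) (hPmeas : ∀ k j, Measurable (P k j))
    (hWbdd : ∀ k i j ω, |W k i j ω| ≤ Cu)
    (hPint : ∀ k j, Integrable (P k j) μ)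
    (hWmean : ∀ k i j, ∫ ω, W k i j ω ∂μ = w k i j)
    (hPmean : ∀ k j, ∫ ω, P k j ω ∂μ = ρ k j)
    (hindep : IndepFun
      (fun ω => ((fun k i j => W k i j ω : Fin K → Fin N → Fin M → ℝ),
                 (fun k j => P k j ω : Fin K → Fin M → ℝ)))
      (fun ω => (fun i => Λ i ω : Fin N → ℝ)) μ)
    (x : Fin N → Fin M → Ω → ℝ)
    (hxmeas : ∀ i j, Measurable (x i j))
    (hxmax : ∀ᵐ ω ∂μ, (∀ i j, 0 ≤ x i j ω) ∧ (∀ i, ∑ j, x i j ω = Λ i ω) ∧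
      ∀ y : Fin N → Fin M → ℝ, (∀ i j, 0 ≤ y i j) → (∀ i, ∑ j, y i j = Λ i ω) →
        ∑ i, ∑ j, (V * rhat i j - ∑ k, W k i j ω * Q k j) * y i j
          ≤ ∑ i, ∑ j, (V * rhat i j - ∑ k, W k i j ω * Q k j) * x i j ω)
    (xeps : Fin N → Fin M → ℝ)
    (hxeps_nonneg : ∀ i j, 0 ≤ xeps i j)
    (hxeps_rows : ∀ i, ∑ j, xeps i j = lam i) :
    ∫ ω, (∑ j, ∑ k, Q k j * (∑ i, W k i j ω * x i j ω - P k j ω + ε) -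
        V * ∑ i, ∑ j, rhat i j * x i j ω) ∂μ
      ≤ ∑ j, ∑ k, Q k j * (∑ i, w k i j * xeps i j - ρ k j + ε) -
        V * ∑ i, ∑ j, rhat i j * xeps i j := by
  -- trivial case M = 0
  rcases Nat.eq_zero_or_pos M with hM | hM
  · subst hM
    simp
  have hΩ : Nonempty Ω := by
    by_contra h
    rw [not_nonempty_iff] at h
    have h1 : μ Set.univ = 1 := measure_univ
    simp [Set.univ_eq_empty_iff.mpr h] at h1
  obtain ⟨ω₀⟩ := hΩ
  -- basic helper: bounded measurable ⇒ integrable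
  have hbint : ∀ (f : Ω → ℝ) (C : ℝ), Measurable f → (∀ᵐ ω ∂μ, |f ω| ≤ C) →
      Integrable f μ := fun f C hm hb =>
    Integrable.mono' (integrable_const C) hm.aestronglyMeasurable
      (by simpa [Real.norm_eq_abs] using hb)
  have hWint : ∀ k i j, Integrable (W k i j) μ := fun k i j =>
    hbint _ Cu (hWmeas k i j) (Filter.Eventually.of_forall (hWbdd k i j))
  have hΛint : ∀ i, Integrable (Λ i) μ := fun i =>
    hbint _ Clam (hΛmeas i)
      (Filter.Eventually.of_forall fun ω => by
        rw [abs_of_nonneg (hΛnonneg i ω)]; exact hΛbdd i ω)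
  have hΛabs : ∀ i ω, |Λ i ω| ≤ Clam := fun i ω => by
    rw [abs_of_nonneg (hΛnonneg i ω)]; exact hΛbdd i ω
  -- the weight function φ
  set φ : Fin N → Fin M → Ω → ℝ :=
    fun i j ω => V * rhat i j - ∑ k, W k i j ω * Q k j with hφdef
  have hφmeas : ∀ i j, Measurable (φ i j) := fun i j =>
    measurable_const.sub (Finset.univ.measurable_sum fun k _ => (hWmeas k i j).mul_const _)
  set Cφ : Fin N → Fin M → ℝ := fun i j => |V * rhat i j| + ∑ k, Cu * Q k j with hCφdef
  have hCφnonneg : ∀ i j, 0 ≤ Cφ i j := fun i j =>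
    add_nonneg (abs_nonneg _) (Finset.sum_nonneg fun k _ =>
      mul_nonneg (le_trans (abs_nonneg _) (hWbdd k i j ω₀)) (hQ k j))
  have hφbdd : ∀ i j ω, |φ i j ω| ≤ Cφ i j := by
    intro i j ω
    refine (abs_sub _ _).trans (add_le_add le_rfl ?_)
    refine (Finset.abs_sum_le_sum_abs _ _).trans (Finset.sum_le_sum fun k _ => ?_)
    rw [abs_mul, abs_of_nonneg (hQ k j)]
    exact mul_le_mul_of_nonneg_right (hWbdd k i j ω) (hQ k j)
  have hφint : ∀ i j, Integrable (φ i j) μ := fun i j =>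
    hbint _ (Cφ i j) (hφmeas i j) (Filter.Eventually.of_forall (hφbdd i j))
  have hφmean : ∀ i j, ∫ ω, φ i j ω ∂μ = V * rhat i j - ∑ k, w k i j * Q k j := by
    intro i j
    rw [hφdef]
    rw [integral_sub (integrable_const _)
      (integrable_finset_sum _ fun k _ => (hWint k i j).mul_const _)]
    rw [integral_const, integral_finset_sum _ fun k _ => (hWint k i j).mul_const _]
    simp only [measure_univ, probReal_univ, ENNReal.toReal_one, smul_eq_mul, one_mul, one_smul]
    congr 1
    exact Finset.sum_congr rfl fun k _ => by rw [integral_mul_const, hWmean]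
  -- the comparison matrix built from xeps
  set a : Fin N → Fin M → ℝ :=
    fun i j => if lam i = 0 then (1 : ℝ) / M else xeps i j / lam i with hadef
  have hlamnn : ∀ i, 0 ≤ lam i := fun i =>
    (hxeps_rows i) ▸ Finset.sum_nonneg fun j _ => hxeps_nonneg i j
  have hanonneg : ∀ i j, 0 ≤ a i j := by
    intro i j
    rw [hadef]
    dsimp only
    split_ifs
    · positivity
    · exact div_nonneg (hxeps_nonneg i j) (hlamnn i)
  have hasum : ∀ i, ∑ j, a i j = 1 := by
    intro i
    rw [hadef]
    by_cases hl : lam i = 0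
    · simp only [hl, if_true]
      rw [Finset.sum_const, Finset.card_univ, Fintype.card_fin, nsmul_eq_mul]
      field_simp
    · simp only [hl, if_false]
      rw [← Finset.sum_div, hxeps_rows, div_self hl]
  have haE : ∀ i j, a i j * lam i = xeps i j := by
    intro i j
    by_cases hl : lam i = 0
    · have hx0 : xeps i j = 0 := by
        have h0 : ∑ j, xeps i j = 0 := (hxeps_rows i).trans hl
        exact (Finset.sum_eq_zero_iff_of_nonneg fun j _ => hxeps_nonneg i j).1 h0 j
          (Finset.mem_univ j)
      simp [hl, hx0]
    · simp only [hadef, hl, if_false]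
      field_simp
  -- integrability of g and h
  set g : Ω → ℝ := fun ω => ∑ i, ∑ j, φ i j ω * x i j ω with hgdef
  set h : Ω → ℝ := fun ω => ∑ i, ∑ j, φ i j ω * (a i j * Λ i ω) with hhdef
  have hxbdd : ∀ᵐ ω ∂μ, ∀ i j, |x i j ω| ≤ Clam := by
    filter_upwards [hxmax] with ω hω
    intro i j
    rw [abs_of_nonneg (hω.1 i j)]
    calc x i j ω ≤ ∑ j', x i j' ω :=
          Finset.single_le_sum (fun j' _ => hω.1 i j') (Finset.mem_univ j)
      _ = Λ i ω := hω.2.1 i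
      _ ≤ Clam := hΛbdd i ω
  have hgint : Integrable g μ := by
    refine integrable_finset_sum _ fun i _ => integrable_finset_sum _ fun j _ => ?_
    refine hbint _ (Cφ i j * Clam) ((hφmeas i j).mul (hxmeas i j)) ?_
    filter_upwards [hxbdd] with ω hω
    rw [abs_mul]
    exact mul_le_mul (hφbdd i j ω) (hω i j) (abs_nonneg _) (hCφnonneg i j)
  have hhtermint : ∀ i j, Integrable (fun ω => φ i j ω * (a i j * Λ i ω)) μ := by
    intro i j
    refine hbint _ (Cφ i j * (a i j * Clam))
      ((hφmeas i j).mul (measurable_const.mul (hΛmeas i))) ?_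
    refine Filter.Eventually.of_forall fun ω => ?_
    rw [abs_mul, abs_mul, abs_of_nonneg (hanonneg i j)]
    exact mul_le_mul (hφbdd i j ω)
      (mul_le_mul_of_nonneg_left (hΛabs i ω) (hanonneg i j))
      (mul_nonneg (hanonneg i j) (abs_nonneg _)) (hCφnonneg i j)
  have hhint : Integrable h μ :=
    integrable_finset_sum _ fun i _ => integrable_finset_sum _ fun j _ => hhtermint i j
  -- independence and E[h]
  have hEh : ∫ ω, h ω ∂μ = ∑ i, ∑ j, (V * rhat i j - ∑ k, w k i j * Q k j) * xeps i j := by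
    simp only [hhdef]
    rw [integral_finset_sum _ fun i _ =>
      integrable_finset_sum _ fun j _ => hhtermint i j]
    refine Finset.sum_congr rfl fun i _ => ?_
    rw [integral_finset_sum _ fun j _ => hhtermint i j]
    refine Finset.sum_congr rfl fun j _ => ?_
    have hf : Measurable (fun p : (Fin K → Fin N → Fin M → ℝ) × (Fin K → Fin M → ℝ) =>
        V * rhat i j - ∑ k, p.1 k i j * Q k j) := by
      refine measurable_const.sub (Finset.univ.measurable_sum fun k _ => ?_)
      exact (((measurable_pi_apply j).comp ((measurable_pi_apply i).comp
        ((measurable_pi_apply k).comp measurable_fst)))).mul_const _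
    have hg2 : Measurable (fun q : Fin N → ℝ => a i j * q i) :=
      measurable_const.mul (measurable_pi_apply i)
    have hii : IndepFun (φ i j) (fun ω => a i j * Λ i ω) μ := hindep.comp hf hg2
    have := IndepFun.integral_mul_eq_mul_integral hii (hφint i j).aestronglyMeasurable
      ((hΛint i).const_mul (a i j)).aestronglyMeasurable
    have heq : ∫ ω, φ i j ω * (a i j * Λ i ω) ∂μ
        = (∫ ω, φ i j ω ∂μ) * ∫ ω, a i j * Λ i ω ∂μ := by
      simpa [Pi.mul_apply] using this
    rw [heq, hφmean, integral_const_mul, hΛmean, haE]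
  -- a.e. comparison g ≥ h
  have hge : ∀ᵐ ω ∂μ, h ω ≤ g ω := by
    filter_upwards [hxmax] with ω hω
    refine hω.2.2 (fun i j => a i j * Λ i ω)
      (fun i j => mul_nonneg (hanonneg i j) (hΛnonneg i ω)) fun i => ?_
    rw [← Finset.sum_mul, hasum, one_mul]
  have hTle : ∑ i, ∑ j, (V * rhat i j - ∑ k, w k i j * Q k j) * xeps i j ≤ ∫ ω, g ω ∂μ := by
    rw [← hEh]
    exact integral_mono_ae hhint hgint hge
  -- the constant part S
  set S : Ω → ℝ := fun ω => ∑ j, ∑ k, Q k j * (ε - P k j ω) with hSdef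
  have hSterm : ∀ j k, Integrable (fun ω => Q k j * (ε - P k j ω)) μ := fun j k => by
    have := ((integrable_const ε).sub (hPint k j)).const_mul (Q k j)
    simpa using this
  have hSint : Integrable S μ :=
    integrable_finset_sum _ fun j _ => integrable_finset_sum _ fun k _ => hSterm j k
  have hSval : ∫ ω, S ω ∂μ = ∑ j, ∑ k, Q k j * (ε - ρ k j) := by
    simp only [hSdef]
    rw [integral_finset_sum _ fun j _ => integrable_finset_sum _ fun k _ => hSterm j k]
    refine Finset.sum_congr rfl fun j _ => ?_
    rw [integral_finset_sum _ fun k _ => hSterm j k]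
    refine Finset.sum_congr rfl fun k _ => ?_
    rw [integral_const_mul, integral_sub (integrable_const ε) (hPint k j), integral_const,
      hPmean]
    simp [measure_univ]
  -- assemble
  calc ∫ ω, (∑ j, ∑ k, Q k j * (∑ i, W k i j ω * x i j ω - P k j ω + ε) -
        V * ∑ i, ∑ j, rhat i j * x i j ω) ∂μ
      = ∫ ω, (S ω - g ω) ∂μ := by
        refine integral_congr_ae (Filter.Eventually.of_forall fun ω => ?_)
        simp only [hSdef, hgdef, hφdef]
        rw [mw_rearrange N M K Q rhat V ε (fun k i j => W k i j ω) (fun k j => P k j ω)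
          (fun i j => x i j ω)]
        ring
    _ = (∫ ω, S ω ∂μ) - ∫ ω, g ω ∂μ := integral_sub hSint hgint
    _ ≤ (∑ j, ∑ k, Q k j * (ε - ρ k j)) -
          ∑ i, ∑ j, (V * rhat i j - ∑ k, w k i j * Q k j) * xeps i j := by
        rw [hSval]
        exact sub_le_sub_left hTle _
    _ = ∑ j, ∑ k, Q k j * (∑ i, w k i j * xeps i j - ρ k j + ε) -
        V * ∑ i, ∑ j, rhat i j * xeps i j := by
        rw [mw_rearrange N M K Q rhat V ε w ρ xeps]
        ring
end

section
/- ε-tightening gap lemma: Let r_{i,j} ∈ [0,1], λ_i ≥ 0, w^{(k)}_{i,j} ∈ ℝ, ρ^{(k)}_j ∈ ℝ (i ∈ {1,…,N}, j ∈ {1,…,M}, k ∈ {1,…,K}), and let 0 ≤ ε ≤ δ. Suppose there exists x^{in} ≥ 0 with Σ_j x^{in}_{i,j} = λ_i for all i and Σ_i w^{(k)}_{i,j}x^{in}_{i,j} − ρ^{(k)}_j ≤ −δ for all j, k (Slater condition). Let x* be an optimal solution of the LP: maximize Σ_{i,j} r_{i,j}x_{i,j} over x ≥ 0 with Σ_j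 x_{i,j} = λ_i for all i and Σ_i w^{(k)}_{i,j}x_{i,j} ≤ ρ^{(k)}_j for all j, k; and let x*_ε be an optimal solution of the ε-tight LP, which is the same problem with constraints Σ_i w^{(k)}_{i,j}x_{i,j} + ε ≤ ρ^{(k)}_j. Then Σ_{i,j} r_{i,j}(x*_{i,j} − x*_{ε,i,j}) ≤ (ε/δ)·Σ_i λ_i; consequently, for any horizon T, T·Σ_{i,j} r_{i,j}x*_{i,j} − T·Σ_{i,j} r_{i,j}x*_{ε,i,j} ≤ (Tε/δ)·Σ_i λ_i. -/
/-- **ε-tightening gap lemma.** Let `r i j ∈ [0,1]`, `λ i ≥ 0`, constraint data `w, ρ`, and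
`0 ≤ ε ≤ δ`.  Assume the Slater condition: some `x^in ≥ 0` with row sums `λ` satisfies
`∑ i w k i j * x^in i j - ρ k j ≤ -δ` for all `j, k`.  Let `x*` be an optimal solution of the
offline LP and `x*_ε` an optimal solution of the `ε`-tight LP.  Then
`∑_{i,j} r i j (x* i j - x*_ε i j) ≤ (ε/δ)·∑ i λ i`, and consequently for any horizon `T`,
`T·∑ r x* - T·∑ r x*_ε ≤ (Tε/δ)·∑ λ`. -/
theorem epsilon_tightening_gap (N M K : ℕ)
    (r : Fin N → Fin M → ℝ) (hr : ∀ i j, r i j ∈ Set.Icc (0 : ℝ) 1)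
    (lam : Fin N → ℝ) (hlam : ∀ i, 0 ≤ lam i)
    (w : Fin K → Fin N → Fin M → ℝ) (ρ : Fin K → Fin M → ℝ)
    (ε δ : ℝ) (hε : 0 ≤ ε) (hεδ : ε ≤ δ)
    (xin : Fin N → Fin M → ℝ)
    (hxin_nonneg : ∀ i j, 0 ≤ xin i j)
    (hxin_rows : ∀ i, ∑ j, xin i j = lam i)
    (hxin_slater : ∀ j k, ∑ i, w k i j * xin i j - ρ k j ≤ -δ)
    (xstar : Fin N → Fin M → ℝ)
    (hxstar_nonneg : ∀ i j, 0 ≤ xstar i j)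
    (hxstar_rows : ∀ i, ∑ j, xstar i j = lam i)
    (hxstar_cons : ∀ j k, ∑ i, w k i j * xstar i j ≤ ρ k j)
    (hxstar_opt : ∀ x : Fin N → Fin M → ℝ, (∀ i j, 0 ≤ x i j) →
      (∀ i, ∑ j, x i j = lam i) → (∀ j k, ∑ i, w k i j * x i j ≤ ρ k j) →
      ∑ i, ∑ j, r i j * x i j ≤ ∑ i, ∑ j, r i j * xstar i j)
    (xeps : Fin N → Fin M → ℝ)
    (hxeps_nonneg : ∀ i j, 0 ≤ xeps i j)
    (hxeps_rows : ∀ i, ∑ j, xeps i j = lam i)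
    (hxeps_cons : ∀ j k, ∑ i, w k i j * xeps i j + ε ≤ ρ k j)
    (hxeps_opt : ∀ x : Fin N → Fin M → ℝ, (∀ i j, 0 ≤ x i j) →
      (∀ i, ∑ j, x i j = lam i) → (∀ j k, ∑ i, w k i j * x i j + ε ≤ ρ k j) →
      ∑ i, ∑ j, r i j * x i j ≤ ∑ i, ∑ j, r i j * xeps i j) :
    (∑ i, ∑ j, r i j * (xstar i j - xeps i j) ≤ ε / δ * ∑ i, lam i) ∧
      ∀ T : ℕ, (T : ℝ) * (∑ i, ∑ j, r i j * xstar i j) -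
          (T : ℝ) * (∑ i, ∑ j, r i j * xeps i j)
        ≤ (T : ℝ) * ε / δ * ∑ i, lam i := by
  have key : ∑ i, ∑ j, r i j * (xstar i j - xeps i j) ≤ ε / δ * ∑ i, lam i := by
    have hsum : ∑ i, ∑ j, r i j * (xstar i j - xeps i j)
        = (∑ i, ∑ j, r i j * xstar i j) - ∑ i, ∑ j, r i j * xeps i j := by
      simp [mul_sub, Finset.sum_sub_distrib]
    rw [hsum]
    rcases eq_or_lt_of_le (le_trans hε hεδ) with hδ0 | hδpos
    · -- δ = 0, hence ε = 0
      have hε0 : ε = 0 := le_antisymm (hεδ.trans hδ0.symm.le) hε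
      have := hxeps_opt xstar hxstar_nonneg hxstar_rows (by
        intro j k; rw [hε0]; simpa using hxstar_cons j k)
      have hd : ε / δ = 0 := by rw [hε0]; simp
      rw [hd]; simp only [zero_mul]; linarith
    · set t : ℝ := ε / δ with ht
      have ht0 : 0 ≤ t := div_nonneg hε hδpos.le
      have ht1 : t ≤ 1 := (div_le_one hδpos).2 hεδ
      set y : Fin N → Fin M → ℝ := fun i j => (1 - t) * xstar i j + t * xin i j with hy
      have hy_nonneg : ∀ i j, 0 ≤ y i j := fun i j =>
        add_nonneg (mul_nonneg (by linarith) (hxstar_nonneg i j))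
          (mul_nonneg ht0 (hxin_nonneg i j))
      have hy_rows : ∀ i, ∑ j, y i j = lam i := by
        intro i
        simp only [hy, Finset.sum_add_distrib, ← Finset.mul_sum, hxstar_rows, hxin_rows]
        ring
      have hy_cons : ∀ j k, ∑ i, w k i j * y i j + ε ≤ ρ k j := by
        intro j k
        have h1 := hxstar_cons j k
        have h2 := hxin_slater j k
        have hc : ∑ i, w k i j * y i j
            = (1 - t) * (∑ i, w k i j * xstar i j) + t * (∑ i, w k i j * xin i j) := by
          simp only [hy, Finset.mul_sum]
          rw [← Finset.sum_add_distrib]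
          exact Finset.sum_congr rfl (fun i _ => by ring)
        have htδ : t * δ = ε := by rw [ht]; field_simp [hδpos.ne']
        nlinarith [mul_le_mul_of_nonneg_left h1 (by linarith : (0:ℝ) ≤ 1 - t),
          mul_le_mul_of_nonneg_left (by linarith : ∑ i, w k i j * xin i j ≤ ρ k j - δ) ht0]
      have hopt := hxeps_opt y hy_nonneg hy_rows hy_cons
      have hobj : ∑ i, ∑ j, r i j * y i j
          = (1 - t) * (∑ i, ∑ j, r i j * xstar i j) + t * (∑ i, ∑ j, r i j * xin i j) := by
        simp only [hy, Finset.mul_sum]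
        rw [← Finset.sum_add_distrib]
        refine Finset.sum_congr rfl (fun i _ => ?_)
        rw [← Finset.sum_add_distrib]
        exact Finset.sum_congr rfl (fun j _ => by ring)
      have hin_nonneg : 0 ≤ ∑ i, ∑ j, r i j * xin i j :=
        Finset.sum_nonneg fun i _ => Finset.sum_nonneg fun j _ =>
          mul_nonneg (hr i j).1 (hxin_nonneg i j)
      have hstar_le : ∑ i, ∑ j, r i j * xstar i j ≤ ∑ i, lam i := by
        refine Finset.sum_le_sum fun i _ => ?_
        rw [← hxstar_rows i]
        exact Finset.sum_le_sum fun j _ => by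
          nlinarith [(hr i j).1, (hr i j).2, hxstar_nonneg i j]
      rw [hobj] at hopt
      nlinarith
  refine ⟨key, fun T => ?_⟩
  have hT : (0:ℝ) ≤ (T:ℝ) := Nat.cast_nonneg T
  have := mul_le_mul_of_nonneg_left key hT
  have hrw : (T:ℝ) * (ε / δ * ∑ i, lam i) = (T:ℝ) * ε / δ * ∑ i, lam i := by ring
  rw [hrw] at this
  calc (T:ℝ) * (∑ i, ∑ j, r i j * xstar i j) - (T:ℝ) * (∑ i, ∑ j, r i j * xeps i j)
      = (T:ℝ) * ∑ i, ∑ j, r i j * (xstar i j - xeps i j) := by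
        simp [mul_sub, Finset.sum_sub_distrib]
    _ ≤ (T:ℝ) * ε / δ * ∑ i, lam i := this
end

section
/- Exponential moment bound from negative drift (Hajek/Neely lemma): Let (F_t)_{t≥0} be a filtration on a probability space and let (L_t)_{t≥0} be an adapted real-valued process with L_0 = 0 and L_t ≥ 0 for all t. Suppose there exist constants θ > 0 and 0 < γ ≤ ν_max such that: (i) E[L_{t+1} − L_t | F_t] ≤ −γ almost surely on the event {L_t ≥ θ}, for every t; and (ii) |L_{t+1} − L_t| ≤ ν_max almost surely, for every t. Then, with r = γ/(ν_max² + ν_max·γ/3), for every t ≥ 0: E[e^{r·L_t}] ≤ 1 + (2·e^{r(ν_max + θ)})/(r·γ). -/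
open MeasureTheory Real

lemma exp_quartic_bound {x : ℝ} (hx : |x| ≤ 1) :
    Real.exp x ≤ 1 + x + x^2/2 + x^3/6 + 5*x^4/96 := by
  have h := Real.exp_bound hx (n := 4) (by norm_num)
  have h2 : |x|^4 = x^4 := by rw [← abs_pow, abs_of_nonneg (by positivity)]
  simp [Finset.sum_range_succ, Nat.factorial] at h
  rw [abs_le] at h
  nlinarith [h.2, h2]

lemma key_pointwise {γ νmax x : ℝ} (hγ : 0 < γ) (hγν : γ ≤ νmax) (hx : |x| ≤ νmax) :
    Real.exp (γ / (νmax ^ 2 + νmax * γ / 3) * x)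
      ≤ 1 + γ / (νmax ^ 2 + νmax * γ / 3) * x + γ / (νmax ^ 2 + νmax * γ / 3) * γ / 2 := by
  have hν : 0 < νmax := hγ.trans_le hγν
  set D : ℝ := νmax ^ 2 + νmax * γ / 3 with hD
  have hD0 : 0 < D := by positivity
  set r : ℝ := γ / D with hrdef
  have hr0 : 0 < r := div_pos hγ hD0
  set b : ℝ := r * νmax with hb
  set y : ℝ := r * x with hy
  have hb0 : 0 < b := mul_pos hr0 hν
  have hb1 : b ≤ 1 := by
    rw [hb, hrdef, div_mul_eq_mul_div, div_le_one hD0, hD]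
    nlinarith
  have hyb : |y| ≤ b := by
    rw [hy, hb, abs_mul, abs_of_pos hr0]
    exact mul_le_mul_of_nonneg_left hx hr0.le
  have hy1 : |y| ≤ 1 := hyb.trans hb1
  have hexp := exp_quartic_bound hy1
  have hid : r * γ * (3 - b) = 3 * b ^ 2 := by
    rw [hb, hrdef]; field_simp; ring
  obtain ⟨hyl, hyu⟩ := abs_le.1 hyb
  have h30 : (0:ℝ) < 3 - b := by linarith
  have hy2 : y ^ 2 ≤ b ^ 2 := sq_le_sq' hyl hyu
  have hpoly : (3 - b) * (y^2 + y^3/3 + 5*y^4/48) ≤ 3 * b^2 := by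
    rcases le_or_gt 0 y with h0 | h0
    · nlinarith [mul_nonneg (sub_nonneg.2 hyu) (sq_nonneg y),
        mul_nonneg (sub_nonneg.2 hyu) (pow_nonneg h0 3),
        mul_nonneg (sub_nonneg.2 hyu) (pow_nonneg h0 4),
        pow_nonneg h0 4, pow_nonneg h0 5]
    · have hy3 : y^3 ≤ 0 := by nlinarith [sq_nonneg y]
      have hy31 : y^3 * (y + 1) ≤ 0 := by
        apply mul_nonpos_of_nonpos_of_nonneg hy3
        linarith [(abs_le.1 hy1).1]
      nlinarith [mul_nonneg hb0.le (sq_nonneg y), mul_nonpos_of_nonneg_of_nonpos hb0.le hy3]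
  have h4 : (3 - b) * (y^2 + y^3/3 + 5*y^4/48) ≤ (3 - b) * (r * γ) := by
    nlinarith [hpoly, hid]
  have h5 := le_of_mul_le_mul_left h4 h30
  linarith [hexp, h5]

/-- **Exponential moment bound from negative drift (Hajek/Neely).** Let `(F t)` be a filtration
and `(L t)` an adapted nonnegative process with `L 0 = 0`, such that (i) on `{L t ≥ θ}` the
conditional expected drift is at most `-γ`, and (ii) `|L (t+1) - L t| ≤ ν_max` a.s.
Then with `r = γ/(ν_max² + ν_max γ/3)`, for every `t`,
`E[e^{r L t}] ≤ 1 + 2 e^{r(ν_max + θ)}/(r γ)`. -/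
theorem hajek_neely_exponential_moment
    {Ω : Type*} {m0 : MeasurableSpace Ω} {μ : Measure Ω} [IsProbabilityMeasure μ]
    (F : Filtration ℕ m0) (L : ℕ → Ω → ℝ)
    (hadapted : Adapted F L)
    (hL0 : ∀ ω, L 0 ω = 0) (hLnonneg : ∀ t ω, 0 ≤ L t ω)
    (θ γ νmax : ℝ) (hθ : 0 < θ) (hγ : 0 < γ) (hγν : γ ≤ νmax)
    (hdrift : ∀ t, ∀ᵐ ω ∂μ, θ ≤ L t ω →
      (μ[(fun ω' => L (t + 1) ω' - L t ω') | F t]) ω ≤ -γ)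
    (hbdd : ∀ t, ∀ᵐ ω ∂μ, |L (t + 1) ω - L t ω| ≤ νmax)
    (t : ℕ) :
    ∫ ω, Real.exp (γ / (νmax ^ 2 + νmax * γ / 3) * L t ω) ∂μ
      ≤ 1 + 2 * Real.exp (γ / (νmax ^ 2 + νmax * γ / 3) * (νmax + θ)) /
          (γ / (νmax ^ 2 + νmax * γ / 3) * γ) := by
  have hν : 0 < νmax := hγ.trans_le hγν
  have hD0 : (0:ℝ) < νmax ^ 2 + νmax * γ / 3 := by positivity
  set r : ℝ := γ / (νmax ^ 2 + νmax * γ / 3) with hrdef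
  have hr0 : 0 < r := div_pos hγ hD0
  have hrγ1 : r * γ ≤ 1 := by
    rw [hrdef, div_mul_eq_mul_div, div_le_one hD0]
    nlinarith
  clear_value r
  set K : ℝ := Real.exp (r * (νmax + θ)) with hK
  have hK0 : 0 < K := by rw [hK]; exact Real.exp_pos _
  clear_value K
  -- a.s. bound on L
  have hLbd : ∀ s : ℕ, ∀ᵐ ω ∂μ, L s ω ≤ s * νmax := by
    intro s
    induction s with
    | zero => filter_upwards with ω; simp [hL0]
    | succ n ih =>
      filter_upwards [ih, hbdd n] with ω h1 h2
      have h3 := (abs_le.1 h2).2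
      push_cast
      nlinarith
  have hmeas : ∀ s, Measurable (L s) := fun s => (hadapted s).mono (F.le s) le_rfl
  -- integrability of exp (r * L s)
  have hEint : ∀ s : ℕ, Integrable (fun ω => Real.exp (r * L s ω)) μ := by
    intro s
    refine Integrable.mono' (integrable_const (Real.exp (r * (s * νmax))))
      (Real.measurable_exp.comp ((hmeas s).const_mul r)).aestronglyMeasurable ?_
    filter_upwards [hLbd s] with ω h
    rw [Real.norm_eq_abs, abs_of_pos (Real.exp_pos _)]
    exact Real.exp_le_exp.2 (mul_le_mul_of_nonneg_left h hr0.le)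
  -- key recursion
  have hrec : ∀ s : ℕ, ∫ ω, Real.exp (r * L (s+1) ω) ∂μ
      ≤ (1 - r*γ/2) * ∫ ω, Real.exp (r * L s ω) ∂μ + K := by
    intro s
    set A : Set Ω := {ω | θ ≤ L s ω} with hA
    have hAm : MeasurableSet[F s] A := hadapted s measurableSet_Ici
    have hAm0 : MeasurableSet A := F.le s _ hAm
    set E : Ω → ℝ := fun ω => Real.exp (r * L s ω) with hE
    set C : ℝ := Real.exp (r * (s * νmax)) with hC
    have hEm : StronglyMeasurable[F s] E :=
      (Real.continuous_exp.comp (continuous_const.mul continuous_id)).comp_stronglyMeasurable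
        (hadapted s).stronglyMeasurable
    have hEbd : ∀ᵐ ω ∂μ, ‖E ω‖ ≤ C := by
      filter_upwards [hLbd s] with ω h
      rw [Real.norm_eq_abs, abs_of_pos (Real.exp_pos _)]
      exact Real.exp_le_exp.2 (mul_le_mul_of_nonneg_left h hr0.le)
    have hEint' : Integrable E μ := hEint s
    set Δ : Ω → ℝ := fun ω => L (s+1) ω - L s ω with hΔ
    have hΔint : Integrable Δ μ := by
      refine Integrable.mono' (integrable_const νmax)
        ((hmeas (s+1)).sub (hmeas s)).aestronglyMeasurable ?_
      filter_upwards [hbdd s] with ω h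
      rwa [Real.norm_eq_abs]
    set g : Ω → ℝ := A.indicator E with hg
    have hgm : StronglyMeasurable[F s] g := hEm.indicator hAm
    have hg_nonneg : ∀ ω, 0 ≤ g ω := fun ω =>
      Set.indicator_nonneg (fun ω _ => (Real.exp_pos _).le) ω
    have hg_le : ∀ ω, g ω ≤ E ω := fun ω =>
      Set.indicator_le_self' (fun ω _ => (Real.exp_pos _).le) ω
    have hgbd : ∀ᵐ ω ∂μ, ‖g ω‖ ≤ C := by
      filter_upwards [hEbd] with ω h
      rw [Real.norm_eq_abs, abs_of_nonneg (hg_nonneg ω)]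
      exact (hg_le ω).trans ((le_abs_self _).trans (by rwa [Real.norm_eq_abs] at h))
    have hgint : Integrable g μ := hEint'.indicator hAm0
    have hgam : AEStronglyMeasurable g μ := (hgm.mono (F.le s)).aestronglyMeasurable
    have hpull : μ[g * Δ | F s] =ᵐ[μ] g * μ[Δ | F s] :=
      condExp_stronglyMeasurable_mul_of_bound (F.le s) hgm hΔint C hgbd
    have hgΔint : Integrable (g * Δ) μ := hΔint.bdd_mul hgam hgbd
    have hcondint : Integrable (g * μ[Δ | F s]) μ := integrable_condExp.bdd_mul hgam hgbd
    have hstep1 : ∫ ω, g ω * Δ ω ∂μ = ∫ ω, g ω * (μ[Δ | F s]) ω ∂μ := by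
      rw [show (∫ ω, g ω * Δ ω ∂μ) = ∫ ω, (g * Δ) ω ∂μ from rfl,
        ← integral_condExp (F.le s)]
      exact integral_congr_ae hpull
    have hstep2 : ∫ ω, g ω * (μ[Δ | F s]) ω ∂μ ≤ ∫ ω, -γ * g ω ∂μ := by
      refine integral_mono_ae hcondint (hgint.const_mul _) ?_
      filter_upwards [hdrift s] with ω hdω
      by_cases hωA : θ ≤ L s ω
      · have hgE : g ω = E ω := Set.indicator_of_mem (show ω ∈ A from hωA) E
        have h2 : (μ[Δ | F s]) ω ≤ -γ := hdω hωA
        calc g ω * (μ[Δ | F s]) ω ≤ g ω * (-γ) :=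
              mul_le_mul_of_nonneg_left h2 (hg_nonneg ω)
          _ = -γ * g ω := mul_comm _ _
      · have hg0 : g ω = 0 := Set.indicator_of_notMem (show ω ∉ A from hωA) E
        simp [hg0]
    -- pointwise a.e. bound
    have hpt : ∀ᵐ ω ∂μ, Real.exp (r * L (s+1) ω)
        ≤ (1 + r*γ/2) * g ω + r * (g ω * Δ ω) + Aᶜ.indicator (fun _ => K) ω := by
      filter_upwards [hbdd s] with ω hb
      by_cases hωA : θ ≤ L s ω
      · have hmemA : ω ∈ A := hωA
        have hgE : g ω = E ω := Set.indicator_of_mem hmemA E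
        have hcompl : Aᶜ.indicator (fun _ => K) ω = 0 :=
          Set.indicator_of_notMem (Set.notMem_compl_iff.2 hmemA) _
        have hkey : Real.exp (r * Δ ω) ≤ 1 + r * Δ ω + r * γ / 2 := by
          rw [hrdef]; exact key_pointwise hγ hγν hb
        have hsplit : Real.exp (r * L (s+1) ω) = E ω * Real.exp (r * Δ ω) := by
          rw [hE, ← Real.exp_add]
          congr 1
          simp only [hΔ]
          ring
        have hE0 : 0 ≤ E ω := (Real.exp_pos _).le
        rw [hsplit, hcompl, hgE]
        nlinarith [mul_le_mul_of_nonneg_left hkey hE0]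
      · have hnmemA : ω ∉ A := hωA
        have hg0 : g ω = 0 := Set.indicator_of_notMem hnmemA E
        have hcompl : Aᶜ.indicator (fun _ => K) ω = K :=
          Set.indicator_of_mem (Set.mem_compl hnmemA) _
        have hL1 : L (s+1) ω ≤ νmax + θ := by
          have h3 := (abs_le.1 hb).2
          have h4 : L s ω < θ := not_le.1 hωA
          linarith
        have : Real.exp (r * L (s+1) ω) ≤ K := by
          rw [hK]
          exact Real.exp_le_exp.2 (mul_le_mul_of_nonneg_left hL1 hr0.le)
        rw [hg0, hcompl]
        simpa using this
    have hLHSint : Integrable (fun ω => Real.exp (r * L (s+1) ω)) μ := hEint (s+1)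
    have hindint : Integrable (Aᶜ.indicator (fun _ => K)) μ :=
      (integrable_const K).indicator hAm0.compl
    have hRHSint : Integrable (fun ω => (1 + r*γ/2) * g ω + r * (g ω * Δ ω)
        + Aᶜ.indicator (fun _ => K) ω) μ := by
      exact ((hgint.const_mul _).add (hgΔint.const_mul r)).add hindint
    have hint := integral_mono_ae hLHSint hRHSint hpt
    have hsplitint : ∫ ω, ((1 + r*γ/2) * g ω + r * (g ω * Δ ω)
          + Aᶜ.indicator (fun _ => K) ω) ∂μ
        = (1 + r*γ/2) * ∫ ω, g ω ∂μ + r * ∫ ω, g ω * Δ ω ∂μ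
          + ∫ ω, Aᶜ.indicator (fun _ => K) ω ∂μ := by
      have e1 : ∫ ω, ((1 + r*γ/2) * g ω + r * (g ω * Δ ω) + Aᶜ.indicator (fun _ => K) ω) ∂μ
          = ∫ ω, ((1 + r*γ/2) * g ω + r * (g ω * Δ ω)) ∂μ
            + ∫ ω, Aᶜ.indicator (fun _ => K) ω ∂μ :=
        integral_add ((hgint.const_mul _).add (hgΔint.const_mul r)) hindint
      have e2 : ∫ ω, ((1 + r*γ/2) * g ω + r * (g ω * Δ ω)) ∂μ
          = ∫ ω, (1 + r*γ/2) * g ω ∂μ + ∫ ω, r * (g ω * Δ ω) ∂μ :=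
        integral_add (hgint.const_mul _) (hgΔint.const_mul r)
      have e3 : ∫ ω, (1 + r*γ/2) * g ω ∂μ = (1 + r*γ/2) * ∫ ω, g ω ∂μ :=
        integral_const_mul _ _
      have e4 : ∫ ω, r * (g ω * Δ ω) ∂μ = r * ∫ ω, g ω * Δ ω ∂μ :=
        integral_const_mul _ _
      rw [e1, e2, e3, e4]
    have hindle : ∫ ω, Aᶜ.indicator (fun _ => K) ω ∂μ ≤ K := by
      rw [integral_indicator hAm0.compl, setIntegral_const, smul_eq_mul]
      have h1 : (μ Aᶜ).toReal ≤ 1 := by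
        have := prob_le_one (μ := μ) (s := Aᶜ)
        simpa using ENNReal.toReal_le_of_le_ofReal zero_le_one (by simpa using this)
      nlinarith [h1, show μ.real Aᶜ = (μ Aᶜ).toReal from rfl]
    have hgEle : ∫ ω, g ω ∂μ ≤ ∫ ω, E ω ∂μ :=
      integral_mono hgint hEint' hg_le
    have hgnn : 0 ≤ ∫ ω, g ω ∂μ := integral_nonneg hg_nonneg
    have hneg : ∫ ω, -γ * g ω ∂μ = -γ * ∫ ω, g ω ∂μ := integral_const_mul _ _
    -- combine
    have hgd : r * ∫ ω, g ω * Δ ω ∂μ ≤ -(r*γ) * ∫ ω, g ω ∂μ := by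
      rw [hstep1]
      have := hstep2.trans_eq hneg
      nlinarith
    have hfin : ∫ ω, Real.exp (r * L (s+1) ω) ∂μ ≤ (1 - r*γ/2) * ∫ ω, g ω ∂μ + K := by
      rw [hsplitint] at hint
      nlinarith
    refine hfin.trans ?_
    have h12 : (0:ℝ) ≤ 1 - r*γ/2 := by linarith
    nlinarith [mul_le_mul_of_nonneg_left hgEle h12]
  -- final induction
  induction t with
  | zero =>
    have : (fun ω => Real.exp (r * L 0 ω)) = fun _ => (1:ℝ) := by
      funext ω; simp [hL0]
    rw [this, integral_const]
    simp only [Measure.real, measure_univ, ENNReal.toReal_one, smul_eq_mul, one_mul]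
    have : 0 < 2 * K / (r * γ) := div_pos (by linarith) (mul_pos hr0 hγ)
    linarith
  | succ n ih =>
    have h1 := hrec n
    have hMn0 : 0 ≤ ∫ ω, Real.exp (r * L n ω) ∂μ :=
      integral_nonneg fun ω => (Real.exp_pos _).le
    have h12 : (0:ℝ) ≤ 1 - r*γ/2 := by linarith
    have hrγ0 : r * γ ≠ 0 := (mul_pos hr0 hγ).ne'
    have hfrac : (1 - r*γ/2) * (2*K/(r*γ)) = 2*K/(r*γ) - K := by
      field_simp
    have h2 := mul_le_mul_of_nonneg_left ih h12
    have hexp2 : (1 - r*γ/2) * (1 + 2*K/(r*γ)) = (1 - r*γ/2) + (2*K/(r*γ) - K) := by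
      rw [mul_add, mul_one, hfrac]
    have hrγpos : 0 < r * γ := mul_pos hr0 hγ
    linarith [h1, h2, hexp2, hrγpos]
end

section
/- Maximal Hoeffding inequality: Let X_1, X_2, …, X_m be i.i.d. random variables with X_i ∈ [0,1] and E[X_i] = μ. Then for every y > 0, P( ∃ s with 1 ≤ s ≤ m such that Σ_{i=1}^{s}(μ − X_i) > y ) ≤ e^{−2y²/m}. -/
open MeasureTheory ProbabilityTheory

section MaximalHoeffdingAux
open Real
open scoped ENNReal NNReal

lemma hoeff_log {p : ℝ} (hp0 : 0 ≤ p) (hp1 : p ≤ 1) (t : ℝ) :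
    Real.log (1 - p + p * Real.exp t) ≤ p * t + t ^ 2 / 8 := by
  set D : ℝ → ℝ := fun s => 1 - p + p * exp s with hD
  have hDpos : ∀ s, 0 < D s := by
    intro s
    rcases lt_or_eq_of_le hp1 with h | h
    · have h2 : 0 ≤ p * exp s := mul_nonneg hp0 (exp_pos s).le
      simp only [hD]; nlinarith
    · simp only [hD, ← h]; nlinarith [exp_pos s]
  set g : ℝ → ℝ := fun s => p * s + s ^ 2 / 8 - log (D s) with hg
  set g' : ℝ → ℝ := fun s => p + s / 4 - p * exp s / D s with hg'
  have hDdv : ∀ s, HasDerivAt D (p * exp s) s := fun s => by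
    exact ((Real.hasDerivAt_exp s).const_mul p).const_add (1 - p)
  have hgdv : ∀ s, HasDerivAt g (g' s) s := by
    intro s
    have hlog : HasDerivAt (fun s => log (D s)) (p * exp s / D s) s :=
      (hDdv s).log (hDpos s).ne'
    have h1 : HasDerivAt (fun s : ℝ => p * s + s ^ 2 / 8) (p + s / 4) s := by
      have := ((hasDerivAt_id s).const_mul p).add ((hasDerivAt_pow 2 s).div_const 8)
      refine this.congr_deriv ?_
      norm_num
      ring
    exact h1.sub hlog
  have hg'dv : ∀ s, HasDerivAt g'
      (1 / 4 - (p * exp s * D s - p * exp s * (p * exp s)) / (D s) ^ 2) s := by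
    intro s
    have hdiv : HasDerivAt (fun s => p * exp s / D s)
        ((p * exp s * D s - p * exp s * (p * exp s)) / (D s) ^ 2) s :=
      ((Real.hasDerivAt_exp s).const_mul p).div (hDdv s) (hDpos s).ne'
    have h1 : HasDerivAt (fun s : ℝ => p + s / 4) (1 / 4) s := by
      simpa using ((hasDerivAt_id s).div_const 4).const_add p
    exact h1.sub hdiv
  have hg'mono : Monotone g' := by
    refine monotone_of_deriv_nonneg (fun s => (hg'dv s).differentiableAt) (fun s => ?_)
    rw [(hg'dv s).deriv]
    have hb : 0 ≤ p * exp s := mul_nonneg hp0 (exp_pos s).le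
    have ha : 0 ≤ 1 - p := by linarith
    have hDs : D s = (1 - p) + p * exp s := rfl
    have hsq : 0 < (D s) ^ 2 := pow_pos (hDpos s) 2
    rw [sub_nonneg, div_le_iff₀ hsq]
    nlinarith [sq_nonneg ((1 - p) - p * exp s)]
  have hg'0 : g' 0 = 0 := by
    simp [hg', hD]
  have hg0 : g 0 = 0 := by simp [hg, hD]
  have hgdiff : Differentiable ℝ g := fun s => (hgdv s).differentiableAt
  have hgc : Continuous g := hgdiff.continuous
  have key : 0 ≤ g t := by
    rcases le_total 0 t with ht | ht
    · have hmono : MonotoneOn g (Set.Ici 0) := by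
        refine monotoneOn_of_deriv_nonneg (convex_Ici 0)
          hgc.continuousOn (fun s hs => (hgdv s).differentiableAt.differentiableWithinAt)
          (fun s hs => ?_)
        rw [(hgdv s).deriv]
        have : (0:ℝ) ≤ s := le_of_lt (by simpa using hs)
        calc (0:ℝ) = g' 0 := hg'0.symm
          _ ≤ g' s := hg'mono this
      have := hmono (Set.self_mem_Ici) (Set.mem_Ici.2 ht) ht
      linarith
    · have hmono : AntitoneOn g (Set.Iic 0) := by
        refine antitoneOn_of_deriv_nonpos (convex_Iic 0)
          hgc.continuousOn (fun s hs => (hgdv s).differentiableAt.differentiableWithinAt)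
          (fun s hs => ?_)
        rw [(hgdv s).deriv]
        have hs0 : s ≤ (0:ℝ) := le_of_lt (by simpa using hs)
        calc g' s ≤ g' 0 := hg'mono hs0
          _ = 0 := hg'0
      have := hmono (Set.mem_Iic.2 ht) (Set.self_mem_Iic) ht
      linarith
  simp only [hg] at key
  linarith

lemma hoeff_pos {p : ℝ} (hp0 : 0 ≤ p) (hp1 : p ≤ 1) (s : ℝ) :
    0 < 1 - p + p * Real.exp s := by
  rcases lt_or_eq_of_le hp1 with h | h
  · nlinarith [exp_pos s, mul_nonneg hp0 (exp_pos s).le]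
  · rw [← h]; nlinarith [exp_pos s]

open MeasureTheory ProbabilityTheory in
lemma hoeff_mgf {Ω : Type*} [MeasurableSpace Ω] (μ : MeasureTheory.Measure Ω)
    [IsProbabilityMeasure μ]
    (X : Ω → ℝ) (hmeas : Measurable X) (hbound : ∀ ω, X ω ∈ Set.Icc (0:ℝ) 1)
    {p : ℝ} (hmean : ∫ ω, X ω ∂μ = p) (t : ℝ) :
    ∫ ω, Real.exp (t * (p - X ω)) ∂μ ≤ Real.exp (t ^ 2 / 8) := by
  have hint : Integrable X μ := by
    refine (integrable_const (1:ℝ)).mono' hmeas.aestronglyMeasurable ?_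
    filter_upwards with ω
    have := hbound ω
    rw [Real.norm_eq_abs, abs_le]
    constructor <;> linarith [this.1, this.2]
  have hp0 : 0 ≤ p := by
    rw [← hmean]; exact integral_nonneg fun ω => (hbound ω).1
  have hp1 : p ≤ 1 := by
    rw [← hmean]
    calc ∫ ω, X ω ∂μ ≤ ∫ _, (1:ℝ) ∂μ := integral_mono hint (integrable_const 1)
          (fun ω => (hbound ω).2)
      _ = 1 := by simp
  have hintexp : Integrable (fun ω => Real.exp (t * (p - X ω))) μ := by
    refine (integrable_const (Real.exp (|t| * (|p| + 1)))).mono'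
      (((hmeas.const_sub p).const_mul t).exp).aestronglyMeasurable ?_
    filter_upwards with ω
    rw [Real.norm_eq_abs, abs_of_pos (exp_pos _)]
    apply Real.exp_le_exp.2
    have h1 := (hbound ω).1; have h2 := (hbound ω).2
    have : |t * (p - X ω)| ≤ |t| * (|p| + 1) := by
      rw [abs_mul]
      refine mul_le_mul_of_nonneg_left ?_ (abs_nonneg t)
      rw [abs_le]; constructor <;> cases abs_cases p <;> linarith
    linarith [le_abs_self (t * (p - X ω))]
  have hpt : ∀ ω, Real.exp (t * (p - X ω)) ≤
      (1 - X ω) * Real.exp (t * p) + X ω * Real.exp (t * (p - 1)) := by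
    intro ω
    have h1 := (hbound ω).1; have h2 := (hbound ω).2
    have := convexOn_exp.2 (Set.mem_univ (t * p)) (Set.mem_univ (t * (p - 1)))
      (by linarith : (0:ℝ) ≤ 1 - X ω) h1 (by ring)
    simpa [smul_eq_mul, show (1 - X ω) * (t * p) + X ω * (t * (p - 1)) = t * (p - X ω) by ring]
      using this
  have hintrhs : Integrable
      (fun ω => (1 - X ω) * Real.exp (t * p) + X ω * Real.exp (t * (p - 1))) μ := by
    exact (((integrable_const (1:ℝ)).sub hint).mul_const _).add (hint.mul_const _)
  calc ∫ ω, Real.exp (t * (p - X ω)) ∂μ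
      ≤ ∫ ω, ((1 - X ω) * Real.exp (t * p) + X ω * Real.exp (t * (p - 1))) ∂μ :=
        integral_mono hintexp hintrhs hpt
    _ = ∫ ω, (Real.exp (t * p) + X ω * (Real.exp (t * (p - 1)) - Real.exp (t * p))) ∂μ := by
        congr 1; ext ω; ring
    _ = (1 - p) * Real.exp (t * p) + p * Real.exp (t * (p - 1)) := by
        rw [integral_add (integrable_const _) (hint.mul_const _), integral_mul_const, hmean]
        simp; ring
    _ = Real.exp (t * p) * (1 - p + p * Real.exp (-t)) := by
        rw [show t * (p - 1) = t * p + (-t) by ring, Real.exp_add]; ring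
    _ ≤ Real.exp (t * p) * Real.exp (p * (-t) + (-t) ^ 2 / 8) := by
        refine mul_le_mul_of_nonneg_left ?_ (exp_pos _).le
        have := hoeff_log hp0 hp1 (-t)
        calc 1 - p + p * Real.exp (-t)
            = Real.exp (Real.log (1 - p + p * Real.exp (-t))) :=
              (Real.exp_log (hoeff_pos hp0 hp1 (-t))).symm
          _ ≤ Real.exp (p * (-t) + (-t) ^ 2 / 8) := Real.exp_le_exp.2 this
    _ = Real.exp (t ^ 2 / 8) := by
        rw [← Real.exp_add]; ring_nf

end MaximalHoeffdingAux

open scoped ENNReal NNReal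

/-- **Maximal Hoeffding inequality.** Let `X 0, …, X (m-1)` be i.i.d. random variables with
values in `[0,1]` and mean `μ₀`.  Then for every `y > 0`,
`P(∃ s, 1 ≤ s ≤ m, ∑_{i<s} (μ₀ - X i) > y) ≤ e^{-2y²/m}`. -/
theorem maximal_hoeffding
    {Ω : Type*} [MeasurableSpace Ω] (μ : Measure Ω) [IsProbabilityMeasure μ]
    (m : ℕ) (hm : 1 ≤ m) (X : ℕ → Ω → ℝ) (μ₀ : ℝ)
    (hmeas : ∀ i, Measurable (X i))
    (hindep : iIndepFun X μ)
    (hident : ∀ i j, IdentDistrib (X i) (X j) μ μ)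
    (hbound : ∀ i ω, X i ω ∈ Set.Icc (0 : ℝ) 1)
    (hmean : ∀ i, ∫ ω, X i ω ∂μ = μ₀)
    (y : ℝ) (hy : 0 < y) :
    (μ {ω | ∃ s, 1 ≤ s ∧ s ≤ m ∧ y < ∑ i ∈ Finset.range s, (μ₀ - X i ω)}).toReal
      ≤ Real.exp (-2 * y ^ 2 / m) := by
  have hm' : (0:ℝ) < m := by exact_mod_cast hm
  set t : ℝ := 4 * y / m with ht_def
  have ht : 0 < t := by positivity
  -- basic facts about μ₀
  have hXint : ∀ i, Integrable (X i) μ := by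
    intro i
    refine (integrable_const (1:ℝ)).mono' (hmeas i).aestronglyMeasurable ?_
    filter_upwards with ω
    have h := hbound i ω
    rw [Real.norm_eq_abs, abs_le]; exact ⟨by linarith [h.1], h.2⟩
  have hμ0 : 0 ≤ μ₀ := by
    rw [← hmean 0]; exact integral_nonneg fun ω => (hbound 0 ω).1
  have hμ1 : μ₀ ≤ 1 := by
    rw [← hmean 0]
    calc ∫ ω, X 0 ω ∂μ ≤ ∫ _, (1:ℝ) ∂μ :=
          integral_mono (hXint 0) (integrable_const 1) (fun ω => (hbound 0 ω).2)
      _ = 1 := by simp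
  -- the exponential process
  set f : ℕ → Ω → ℝ := fun s ω => Real.exp (t * ∑ i ∈ Finset.range s, (μ₀ - X i ω)) with hf
  -- the filtration
  set 𝒢 : Filtration ℕ ‹MeasurableSpace Ω› :=
    { seq := fun s => ⨆ i ∈ Set.Iio s, MeasurableSpace.comap (X i) inferInstance
      mono' := fun a b hab => biSup_mono fun i hi => lt_of_lt_of_le hi hab
      le' := fun s => iSup₂_le fun i _ => (hmeas i).comap_le } with h𝒢
  have h𝒢app : ∀ s, 𝒢 s = ⨆ i ∈ Set.Iio s, MeasurableSpace.comap (X i) inferInstance :=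
    fun s => rfl
  -- sum is measurable wrt the filtration
  have hXim : ∀ i, Measurable[MeasurableSpace.comap (X i) inferInstance] (X i) :=
    fun i => Measurable.of_comap_le le_rfl
  have hSmeas : ∀ s, Measurable[𝒢 s] (fun ω => ∑ i ∈ Finset.range s, (μ₀ - X i ω)) := by
    intro s
    apply Finset.measurable_sum
    intro i hi
    have hle : MeasurableSpace.comap (X i) inferInstance ≤ 𝒢 s := by
      rw [h𝒢app]
      exact le_biSup (f := fun i => MeasurableSpace.comap (X i) inferInstance)
        (Set.mem_Iio.2 (Finset.mem_range.1 hi))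
    exact measurable_const.sub ((hXim i).mono hle le_rfl)
  have hfmeas𝒢 : ∀ s, Measurable[𝒢 s] (f s) := fun s => ((hSmeas s).const_mul t).exp
  have hfmeas : ∀ s, Measurable (f s) := fun s => (hfmeas𝒢 s).mono (𝒢.le s) le_rfl
  -- bounds and integrability
  have hfpos : ∀ s ω, 0 < f s ω := fun s ω => Real.exp_pos _
  have hfbdd : ∀ s ω, f s ω ≤ Real.exp (t * s) := by
    intro s ω
    apply Real.exp_le_exp.2
    refine mul_le_mul_of_nonneg_left ?_ ht.le
    calc ∑ i ∈ Finset.range s, (μ₀ - X i ω) ≤ ∑ _i ∈ Finset.range s, (1:ℝ) :=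
          Finset.sum_le_sum fun i _ => by linarith [(hbound i ω).1, hμ1]
      _ = s := by simp
  have hfint : ∀ s, Integrable (f s) μ := by
    intro s
    refine (integrable_const (Real.exp (t * s))).mono' (hfmeas s).aestronglyMeasurable ?_
    filter_upwards with ω
    rw [Real.norm_eq_abs, abs_of_pos (hfpos s ω)]
    exact hfbdd s ω
  -- independence of X s from the filtration
  have hindep' : ∀ s,
      Indep (MeasurableSpace.comap (X s) inferInstance) (𝒢 s) μ := by
    intro s
    have h := indep_iSup_of_disjoint (m := fun i => MeasurableSpace.comap (X i) inferInstance)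
      (fun i => (hmeas i).comap_le) hindep
      (S := {s}) (T := Set.Iio s) (by simp [Set.disjoint_left])
    rw [h𝒢app]
    simpa using h
  -- per-step factor
  have hEmeas : ∀ s, Measurable[MeasurableSpace.comap (X s) inferInstance]
      (fun ω => Real.exp (t * (μ₀ - X s ω))) :=
    fun s => ((measurable_const.sub (hXim s)).const_mul t).exp
  have hEint : ∀ s, Integrable (fun ω => Real.exp (t * (μ₀ - X s ω))) μ := by
    intro s
    refine (integrable_const (Real.exp t)).mono'
      (((measurable_const.sub (hmeas s)).const_mul t).exp).aestronglyMeasurable ?_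
    filter_upwards with ω
    rw [Real.norm_eq_abs, abs_of_pos (Real.exp_pos _)]
    apply Real.exp_le_exp.2
    have h := hbound s ω
    nlinarith [h.1, h.2, ht]
  have hEmean1 : ∀ s, 1 ≤ ∫ ω, Real.exp (t * (μ₀ - X s ω)) ∂μ := by
    intro s
    have h2 : Integrable (fun ω => t * (μ₀ - X s ω)) μ := by
      have := ((integrable_const μ₀).sub (hXint s)).const_mul t
      simpa using this
    have hlin : Integrable (fun ω => 1 + t * (μ₀ - X s ω)) μ := (integrable_const 1).add h2
    have h0 : ∫ ω, (μ₀ - X s ω) ∂μ = 0 := by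
      rw [integral_sub (integrable_const μ₀) (hXint s), hmean s]
      simp
    calc (1:ℝ) = ∫ ω, (1 + t * (μ₀ - X s ω)) ∂μ := by
          rw [integral_add (integrable_const 1) h2, integral_const_mul, h0]
          simp
      _ ≤ ∫ ω, Real.exp (t * (μ₀ - X s ω)) ∂μ := by
          refine integral_mono hlin (hEint s) fun ω => ?_
          linarith [Real.add_one_le_exp (t * (μ₀ - X s ω))]
  -- submartingale property
  have hsucc : ∀ s, f (s + 1) = f s * (fun ω => Real.exp (t * (μ₀ - X s ω))) := by
    intro s
    funext ω
    simp only [hf, Pi.mul_apply, Finset.sum_range_succ, mul_add, Real.exp_add]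
  have hsub : Submartingale f 𝒢 μ := by
    refine submartingale_nat (fun s => (hfmeas𝒢 s).stronglyMeasurable) hfint fun s => ?_
    have hmul : μ[f s * (fun ω => Real.exp (t * (μ₀ - X s ω))) | 𝒢 s]
        =ᵐ[μ] f s * μ[(fun ω => Real.exp (t * (μ₀ - X s ω))) | 𝒢 s] :=
      condExp_mul_of_stronglyMeasurable_left ((hfmeas𝒢 s).stronglyMeasurable)
        (by rw [← hsucc s]; exact hfint (s + 1)) (hEint s)
    have hcind : μ[(fun ω => Real.exp (t * (μ₀ - X s ω))) | 𝒢 s]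
        =ᵐ[μ] fun _ => ∫ ω, Real.exp (t * (μ₀ - X s ω)) ∂μ :=
      condExp_indep_eq ((hmeas s).comap_le) (𝒢.le s)
        ((hEmeas s).stronglyMeasurable) (hindep' s)
    rw [hsucc s]
    filter_upwards [hmul, hcind] with ω h1 h2
    rw [h1, Pi.mul_apply, h2]
    calc f s ω = f s ω * 1 := by ring
      _ ≤ f s ω * ∫ ω, Real.exp (t * (μ₀ - X s ω)) ∂μ :=
          mul_le_mul_of_nonneg_left (hEmean1 s) (hfpos s ω).le
  -- apply Doob's maximal inequality
  set ε : NNReal := Real.toNNReal (Real.exp (t * y)) with hε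
  have hεcoe : (ε : ℝ) = Real.exp (t * y) := Real.coe_toNNReal _ (Real.exp_pos _).le
  have key := maximal_ineq hsub (fun _ _ => (Real.exp_pos _).le) (ε := ε) m
  set A : Set Ω := {ω | ∃ s, 1 ≤ s ∧ s ≤ m ∧ y < ∑ i ∈ Finset.range s, (μ₀ - X i ω)} with hA
  set B : Set Ω :=
    {ω | (ε : ℝ) ≤ (Finset.range (m + 1)).sup' Finset.nonempty_range_add_one fun k => f k ω} with hB
  have hAB : A ⊆ B := by
    intro ω hω
    obtain ⟨s, hs1, hs2, hs3⟩ := hω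
    have hfs : (ε : ℝ) ≤ f s ω := by
      rw [hεcoe]
      exact Real.exp_le_exp.2 (mul_le_mul_of_nonneg_left hs3.le ht.le)
    exact le_trans hfs
      (Finset.le_sup' (fun k => f k ω) (Finset.mem_range.2 (Nat.lt_succ_of_le hs2)))
  -- bound the integral of f m
  have hintfm : ∫ ω, f m ω ∂μ ≤ Real.exp ((m : ℝ) * t ^ 2 / 8) := by
    have hYindep : iIndepFun
        (fun i => (fun x : ℝ => μ₀ - x) ∘ X i) μ :=
      hindep.comp _ fun i => measurable_const.sub measurable_id
    have hYmeas : ∀ i, Measurable ((fun x : ℝ => μ₀ - x) ∘ X i) :=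
      fun i => measurable_const.sub (hmeas i)
    have hmgf := hYindep.mgf_sum (t := t) hYmeas (Finset.range m)
    have hfm : ∫ ω, f m ω ∂μ
        = mgf (∑ i ∈ Finset.range m, (fun x : ℝ => μ₀ - x) ∘ X i) μ t := by
      rw [mgf]
      congr 1
      funext ω
      simp [hf, Finset.sum_apply]
    rw [hfm, hmgf]
    calc ∏ i ∈ Finset.range m, mgf ((fun x : ℝ => μ₀ - x) ∘ X i) μ t
        ≤ ∏ _i ∈ Finset.range m, Real.exp (t ^ 2 / 8) := by
          refine Finset.prod_le_prod (fun i _ => mgf_nonneg) fun i _ => ?_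
          have := hoeff_mgf μ (X i) (hmeas i) (hbound i) (hmean i) t
          simpa [mgf, Function.comp] using this
      _ = Real.exp ((m : ℝ) * t ^ 2 / 8) := by
          rw [Finset.prod_const, Finset.card_range, ← Real.exp_nat_mul]
          ring_nf
  -- put everything together
  have hchain : (ε : ℝ≥0∞) * μ A ≤ ENNReal.ofReal (Real.exp ((m : ℝ) * t ^ 2 / 8)) := by
    calc (ε : ℝ≥0∞) * μ A ≤ (ε : ℝ≥0∞) * μ B :=
          mul_le_mul_right (measure_mono hAB) _
      _ = ε • μ B := rfl
      _ ≤ ENNReal.ofReal (∫ ω in B, f m ω ∂μ) := key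
      _ ≤ ENNReal.ofReal (Real.exp ((m : ℝ) * t ^ 2 / 8)) := by
          apply ENNReal.ofReal_le_ofReal
          calc ∫ ω in B, f m ω ∂μ ≤ ∫ ω, f m ω ∂μ :=
                setIntegral_le_integral (hfint m)
                  (Filter.Eventually.of_forall fun ω => (hfpos m ω).le)
            _ ≤ Real.exp ((m : ℝ) * t ^ 2 / 8) := hintfm
  have hμA1 : μ A ≠ ⊤ := measure_ne_top μ A
  have hreal : Real.exp (t * y) * (μ A).toReal ≤ Real.exp ((m : ℝ) * t ^ 2 / 8) := by
    have h1 : ((ε : ℝ≥0∞) * μ A).toReal ≤ Real.exp ((m : ℝ) * t ^ 2 / 8) := by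
      rw [← ENNReal.toReal_ofReal (Real.exp_pos ((m:ℝ) * t ^ 2 / 8)).le]
      exact ENNReal.toReal_mono (by simp) hchain
    rwa [ENNReal.toReal_mul, ENNReal.coe_toReal, hεcoe] at h1
  have hfinal : (μ A).toReal ≤ Real.exp ((m : ℝ) * t ^ 2 / 8 - t * y) := by
    rw [Real.exp_sub, le_div_iff₀ (Real.exp_pos _), mul_comm]
    exact hreal
  calc (μ A).toReal ≤ Real.exp ((m : ℝ) * t ^ 2 / 8 - t * y) := hfinal
    _ = Real.exp (-2 * y ^ 2 / m) := by
        congr 1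
        rw [ht_def]
        field_simp
        ring
end

section
/- MOSS anytime confidence-bound tail: Let (X_k)_{k≥1} be i.i.d. random variables with X_k ∈ [0,1] and mean μ, and let X̄_s = (1/s)Σ_{k=1}^{s} X_k. Let M > 0 and T > 0 be reals, m ≥ 1 an integer, and define ζ = μ − min_{1 ≤ s ≤ m} ( X̄_s + √( (2/s)·max( log(T/(M·s)), 0 ) ) ). Then for every y > 0: P(ζ > y) ≤ (9/y² + 6/y⁴)·(M²/T²). -/
open MeasureTheory ProbabilityTheory
open Real Finset

noncomputable def mossHf (v : ℝ) : ℝ := v ^ 2 * Real.exp (-v)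

lemma mossHf_nonneg (v : ℝ) : 0 ≤ mossHf v := by
  unfold mossHf; positivity

lemma mossHf_mono {v w : ℝ} (h0 : 0 ≤ v) (hvw : v ≤ w) (h2 : w ≤ 2) :
    mossHf v ≤ mossHf w := by
  unfold mossHf
  rcases eq_or_lt_of_le h0 with rfl | hv0
  · simp; positivity
  have hd2 : w - v < 2 := by linarith
  have hd0 : 0 ≤ (w - v) / 2 := by linarith
  have hE1 : Real.exp ((w - v)/2) ≤ 1 / (1 - (w - v)/2) := by
    have h1 : 1 - (w - v)/2 > 0 := by linarith
    have h2' : (-(w - v)/2) + 1 ≤ Real.exp (-((w - v)/2)) := by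
      have := Real.add_one_le_exp (-((w - v)/2)); linarith [this]
    have h3 : 1 - (w-v)/2 ≤ Real.exp (-((w-v)/2)) := by linarith
    rw [Real.exp_neg] at h3
    rw [le_div_iff₀ h1]
    have hep := Real.exp_pos ((w-v)/2)
    calc Real.exp ((w-v)/2) * (1 - (w-v)/2) ≤ Real.exp ((w-v)/2) * (Real.exp ((w-v)/2))⁻¹ := by
          apply mul_le_mul_of_nonneg_left h3 hep.le
      _ = 1 := by field_simp
  have hvE : v * Real.exp ((w - v)/2) ≤ w := by
    have h1 : 1 - (w - v)/2 > 0 := by linarith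
    have : v * Real.exp ((w-v)/2) ≤ v * (1/(1 - (w-v)/2)) :=
      mul_le_mul_of_nonneg_left hE1 h0
    refine this.trans ?_
    rw [mul_one_div, div_le_iff₀ h1]
    nlinarith
  have hEsq : Real.exp (w - v) = Real.exp ((w-v)/2) * Real.exp ((w-v)/2) := by
    rw [← Real.exp_add]; ring_nf
  have hv2 : v^2 * Real.exp (w - v) ≤ w^2 := by
    rw [hEsq]
    nlinarith [Real.exp_pos ((w-v)/2), hvE, mul_nonneg h0 (Real.exp_pos ((w-v)/2)).le]
  have : v^2 * Real.exp (-v) = v^2 * Real.exp (w-v) * Real.exp (-w) := by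
    rw [mul_assoc, ← Real.exp_add]; ring_nf
  rw [this]
  exact mul_le_mul_of_nonneg_right hv2 (Real.exp_pos _).le

lemma mossHf_anti {v w : ℝ} (h2 : 2 ≤ v) (hvw : v ≤ w) :
    mossHf w ≤ mossHf v := by
  unfold mossHf
  have hd0 : 0 ≤ (w - v)/2 := by linarith
  have hE1 : 1 + (w - v)/2 ≤ Real.exp ((w - v)/2) := by
    have := Real.add_one_le_exp ((w - v)/2); linarith
  have hvE : w ≤ v * Real.exp ((w - v)/2) := by
    have : v * (1 + (w-v)/2) ≤ v * Real.exp ((w-v)/2) :=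
      mul_le_mul_of_nonneg_left hE1 (by linarith)
    nlinarith
  have hEsq : Real.exp (w - v) = Real.exp ((w-v)/2) * Real.exp ((w-v)/2) := by
    rw [← Real.exp_add]; ring_nf
  have hw2 : w^2 ≤ v^2 * Real.exp (w - v) := by
    rw [hEsq]
    nlinarith [Real.exp_pos ((w-v)/2), hvE, (by linarith : (0:ℝ) ≤ w)]
  have : v^2 * Real.exp (-v) = v^2 * Real.exp (w-v) * Real.exp (-w) := by
    rw [mul_assoc, ← Real.exp_add]; ring_nf
  rw [this]
  exact mul_le_mul_of_nonneg_right hw2 (Real.exp_pos _).le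

lemma exp_ge_poly6 {v : ℝ} (hv : 0 ≤ v) :
    1 + v + v^2/2 + v^3/6 + v^4/24 + v^5/120 + v^6/720 ≤ Real.exp v := by
  have h := Real.sum_le_exp_of_nonneg hv 7
  have heq : ∑ i ∈ range 7, v ^ i / (Nat.factorial i : ℝ) =
      1 + v + v^2/2 + v^3/6 + v^4/24 + v^5/120 + v^6/720 := by
    simp [Finset.sum_range_succ, Nat.factorial]
    try ring
  rw [heq] at h
  exact h

lemma mossHf_le_poly {v : ℝ} (hv : 0 ≤ v) :
    mossHf v ≤ v^2 / (1 + v + v^2/2 + v^3/6 + v^4/24 + v^5/120 + v^6/720) := by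
  unfold mossHf
  have hp : (0:ℝ) < 1 + v + v^2/2 + v^3/6 + v^4/24 + v^5/120 + v^6/720 := by positivity
  rw [Real.exp_neg]
  rw [div_eq_mul_inv]
  apply mul_le_mul_of_nonneg_left _ (by positivity)
  exact inv_anti₀ hp (exp_ge_poly6 hv)

lemma mossHf_le_sq {v : ℝ} (hv : 0 ≤ v) : mossHf v ≤ v^2 := by
  unfold mossHf
  have h1 : Real.exp (-v) ≤ 1 := Real.exp_le_one_iff.mpr (by linarith)
  nlinarith

lemma mossHf_le_quartic {v : ℝ} (hv : 0 < v) : mossHf v ≤ 720 / v^4 := by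
  have h6 : v^6/720 ≤ Real.exp v := by
    have := exp_ge_poly6 hv.le
    nlinarith [hv.le, pow_nonneg hv.le 2, pow_nonneg hv.le 3, pow_nonneg hv.le 4,
      pow_nonneg hv.le 5]
  have hev : (0:ℝ) < v^6/720 := by positivity
  have h2 : (Real.exp v)⁻¹ ≤ (v^6/720)⁻¹ := inv_anti₀ hev h6
  unfold mossHf
  rw [Real.exp_neg]
  calc v^2 * (Real.exp v)⁻¹ ≤ v^2 * (v^6/720)⁻¹ :=
        mul_le_mul_of_nonneg_left h2 (by positivity)
    _ = 720/v^4 := by field_simp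

lemma geom_sum_le_div {q : ℝ} (h0 : 0 ≤ q) (h1 : q < 1) (N : ℕ) :
    ∑ i ∈ range N, q^i ≤ 1/(1-q) := by
  have h2 : (0:ℝ) < 1 - q := by linarith
  have heq : ∑ i ∈ range N, q^i = (1 - q^N)/(1-q) := by
    rw [geom_sum_eq h1.ne]
    rw [div_eq_div_iff (by linarith) (by linarith)]
    ring
  rw [heq]
  have hnum : 1 - q^N ≤ 1 := by
    have : (0:ℝ) ≤ q^N := pow_nonneg h0 N
    linarith
  gcongr

lemma mossSeries_asc (J : ℕ) : ∑ k ∈ range J, mossHf (2*(2/3)^k) ≤ 9/5 := by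
  have hsub : ∑ k ∈ range J, mossHf (2*(2/3)^k) ≤ ∑ k ∈ range (max J 6), mossHf (2*(2/3)^k) :=
    Finset.sum_le_sum_of_subset_of_nonneg (Finset.range_subset_range.mpr (le_max_left _ _))
      (fun i _ _ => mossHf_nonneg _)
  refine hsub.trans ?_
  rw [Finset.range_eq_Ico, ← Finset.sum_Ico_consecutive _ (Nat.zero_le 6) (le_max_right J 6),
    ← Finset.range_eq_Ico]
  have c0 : mossHf (2*(2/3)^0) ≤ 0.5439 := by
    have := mossHf_le_poly (v := 2*(2/3)^0) (by norm_num)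
    norm_num at this ⊢; linarith
  have c1 : mossHf (2*(2/3)^1) ≤ 0.4689 := by
    have := mossHf_le_poly (v := 2*(2/3)^1) (by norm_num)
    norm_num at this ⊢; linarith
  have c2 : mossHf (2*(2/3)^2) ≤ 0.3249 := by
    have := mossHf_le_poly (v := 2*(2/3)^2) (by norm_num)
    norm_num at this ⊢; linarith
  have c3 : mossHf (2*(2/3)^3) ≤ 0.1942 := by
    have := mossHf_le_poly (v := 2*(2/3)^3) (by norm_num)
    norm_num at this ⊢; linarith
  have c4 : mossHf (2*(2/3)^4) ≤ 0.1052 := by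
    have := mossHf_le_poly (v := 2*(2/3)^4) (by norm_num)
    norm_num at this ⊢; linarith
  have c5 : mossHf (2*(2/3)^5) ≤ 0.0534 := by
    have := mossHf_le_poly (v := 2*(2/3)^5) (by norm_num)
    norm_num at this ⊢; linarith
  have hhead : ∑ k ∈ range 6, mossHf (2*(2/3)^k) ≤ 1.6905 := by
    rw [Finset.sum_range_succ, Finset.sum_range_succ, Finset.sum_range_succ,
      Finset.sum_range_succ, Finset.sum_range_succ, Finset.sum_range_one]
    linarith
  have htail : ∑ k ∈ Finset.Ico 6 (max J 6), mossHf (2*(2/3)^k) ≤ 0.056 := by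
    have step : ∀ k ∈ Finset.Ico 6 (max J 6), mossHf (2*(2/3)^k) ≤ 4*(4/9)^k := by
      intro k _
      have := mossHf_le_sq (v := 2*(2/3)^k) (by positivity)
      have heq : (2*((2:ℝ)/3)^k)^2 = 4*(4/9)^k := by
        rw [mul_pow, ← pow_mul, mul_comm k 2, pow_mul]
        norm_num
      linarith [heq ▸ this]
    refine (Finset.sum_le_sum step).trans ?_
    rw [Finset.sum_Ico_eq_sum_range]
    have : ∀ i, (4:ℝ)*(4/9)^(6+i) = (4*(4/9)^6) * (4/9)^i := by
      intro i; rw [pow_add]; ring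
    rw [Finset.sum_congr rfl (fun i _ => this i), ← Finset.mul_sum]
    have hg := geom_sum_le_div (q := 4/9) (by norm_num) (by norm_num) (max J 6 - 6)
    have hpos : (0:ℝ) ≤ 4*(4/9)^6 := by positivity
    calc (4*(4/9:ℝ)^6) * ∑ i ∈ range (max J 6 - 6), (4/9)^i
        ≤ (4*(4/9)^6) * (1/(1-4/9)) := mul_le_mul_of_nonneg_left hg hpos
      _ ≤ 0.056 := by norm_num
  linarith

lemma mossSeries_desc (J : ℕ) : ∑ k ∈ range J, mossHf (2*(3/2)^k) ≤ 8/5 := by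
  have hsub : ∑ k ∈ range J, mossHf (2*(3/2)^k) ≤ ∑ k ∈ range (max J 4), mossHf (2*(3/2)^k) :=
    Finset.sum_le_sum_of_subset_of_nonneg (Finset.range_subset_range.mpr (le_max_left _ _))
      (fun i _ _ => mossHf_nonneg _)
  refine hsub.trans ?_
  rw [Finset.range_eq_Ico, ← Finset.sum_Ico_consecutive _ (Nat.zero_le 4) (le_max_right J 4),
    ← Finset.range_eq_Ico]
  have c0 : mossHf (2*(3/2)^0) ≤ 0.5439 := by
    have := mossHf_le_poly (v := 2*(3/2)^0) (by norm_num)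
    norm_num at this ⊢; linarith
  have c1 : mossHf (2*(3/2)^1) ≤ 0.4637 := by
    have := mossHf_le_poly (v := 2*(3/2)^1) (by norm_num)
    norm_num at this ⊢; linarith
  have c2 : mossHf (2*(3/2)^2) ≤ 0.2707 := by
    have := mossHf_le_poly (v := 2*(3/2)^2) (by norm_num)
    norm_num at this ⊢; linarith
  have c3 : mossHf (2*(3/2)^3) ≤ 0.1095 := by
    have := mossHf_le_poly (v := 2*(3/2)^3) (by norm_num)
    norm_num at this ⊢; linarith
  have hhead : ∑ k ∈ range 4, mossHf (2*(3/2)^k) ≤ 1.3878 := by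
    rw [Finset.sum_range_succ, Finset.sum_range_succ, Finset.sum_range_succ,
      Finset.sum_range_one]
    linarith
  have htail : ∑ k ∈ Finset.Ico 4 (max J 4), mossHf (2*(3/2)^k) ≤ 0.086 := by
    have step : ∀ k ∈ Finset.Ico 4 (max J 4), mossHf (2*(3/2)^k) ≤ 45*(16/81)^k := by
      intro k _
      have := mossHf_le_quartic (v := 2*(3/2)^k) (by positivity)
      have heq : (720:ℝ) / (2*(3/2)^k)^4 = 45*(16/81)^k := by
        rw [mul_pow, ← pow_mul, mul_comm k 4, pow_mul]
        rw [show ((3:ℝ)/2)^4 = 81/16 by norm_num]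
        rw [div_eq_mul_inv, mul_inv, ← inv_pow]
        norm_num
        rw [← inv_pow]
        norm_num
        ring
      linarith [heq ▸ this]
    refine (Finset.sum_le_sum step).trans ?_
    rw [Finset.sum_Ico_eq_sum_range]
    have : ∀ i, (45:ℝ)*(16/81)^(4+i) = (45*(16/81)^4) * (16/81)^i := by
      intro i; rw [pow_add]; ring
    rw [Finset.sum_congr rfl (fun i _ => this i), ← Finset.mul_sum]
    have hg := geom_sum_le_div (q := 16/81) (by norm_num) (by norm_num) (max J 4 - 4)
    have hpos : (0:ℝ) ≤ 45*(16/81)^4 := by positivity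
    calc (45*(16/81:ℝ)^4) * ∑ i ∈ range (max J 4 - 4), (16/81)^i
        ≤ (45*(16/81)^4) * (1/(1-16/81)) := mul_le_mul_of_nonneg_left hg hpos
      _ ≤ 0.086 := by norm_num
  linarith

lemma mossSeries_main (J : ℕ) (b : ℝ) (hb0 : 0 < b) (hb2 : b ≤ 2) :
    ∑ j ∈ range J, mossHf (b*(3/2)^j) ≤ 17/5 := by
  classical
  set v : ℕ → ℝ := fun j => b*(3/2)^j with hv
  have hvpos : ∀ j, 0 < v j := fun j => by positivity
  have hvmono : ∀ {i j : ℕ}, i ≤ j → v i ≤ v j := by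
    intro i j hij
    exact mul_le_mul_of_nonneg_left (pow_le_pow_right₀ (by norm_num) hij) hb0.le
  set Sm : Finset ℕ := (range J).filter (fun j => v j ≤ 2) with hSm
  set Bg : Finset ℕ := (range J).filter (fun j => ¬ v j ≤ 2) with hBg
  have hsplit : ∑ j ∈ range J, mossHf (v j)
      = ∑ j ∈ Sm, mossHf (v j) + ∑ j ∈ Bg, mossHf (v j) :=
    (Finset.sum_filter_add_sum_filter_not _ _ _).symm
  have hsmall : ∑ j ∈ Sm, mossHf (v j) ≤ 9/5 := by
    rcases Sm.eq_empty_or_nonempty with he | hne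
    · rw [he]; simp; norm_num
    · set q := Sm.max' hne with hq
      have hqmem := Sm.max'_mem hne
      have hqJ : q < J := (Finset.mem_filter.mp hqmem).1 |> Finset.mem_range.mp
      have hvq : v q ≤ 2 := (Finset.mem_filter.mp hqmem).2
      -- bound each term
      have hterm : ∀ j ∈ Sm, mossHf (v j) ≤ mossHf (2*(2/3)^(q - j)) := by
        intro j hj
        have hjq : j ≤ q := Finset.le_max' _ _ hj
        have hvj2 : v j ≤ 2 := (Finset.mem_filter.mp hj).2
        apply mossHf_mono (hvpos j).le _ _
        · -- v j ≤ 2*(2/3)^(q-j) : since v q = v j * (3/2)^(q-j)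
          have hqd : v q = v j * (3/2)^(q - j) := by
            rw [hv]
            simp only
            rw [mul_assoc, ← pow_add]
            congr 2
            omega
          have hpow : (0:ℝ) < (3/2)^(q - j) := by positivity
          have h1 : v j = v q * (2/3)^(q - j) := by
            rw [hqd]
            rw [mul_assoc]
            rw [show ((3:ℝ)/2)^(q-j) * (2/3)^(q-j) = 1 by
              rw [← mul_pow]; norm_num]
            ring
          rw [h1]
          exact mul_le_mul_of_nonneg_right hvq (by positivity)
        · have : ((2:ℝ)/3)^(q-j) ≤ 1 := pow_le_one₀ (by norm_num) (by norm_num)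
          nlinarith
      calc ∑ j ∈ Sm, mossHf (v j) ≤ ∑ j ∈ Sm, mossHf (2*(2/3)^(q - j)) :=
            Finset.sum_le_sum hterm
        _ = ∑ k ∈ Sm.image (fun j => q - j), mossHf (2*(2/3)^k) := by
            rw [Finset.sum_image]
            intro a ha b hb hab
            have haq : a ≤ q := Finset.le_max' _ _ ha
            have hbq : b ≤ q := Finset.le_max' _ _ hb
            simp only at hab
            omega
        _ ≤ ∑ k ∈ range J, mossHf (2*(2/3)^k) := by
            apply Finset.sum_le_sum_of_subset_of_nonneg
            · intro k hk
              obtain ⟨j, hj, rfl⟩ := Finset.mem_image.mp hk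
              exact Finset.mem_range.mpr (by omega)
            · exact fun i _ _ => mossHf_nonneg _
        _ ≤ 9/5 := mossSeries_asc J
  have hbig : ∑ j ∈ Bg, mossHf (v j) ≤ 8/5 := by
    rcases Bg.eq_empty_or_nonempty with he | hne
    · rw [he]; simp; norm_num
    · set p := Bg.min' hne with hp
      have hpmem := Bg.min'_mem hne
      have hvp : 2 < v p := lt_of_not_ge (Finset.mem_filter.mp hpmem).2
      have hterm : ∀ j ∈ Bg, mossHf (v j) ≤ mossHf (2*(3/2)^(j - p)) := by
        intro j hj
        have hpj : p ≤ j := Finset.min'_le _ _ hj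
        apply mossHf_anti
        · -- 2 ≤ 2*(3/2)^(j-p)
          have : (1:ℝ) ≤ (3/2)^(j-p) := one_le_pow₀ (by norm_num)
          nlinarith
        · -- 2*(3/2)^(j-p) ≤ v j = v p * (3/2)^(j-p)
          have hqd : v j = v p * (3/2)^(j - p) := by
            rw [hv]; simp only
            rw [mul_assoc, ← pow_add]
            congr 2
            omega
          rw [hqd]
          exact mul_le_mul_of_nonneg_right hvp.le (by positivity)
      calc ∑ j ∈ Bg, mossHf (v j) ≤ ∑ j ∈ Bg, mossHf (2*(3/2)^(j - p)) :=
            Finset.sum_le_sum hterm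
        _ = ∑ k ∈ Bg.image (fun j => j - p), mossHf (2*(3/2)^k) := by
            rw [Finset.sum_image]
            intro a ha b hb hab
            have hpa : p ≤ a := Finset.min'_le _ _ ha
            have hpb : p ≤ b := Finset.min'_le _ _ hb
            simp only at hab
            omega
        _ ≤ ∑ k ∈ range J, mossHf (2*(3/2)^k) := by
            apply Finset.sum_le_sum_of_subset_of_nonneg
            · intro k hk
              obtain ⟨j, hj, rfl⟩ := Finset.mem_image.mp hk
              have := Finset.mem_range.mp (Finset.mem_filter.mp hj).1
              exact Finset.mem_range.mpr (by omega)
            · exact fun i _ _ => mossHf_nonneg _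
        _ ≤ 8/5 := mossSeries_desc J
  rw [hsplit] at *
  linarith

lemma hoeff_key {p : ℝ} (hp0 : 0 ≤ p) (hp1 : p ≤ 1) {t : ℝ} (ht : t ≤ 0) :
    Real.log (1 - p + p * Real.exp t) ≤ p * t + t^2/8 := by
  have hD : ∀ u : ℝ, 0 < 1 - p + p * Real.exp u := by
    intro u
    rcases lt_or_ge (Real.exp u) 1 with h | h
    · nlinarith [Real.exp_pos u]
    · nlinarith [Real.exp_pos u]
  set g : ℝ → ℝ := fun u => Real.log (1 - p + p * Real.exp u) - p*u - u^2/8 with hg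
  set G : ℝ → ℝ := fun u => p * Real.exp u / (1 - p + p * Real.exp u) - p - u/4 with hG
  have hgd : ∀ u, HasDerivAt g (G u) u := by
    intro u
    have h1 : HasDerivAt (fun u : ℝ => 1 - p + p * Real.exp u) (p * Real.exp u) u := by
      simpa using (Real.hasDerivAt_exp u).const_mul p |>.const_add (1 - p)
    have h2 : HasDerivAt (fun u : ℝ => Real.log (1 - p + p * Real.exp u))
        (p * Real.exp u / (1 - p + p * Real.exp u)) u := h1.log (hD u).ne'
    have h3 : HasDerivAt (fun u : ℝ => p * u) p u := by
      simpa using (hasDerivAt_id u).const_mul p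
    have h4 : HasDerivAt (fun u : ℝ => u^2/8) (u/4) u := by
      have := (hasDerivAt_pow 2 u).div_const 8
      simpa using this.congr_deriv (by ring)
    exact (h2.sub h3).sub h4
  have hGd : ∀ u, HasDerivAt G
      ((p * Real.exp u * (1 - p + p * Real.exp u) - p * Real.exp u * (p * Real.exp u)) /
        (1 - p + p * Real.exp u)^2 - 1/4) u := by
    intro u
    have h1 : HasDerivAt (fun u : ℝ => 1 - p + p * Real.exp u) (p * Real.exp u) u := by
      simpa using (Real.hasDerivAt_exp u).const_mul p |>.const_add (1 - p)
    have h2 : HasDerivAt (fun u : ℝ => p * Real.exp u) (p * Real.exp u) u := by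
      simpa using (Real.hasDerivAt_exp u).const_mul p
    have h5 : HasDerivAt (fun u : ℝ => p * Real.exp u / (1 - p + p * Real.exp u))
        ((p * Real.exp u * (1 - p + p * Real.exp u) - p * Real.exp u * (p * Real.exp u)) /
          (1 - p + p * Real.exp u)^2) u := h2.div h1 (hD u).ne'
    have h6 : HasDerivAt (fun u : ℝ => p + u/4) (1/4) u := by
      simpa using ((hasDerivAt_id u).div_const 4).const_add p
    have := h5.sub h6
    have hGeq : G = ((fun u : ℝ => p * Real.exp u / (1 - p + p * Real.exp u)) - fun u : ℝ => p + u/4) := by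
      funext z; simp only [hG, Pi.sub_apply]; ring
    rw [hGeq]; exact this
  have hGderiv_nonpos : ∀ u,
      (p * Real.exp u * (1 - p + p * Real.exp u) - p * Real.exp u * (p * Real.exp u)) /
        (1 - p + p * Real.exp u)^2 - 1/4 ≤ 0 := by
    intro u
    have hDu := hD u
    rw [sub_nonpos, div_le_iff₀ (by positivity)]
    nlinarith [sq_nonneg (1 - p + p*Real.exp u - 2*(p * Real.exp u)), Real.exp_pos u,
      mul_nonneg hp0 (Real.exp_pos u).le]
  -- G is antitone on [t,0], so G u ≥ G 0 = 0 on [t,0]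
  have hG0 : G 0 = 0 := by simp [hG]
  have hGanti : AntitoneOn G (Set.Icc t 0) := by
    apply antitoneOn_of_deriv_nonpos (convex_Icc t 0)
    · exact (Differentiable.continuous fun u => (hGd u).differentiableAt).continuousOn
    · intro u _
      exact (hGd u).differentiableAt.differentiableWithinAt
    · intro u _
      rw [(hGd u).deriv]
      exact hGderiv_nonpos u
  have hGnonneg : ∀ u ∈ Set.Icc t 0, 0 ≤ G u := by
    intro u hu
    have := hGanti hu (Set.right_mem_Icc.mpr ht) hu.2
    rw [hG0] at this
    exact this
  -- g is monotone on [t,0]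
  have hgmono : MonotoneOn g (Set.Icc t 0) := by
    apply monotoneOn_of_deriv_nonneg (convex_Icc t 0)
    · exact (Differentiable.continuous fun u => (hgd u).differentiableAt).continuousOn
    · intro u _
      exact (hgd u).differentiableAt.differentiableWithinAt
    · intro u hu
      rw [(hgd u).deriv]
      exact hGnonneg u (interior_subset hu)
  have hg0 : g 0 = 0 := by simp [hg]
  have := hgmono (Set.left_mem_Icc.mpr ht) (Set.right_mem_Icc.mpr ht) ht
  rw [hg0] at this
  simp only [hg] at this
  linarith

lemma moss_mgf {Ω : Type*} [MeasurableSpace Ω] (μ : Measure Ω) [IsProbabilityMeasure μ]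
    (W : Ω → ℝ) (hW : Measurable W) (hWb : ∀ ω, W ω ∈ Set.Icc (0:ℝ) 1)
    (p : ℝ) (hp : ∫ ω, W ω ∂μ = p) (l : ℝ) (hl : 0 ≤ l) :
    ∫ ω, Real.exp (l*(p - W ω)) ∂μ ≤ Real.exp (l^2/8) := by
  have hWint : Integrable W μ := by
    apply Integrable.mono' (integrable_const (1:ℝ)) hW.aestronglyMeasurable
    exact Filter.Eventually.of_forall fun ω => by
      rw [Real.norm_eq_abs, abs_le]
      exact ⟨by linarith [(hWb ω).1], (hWb ω).2⟩
  have hp0 : 0 ≤ p := by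
    rw [← hp]; exact integral_nonneg fun ω => (hWb ω).1
  have hp1 : p ≤ 1 := by
    rw [← hp]
    calc ∫ ω, W ω ∂μ ≤ ∫ _ω, (1:ℝ) ∂μ :=
          integral_mono hWint (integrable_const 1) fun ω => (hWb ω).2
      _ = 1 := by simp
  have hpt : ∀ ω, Real.exp (l*(p - W ω)) ≤
      Real.exp (l*p) * (1 - W ω + W ω * Real.exp (-l)) := by
    intro ω
    have h1 : Real.exp (l*(p - W ω)) = Real.exp (l*p) * Real.exp (-(l * W ω)) := by
      rw [← Real.exp_add]; ring_nf
    rw [h1]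
    apply mul_le_mul_of_nonneg_left _ (Real.exp_pos _).le
    have hw0 := (hWb ω).1
    have hw1 := (hWb ω).2
    have hcx := convexOn_exp.2 (Set.mem_univ (0:ℝ)) (Set.mem_univ (-l))
      (by linarith : (0:ℝ) ≤ 1 - W ω) hw0 (by ring)
    simp only [smul_eq_mul, mul_zero, zero_add, Real.exp_zero, mul_one] at hcx
    rw [show -(l * W ω) = W ω * -l by ring]
    exact hcx
  have hLint : Integrable (fun ω => Real.exp (l*(p - W ω))) μ := by
    apply Integrable.mono' (integrable_const (Real.exp (l*p)))
      (Measurable.aestronglyMeasurable (by measurability))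
    exact Filter.Eventually.of_forall fun ω => by
      rw [Real.norm_eq_abs, abs_of_pos (Real.exp_pos _)]
      apply Real.exp_le_exp.mpr
      have := (hWb ω).1
      nlinarith
  have hRint : Integrable (fun ω => Real.exp (l*p) * (1 - W ω + W ω * Real.exp (-l))) μ := by
    apply Integrable.const_mul
    exact ((integrable_const (1:ℝ)).sub hWint).add (hWint.mul_const _)
  have hstep1 : ∫ ω, Real.exp (l*(p - W ω)) ∂μ ≤
      ∫ ω, Real.exp (l*p) * (1 - W ω + W ω * Real.exp (-l)) ∂μ :=
    integral_mono hLint hRint hpt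
  have hstep2 : ∫ ω, Real.exp (l*p) * (1 - W ω + W ω * Real.exp (-l)) ∂μ =
      Real.exp (l*p) * (1 - p + p * Real.exp (-l)) := by
    rw [integral_const_mul]
    congr 1
    have hint1 : Integrable (fun a => (1:ℝ) - W a) μ := (integrable_const 1).sub hWint
    have hint2 : Integrable (fun a => W a * Real.exp (-l)) μ := hWint.mul_const _
    have hint3 : Integrable (fun a => (1:ℝ)) μ := integrable_const 1
    rw [integral_add hint1 hint2, integral_sub hint3 hWint, integral_mul_const]
    simp [hp]
  have hD : (0:ℝ) < 1 - p + p * Real.exp (-l) := by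
    rcases lt_or_ge (Real.exp (-l)) 1 with h | h
    · nlinarith [Real.exp_pos (-l)]
    · nlinarith [Real.exp_pos (-l)]
  have hkey := hoeff_key hp0 hp1 (t := -l) (by linarith)
  have hstep3 : Real.exp (l*p) * (1 - p + p * Real.exp (-l)) ≤ Real.exp (l^2/8) := by
    have h2 : 1 - p + p * Real.exp (-l) ≤ Real.exp (p * (-l) + (-l)^2/8) := by
      rw [← Real.exp_log hD]
      exact Real.exp_le_exp.mpr hkey
    calc Real.exp (l*p) * (1 - p + p * Real.exp (-l))
        ≤ Real.exp (l*p) * Real.exp (p * (-l) + (-l)^2/8) :=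
          mul_le_mul_of_nonneg_left h2 (Real.exp_pos _).le
      _ = Real.exp (l^2/8) := by rw [← Real.exp_add]; ring_nf
  linarith

lemma moss_maximal {Ω : Type*} [MeasurableSpace Ω] (μ : Measure Ω) [IsProbabilityMeasure μ]
    (X : ℕ → Ω → ℝ) (μ₀ : ℝ) (hmeas : ∀ k, Measurable (X k))
    (hindep : iIndepFun X μ)
    (hbound : ∀ k ω, X k ω ∈ Set.Icc (0:ℝ) 1)
    (hmean : ∀ k, ∫ ω, X k ω ∂μ = μ₀)
    (n : ℕ) (hn : 1 ≤ n) (t : ℝ) (ht : 0 < t) :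
    μ {ω | ∃ s, 1 ≤ s ∧ s ≤ n ∧ t ≤ ∑ k ∈ Finset.range s, (μ₀ - X k ω)} ≤
      ENNReal.ofReal (Real.exp (-2*t^2/(n:ℝ))) := by
  classical
  have hn0 : (0:ℝ) < (n:ℝ) := by exact_mod_cast hn
  set l : ℝ := 4*t/(n:ℝ) with hldef
  have hl : 0 < l := by positivity
  set S : ℕ → Ω → ℝ := fun s ω => ∑ k ∈ Finset.range s, (μ₀ - X k ω) with hSdef
  have hSmeas : ∀ s, Measurable (S s) := fun s =>
    Finset.measurable_sum _ (fun k _ => measurable_const.sub (hmeas k))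
  have hμ0 : 0 ≤ μ₀ := by rw [← hmean 0]; exact integral_nonneg fun ω => (hbound 0 ω).1
  have hμ1 : μ₀ ≤ 1 := by
    rw [← hmean 0]
    calc ∫ ω, X 0 ω ∂μ ≤ ∫ _ω, (1:ℝ) ∂μ :=
          integral_mono_of_nonneg (Filter.Eventually.of_forall fun ω => (hbound 0 ω).1)
            (integrable_const 1) (Filter.Eventually.of_forall fun ω => (hbound 0 ω).2)
      _ = 1 := by simp
  have hZb : ∀ k ω, |μ₀ - X k ω| ≤ 1 := by
    intro k ω
    have h1 := (hbound k ω).1; have h2 := (hbound k ω).2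
    rw [abs_le]; constructor <;> linarith
  have hXint : ∀ k, Integrable (X k) μ := by
    intro k
    apply Integrable.mono' (integrable_const (1:ℝ)) (hmeas k).aestronglyMeasurable
    exact Filter.Eventually.of_forall fun ω => by
      rw [Real.norm_eq_abs, abs_le]
      exact ⟨by linarith [(hbound k ω).1], (hbound k ω).2⟩
  have hSle : ∀ s ω, S s ω ≤ (s:ℝ) := by
    intro s ω
    calc S s ω ≤ ∑ _k ∈ Finset.range s, (1:ℝ) :=
          Finset.sum_le_sum fun k _ => by linarith [(hbound k ω).1]
      _ = s := by simp
  set A : ℕ → Set Ω := fun s => {ω | t ≤ S s ω ∧ ∀ j < s, S j ω < t} with hAdef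
  have hAmeas : ∀ s, MeasurableSet (A s) := by
    intro s
    have : A s = {ω | t ≤ S s ω} ∩ ⋂ (j : ℕ) (_ : j < s), {ω | S j ω < t} := by
      ext ω; simp [hAdef]
    rw [this]
    exact (measurableSet_le measurable_const (hSmeas s)).inter
      (MeasurableSet.iInter fun j => MeasurableSet.iInter fun _ =>
        measurableSet_lt (hSmeas j) measurable_const)
  have hEset : {ω | ∃ s, 1 ≤ s ∧ s ≤ n ∧ t ≤ S s ω} = ⋃ s ∈ Finset.Icc 1 n, A s := by
    ext ω
    simp only [Set.mem_setOf_eq, Set.mem_iUnion, Finset.mem_Icc, exists_prop, hAdef]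
    constructor
    · rintro ⟨s, hs1, hsn, hts⟩
      have hex : ∃ s, t ≤ S s ω := ⟨s, hts⟩
      refine ⟨Nat.find hex, ⟨?_, le_trans (Nat.find_min' hex hts) hsn⟩,
        Nat.find_spec hex, fun j hj => lt_of_not_ge (Nat.find_min hex hj)⟩
      rcases Nat.eq_zero_or_pos (Nat.find hex) with h0 | h
      · exfalso
        have := Nat.find_spec hex
        rw [h0] at this
        simp only [hSdef, Finset.range_zero, Finset.sum_empty] at this
        linarith
      · exact h
    · rintro ⟨s, ⟨hs1, hsn⟩, hts, _⟩; exact ⟨s, hs1, hsn, hts⟩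
  have hdisj : (↑(Finset.Icc 1 n) : Set ℕ).PairwiseDisjoint A := by
    intro a ha b hb hab
    apply Set.disjoint_left.mpr
    intro ω hωa hωb
    rcases lt_or_gt_of_ne hab with h | h
    · exact absurd hωa.1 (not_le.mpr (hωb.2 a h))
    · exact absurd hωb.1 (not_le.mpr (hωa.2 b h))
  have hmeq : μ {ω | ∃ s, 1 ≤ s ∧ s ≤ n ∧ t ≤ S s ω} = ∑ s ∈ Finset.Icc 1 n, μ (A s) := by
    rw [hEset]
    exact measure_biUnion_finset hdisj (fun s _ => hAmeas s)
  -- per-s inequality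
  have hkey : ∀ s ∈ Finset.Icc 1 n, Real.exp (l*t) * (μ (A s)).toReal ≤
      ∫ ω, Set.indicator (A s) (fun _ => (1:ℝ)) ω * Real.exp (l * S n ω) ∂μ := by
    intro s hs
    obtain ⟨hs1, hsn⟩ := Finset.mem_Icc.mp hs
    set g : Ω → ℝ := fun ω => Set.indicator (A s) (fun _ => (1:ℝ)) ω * Real.exp (l * S s ω)
      with hgdef
    set R : Ω → ℝ := fun ω => Real.exp (l * ∑ k ∈ Finset.Ico s n, (μ₀ - X k ω)) with hRdef
    have hgmeas : Measurable g :=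
      (measurable_const.indicator (hAmeas s)).mul
        (Real.measurable_exp.comp ((hSmeas s).const_mul l))
    have hRmeas : Measurable R :=
      Real.measurable_exp.comp ((Finset.measurable_sum _ fun k _ =>
        measurable_const.sub (hmeas k)).const_mul l)
    have hgnn : 0 ≤ g := by
      intro ω
      apply mul_nonneg _ (Real.exp_pos _).le
      exact Set.indicator_nonneg (fun _ _ => zero_le_one) ω
    have hRnn : 0 ≤ R := fun ω => (Real.exp_pos _).le
    have hgle : ∀ ω, g ω ≤ Real.exp (l * n) := by
      intro ω
      by_cases h : ω ∈ A s
      · simp only [hgdef, Set.indicator_of_mem h, one_mul]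
        apply Real.exp_le_exp.mpr
        have h1 := hSle s ω
        have hsn' : (s:ℝ) ≤ (n:ℝ) := by exact_mod_cast hsn
        nlinarith
      · simp only [hgdef, Set.indicator_of_notMem h, zero_mul]
        exact (Real.exp_pos _).le
    have hgint : Integrable g μ := by
      apply Integrable.mono' (integrable_const (Real.exp (l*n))) hgmeas.aestronglyMeasurable
      exact Filter.Eventually.of_forall fun ω => by
        rw [Real.norm_eq_abs, abs_of_nonneg (hgnn ω)]; exact hgle ω
    have hRle : ∀ ω, R ω ≤ Real.exp (l * n) := by
      intro ω
      apply Real.exp_le_exp.mpr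
      apply mul_le_mul_of_nonneg_left _ hl.le
      calc ∑ k ∈ Finset.Ico s n, (μ₀ - X k ω) ≤ ∑ _k ∈ Finset.Ico s n, (1:ℝ) :=
            Finset.sum_le_sum fun k _ => by linarith [(hbound k ω).1]
        _ = ((n - s : ℕ) : ℝ) := by simp [Nat.card_Ico]
        _ ≤ (n:ℝ) := by exact_mod_cast Nat.sub_le n s
    have hRint : Integrable R μ := by
      apply Integrable.mono' (integrable_const (Real.exp (l*n))) hRmeas.aestronglyMeasurable
      exact Filter.Eventually.of_forall fun ω => by
        rw [Real.norm_eq_abs, abs_of_nonneg (hRnn ω)]; exact hRle ω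
    -- independence of g and R
    have hdisjF : Disjoint (Finset.range s) (Finset.Ico s n) := by
      simp only [Finset.disjoint_left, Finset.mem_range, Finset.mem_Ico]
      intro a ha
      omega
    have base := hindep.indepFun_finset (Finset.range s) (Finset.Ico s n) hdisjF hmeas
    set G : ℕ → ({x // x ∈ Finset.range s} → ℝ) → ℝ :=
      fun j v => ∑ i : {x // x ∈ Finset.range s}, if (i:ℕ) < j then (μ₀ - v i) else 0
      with hGdef
    have hGmeas : ∀ j, Measurable (G j) := by
      intro j
      apply Finset.measurable_sum
      intro i _
      by_cases h : (i:ℕ) < j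
      · simp only [h, if_true]; exact measurable_const.sub (measurable_pi_apply i)
      · simp only [h, if_false]; exact measurable_const
    set B : Set ({x // x ∈ Finset.range s} → ℝ) := {v | t ≤ G s v ∧ ∀ j < s, G j v < t}
      with hBdef
    have hBmeas : MeasurableSet B := by
      have : B = {v | t ≤ G s v} ∩ ⋂ (j : ℕ) (_ : j < s), {v | G j v < t} := by
        ext v; simp [hBdef]
      rw [this]
      exact (measurableSet_le measurable_const (hGmeas s)).inter
        (MeasurableSet.iInter fun j => MeasurableSet.iInter fun _ =>
          measurableSet_lt (hGmeas j) measurable_const)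
    set phi : ({x // x ∈ Finset.range s} → ℝ) → ℝ :=
      fun v => Set.indicator B (fun _ => (1:ℝ)) v * Real.exp (l * G s v) with hphidef
    have hphimeas : Measurable phi :=
      (measurable_const.indicator hBmeas).mul
        (Real.measurable_exp.comp ((hGmeas s).const_mul l))
    set psi : ({x // x ∈ Finset.Ico s n} → ℝ) → ℝ :=
      fun v => Real.exp (l * ∑ i : {x // x ∈ Finset.Ico s n}, (μ₀ - v i)) with hpsidef
    have hpsimeas : Measurable psi :=
      Real.measurable_exp.comp ((Finset.measurable_sum _ fun i _ =>
        measurable_const.sub (measurable_pi_apply i)).const_mul l)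
    have hGid : ∀ j, j ≤ s → ∀ ω, G j (fun i : {x // x ∈ Finset.range s} => X i ω) = S j ω := by
      intro j hj ω
      simp only [hGdef]
      rw [Finset.sum_coe_sort (Finset.range s) (fun k => if k < j then μ₀ - X k ω else 0)]
      rw [← Finset.sum_filter]
      have : (Finset.range s).filter (fun k => k < j) = Finset.range j := by
        ext k
        simp only [Finset.mem_filter, Finset.mem_range]
        omega
      rw [this]
    have hvecmem : ∀ ω, ((fun i : {x // x ∈ Finset.range s} => X i ω) ∈ B) ↔ ω ∈ A s := by
      intro ω
      simp only [hBdef, hAdef, Set.mem_setOf_eq]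
      rw [hGid s le_rfl ω]
      constructor
      · rintro ⟨h1, h2⟩
        exact ⟨h1, fun j hj => by rw [← hGid j hj.le ω]; exact h2 j hj⟩
      · rintro ⟨h1, h2⟩
        exact ⟨h1, fun j hj => by rw [hGid j hj.le ω]; exact h2 j hj⟩
    have hgeq : g = phi ∘ (fun ω (i : {x // x ∈ Finset.range s}) => X i ω) := by
      funext ω
      simp only [Function.comp_apply, hphidef, hgdef]
      rw [hGid s le_rfl ω]
      congr 1
      by_cases h : ω ∈ A s
      · rw [Set.indicator_of_mem h, Set.indicator_of_mem ((hvecmem ω).mpr h)]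
      · rw [Set.indicator_of_notMem h, Set.indicator_of_notMem (fun hc => h ((hvecmem ω).mp hc))]
    have hReq : R = psi ∘ (fun ω (i : {x // x ∈ Finset.Ico s n}) => X i ω) := by
      funext ω
      simp only [Function.comp_apply, hpsidef, hRdef]
      rw [Finset.sum_coe_sort (Finset.Ico s n) (fun k => μ₀ - X k ω)]
    have hindGR : IndepFun g R μ := by
      rw [hgeq, hReq]
      exact base.comp hphimeas hpsimeas
    -- ∫ R ≥ 1
    have hZint1 : ∀ k, Integrable (fun ω => μ₀ - X k ω) μ := fun k =>
      (integrable_const μ₀).sub (hXint k)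
    have hZint : ∀ (F : Finset ℕ), Integrable (fun ω => ∑ k ∈ F, (μ₀ - X k ω)) μ :=
      fun F => integrable_finset_sum F (fun k _ => hZint1 k)
    have hRone : 1 ≤ ∫ ω, R ω ∂μ := by
      have hpt : ∀ ω, 1 + l * (∑ k ∈ Finset.Ico s n, (μ₀ - X k ω)) ≤ R ω := by
        intro ω
        have := Real.add_one_le_exp (l * ∑ k ∈ Finset.Ico s n, (μ₀ - X k ω))
        simp only [hRdef]
        linarith
      have h1int : Integrable (fun ω => 1 + l * (∑ k ∈ Finset.Ico s n, (μ₀ - X k ω))) μ :=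
        (integrable_const 1).add ((hZint (Finset.Ico s n)).const_mul l)
      have heval : ∫ ω, (1 + l * (∑ k ∈ Finset.Ico s n, (μ₀ - X k ω))) ∂μ = 1 := by
        have hzero : ∀ k ∈ Finset.Ico s n, ∫ ω, (μ₀ - X k ω) ∂μ = 0 := by
          intro k _
          rw [integral_sub (integrable_const μ₀) (hXint k)]
          simp [hmean k]
        rw [integral_add (integrable_const 1) ((hZint (Finset.Ico s n)).const_mul l),
          integral_const_mul, integral_finset_sum _ (fun k _ => hZint1 k),
          Finset.sum_congr rfl hzero]
        simp
      rw [← heval]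
      exact integral_mono h1int hRint hpt
    -- lower bound on ∫ g
    have hglow : Real.exp (l*t) * (μ (A s)).toReal ≤ ∫ ω, g ω ∂μ := by
      have hpt : ∀ ω, Set.indicator (A s) (fun _ => Real.exp (l*t)) ω ≤ g ω := by
        intro ω
        by_cases h : ω ∈ A s
        · rw [Set.indicator_of_mem h]
          simp only [hgdef, Set.indicator_of_mem h, one_mul]
          apply Real.exp_le_exp.mpr
          have := h.1
          apply mul_le_mul_of_nonneg_left this hl.le
        · rw [Set.indicator_of_notMem h]
          exact hgnn ω
      have hindint : Integrable (Set.indicator (A s) (fun _ => Real.exp (l*t))) μ :=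
        (integrable_const _).indicator (hAmeas s)
      have heval : ∫ ω, Set.indicator (A s) (fun _ => Real.exp (l*t)) ω ∂μ =
          Real.exp (l*t) * (μ (A s)).toReal := by
        rw [integral_indicator_const _ (hAmeas s)]
        simp [mul_comm, Measure.real]
      rw [← heval]
      exact integral_mono hindint hgint hpt
    -- put together
    have hprod : ∫ ω, g ω * R ω ∂μ = (∫ ω, g ω ∂μ) * ∫ ω, R ω ∂μ := by
      have := hindGR.integral_mul_eq_mul_integral hgmeas.aestronglyMeasurable hRmeas.aestronglyMeasurable
      simpa [Pi.mul_apply] using this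
    have hcombine : g * R = fun ω => Set.indicator (A s) (fun _ => (1:ℝ)) ω *
        Real.exp (l * S n ω) := by
      funext ω
      simp only [Pi.mul_apply, hgdef, hRdef]
      have hsum : S s ω + ∑ k ∈ Finset.Ico s n, (μ₀ - X k ω) = S n ω := by
        simp only [hSdef]
        rw [Finset.range_eq_Ico, Finset.range_eq_Ico]
        exact Finset.sum_Ico_consecutive _ (Nat.zero_le s) hsn
      rw [mul_assoc, ← Real.exp_add, ← mul_add, hsum]
    have hginteg_nonneg : 0 ≤ ∫ ω, g ω ∂μ := integral_nonneg hgnn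
    calc Real.exp (l*t) * (μ (A s)).toReal ≤ ∫ ω, g ω ∂μ := hglow
      _ ≤ (∫ ω, g ω ∂μ) * ∫ ω, R ω ∂μ := le_mul_of_one_le_right hginteg_nonneg hRone
      _ = ∫ ω, g ω * R ω ∂μ := hprod.symm
      _ = ∫ ω, Set.indicator (A s) (fun _ => (1:ℝ)) ω * Real.exp (l * S n ω) ∂μ := by
          rw [← hcombine]
          rfl
  -- sum the per-s inequalities
  have hexpint : Integrable (fun ω => Real.exp (l * S n ω)) μ := by
    apply Integrable.mono' (integrable_const (Real.exp (l*n)))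
      (Real.measurable_exp.comp ((hSmeas n).const_mul l)).aestronglyMeasurable
    exact Filter.Eventually.of_forall fun ω => by
      simp only [Function.comp_apply]
      rw [Real.norm_eq_abs, abs_of_pos (Real.exp_pos _)]
      apply Real.exp_le_exp.mpr
      exact mul_le_mul_of_nonneg_left (hSle n ω) hl.le
  have hsum1 : ∑ s ∈ Finset.Icc 1 n, (∫ ω, Set.indicator (A s) (fun _ => (1:ℝ)) ω *
      Real.exp (l * S n ω) ∂μ) ≤ ∫ ω, Real.exp (l * S n ω) ∂μ := by
    have heach : ∀ s, (fun ω => Set.indicator (A s) (fun _ => (1:ℝ)) ω *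
        Real.exp (l * S n ω)) = Set.indicator (A s) (fun ω => Real.exp (l * S n ω)) := by
      intro s
      funext ω
      by_cases h : ω ∈ A s
      · rw [Set.indicator_of_mem h, Set.indicator_of_mem h, one_mul]
      · rw [Set.indicator_of_notMem h, Set.indicator_of_notMem h, zero_mul]
    have hrw : ∀ s, ∫ ω, Set.indicator (A s) (fun _ => (1:ℝ)) ω * Real.exp (l * S n ω) ∂μ
        = ∫ ω in A s, Real.exp (l * S n ω) ∂μ := by
      intro s
      rw [show (fun ω => Set.indicator (A s) (fun _ => (1:ℝ)) ω * Real.exp (l * S n ω)) =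
        Set.indicator (A s) (fun ω => Real.exp (l * S n ω)) from heach s] at *
      exact integral_indicator (hAmeas s)
    calc ∑ s ∈ Finset.Icc 1 n, (∫ ω, Set.indicator (A s) (fun _ => (1:ℝ)) ω *
          Real.exp (l * S n ω) ∂μ)
        = ∑ s ∈ Finset.Icc 1 n, ∫ ω in A s, Real.exp (l * S n ω) ∂μ :=
          Finset.sum_congr rfl (fun s _ => hrw s)
      _ = ∫ ω in ⋃ s ∈ Finset.Icc 1 n, A s, Real.exp (l * S n ω) ∂μ :=
          (integral_biUnion_finset (Finset.Icc 1 n) (fun s _ => hAmeas s) hdisj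
            (fun s _ => hexpint.integrableOn)).symm
      _ ≤ ∫ ω, Real.exp (l * S n ω) ∂μ :=
          setIntegral_le_integral hexpint
            (Filter.Eventually.of_forall fun ω => (Real.exp_pos _).le)
  -- MGF product bound
  have hprodbound : ∀ N : ℕ, ∫ ω, Real.exp (l * S N ω) ∂μ ≤ Real.exp (N * (l^2/8)) := by
    intro N
    induction N with
    | zero => simp [hSdef]
    | succ N ih =>
      set Y : ℕ → Ω → ℝ := fun k ω => Real.exp (l*(μ₀ - X k ω)) with hYdef
      have hYmeas : ∀ k, Measurable (Y k) := fun k =>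
        Real.measurable_exp.comp ((measurable_const.sub (hmeas k)).const_mul l)
      have hYindep : iIndepFun Y μ := by
        apply hindep.comp (g := fun _k (x : ℝ) => Real.exp (l*(μ₀ - x)))
        intro k
        exact Real.measurable_exp.comp ((measurable_const.sub measurable_id).const_mul l)
      have hexpand : ∀ (M : ℕ) ω, Real.exp (l * S M ω) = ∏ k ∈ Finset.range M, Y k ω := by
        intro M ω
        simp only [hSdef, hYdef, Finset.mul_sum, Real.exp_sum]
      have hindYY := hYindep.indepFun_prod_range_succ hYmeas N
      have hYnn : (0 : Ω → ℝ) ≤ ∏ k ∈ Finset.range N, Y k := by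
        intro ω
        rw [Finset.prod_apply]
        exact Finset.prod_nonneg fun k _ => (Real.exp_pos _).le
      have hYNnn : (0 : Ω → ℝ) ≤ Y N := fun ω => (Real.exp_pos _).le
      have hprodmeas : Measurable (∏ k ∈ Finset.range N, Y k) := by
        have : (∏ k ∈ Finset.range N, Y k) = fun ω => ∏ k ∈ Finset.range N, Y k ω := by
          funext ω; rw [Finset.prod_apply]
        rw [this]
        exact Finset.measurable_prod _ (fun k _ => hYmeas k)
      have hsplit := hindYY.integral_mul_eq_mul_integral
        hprodmeas.aestronglyMeasurable (hYmeas N).aestronglyMeasurable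
      have hsplit2 : ∫ ω, (∏ c ∈ Finset.range N, Y c ω) * Y N ω ∂μ =
          (∫ ω, ∏ c ∈ Finset.range N, Y c ω ∂μ) * ∫ ω, Y N ω ∂μ := by
        have h1 : (fun ω => (∏ c ∈ Finset.range N, Y c ω) * Y N ω) =
            ((∏ j ∈ Finset.range N, Y j) * Y N) := by
          funext ω; rw [Pi.mul_apply, Finset.prod_apply]
        have h2 : (fun ω => ∏ c ∈ Finset.range N, Y c ω) = (∏ j ∈ Finset.range N, Y j) := by
          funext ω; rw [Finset.prod_apply]
        rw [h1, h2]
        exact hsplit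
      have hYNbound : ∫ ω, Y N ω ∂μ ≤ Real.exp (l^2/8) :=
        moss_mgf μ (X N) (hmeas N) (hbound N) μ₀ (hmean N) l hl.le
      have hYNpos : 0 ≤ ∫ ω, Y N ω ∂μ := integral_nonneg hYNnn
      calc ∫ ω, Real.exp (l * S (N+1) ω) ∂μ
          = ∫ ω, (∏ c ∈ Finset.range N, Y c ω) * Y N ω ∂μ := by
            congr 1
            funext ω
            rw [hexpand (N+1) ω, Finset.prod_range_succ]
        _ = (∫ ω, ∏ c ∈ Finset.range N, Y c ω ∂μ) * ∫ ω, Y N ω ∂μ := hsplit2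
        _ ≤ Real.exp (N * (l^2/8)) * Real.exp (l^2/8) := by
            apply mul_le_mul _ hYNbound hYNpos (Real.exp_pos _).le
            calc ∫ ω, ∏ c ∈ Finset.range N, Y c ω ∂μ
                = ∫ ω, Real.exp (l * S N ω) ∂μ := by
                  congr 1
                  funext ω
                  rw [hexpand N ω]
              _ ≤ Real.exp (N * (l^2/8)) := ih
        _ = Real.exp (((N+1 : ℕ) : ℝ) * (l^2/8)) := by
            rw [← Real.exp_add]
            congr 1
            push_cast
            ring
  -- final assembly
  have hfinal : (μ {ω | ∃ s, 1 ≤ s ∧ s ≤ n ∧ t ≤ S s ω}).toReal ≤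
      Real.exp (-2*t^2/(n:ℝ)) := by
    have htoReal : (μ {ω | ∃ s, 1 ≤ s ∧ s ≤ n ∧ t ≤ S s ω}).toReal =
        ∑ s ∈ Finset.Icc 1 n, (μ (A s)).toReal := by
      rw [hmeq, ENNReal.toReal_sum]
      intro s _
      exact measure_ne_top μ _
    have hchain : Real.exp (l*t) * ∑ s ∈ Finset.Icc 1 n, (μ (A s)).toReal ≤
        Real.exp ((n:ℝ) * (l^2/8)) := by
      rw [Finset.mul_sum]
      calc ∑ s ∈ Finset.Icc 1 n, Real.exp (l*t) * (μ (A s)).toReal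
          ≤ ∑ s ∈ Finset.Icc 1 n, (∫ ω, Set.indicator (A s) (fun _ => (1:ℝ)) ω *
              Real.exp (l * S n ω) ∂μ) := Finset.sum_le_sum hkey
        _ ≤ ∫ ω, Real.exp (l * S n ω) ∂μ := hsum1
        _ ≤ Real.exp ((n:ℝ) * (l^2/8)) := hprodbound n
    rw [htoReal]
    have hexplt : (0:ℝ) < Real.exp (l*t) := Real.exp_pos _
    rw [← le_div_iff₀' hexplt] at hchain
    refine hchain.trans ?_
    rw [div_eq_mul_inv, ← Real.exp_neg, ← Real.exp_add]
    apply Real.exp_le_exp.mpr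
    have : (n:ℝ) * (l^2/8) + -(l*t) = -2*t^2/(n:ℝ) := by
      rw [hldef]
      field_simp
      ring
    rw [this]
  exact (ENNReal.le_ofReal_iff_toReal_le (measure_ne_top μ _) (Real.exp_pos _).le).mpr hfinal

lemma moss_growth (N : ℕ) : (N:ℝ) < (3/2)^(N+1) := by
  induction N with
  | zero => norm_num
  | succ k ih =>
    rcases Nat.eq_zero_or_pos k with rfl | hk
    · norm_num
    · have hb := one_add_mul_le_pow (by norm_num : (-2:ℝ) ≤ 1/2) (k+1)
      have h32 : ((1:ℝ) + 1/2)^(k+1) = (3/2)^(k+1) := by norm_num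
      rw [h32] at hb
      push_cast at hb ⊢
      have hk1 : (1:ℝ) ≤ (k:ℝ) := by exact_mod_cast hk
      rw [show ((3:ℝ)/2)^(k+1+1) = (3/2)^(k+1)*(3/2) from pow_succ _ _]
      nlinarith [ih]

set_option maxHeartbeats 2000000 in
/-- **MOSS anytime confidence-bound tail.** Let `(X k)` be i.i.d. `[0,1]`-valued with mean `μ₀`,
`X̄ s` the empirical mean of the first `s` samples, `M, T > 0` reals, `m ≥ 1`, and
`ζ = μ₀ - min_{1 ≤ s ≤ m} (X̄ s + √((2/s)·max(log(T/(M·s)), 0)))`.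
Then for every `y > 0`, `P(ζ > y) ≤ (9/y² + 6/y⁴)·M²/T²`. -/
theorem moss_confidence_tail
    {Ω : Type*} [MeasurableSpace Ω] (μ : Measure Ω) [IsProbabilityMeasure μ]
    (X : ℕ → Ω → ℝ) (μ₀ : ℝ)
    (hmeas : ∀ k, Measurable (X k))
    (hindep : iIndepFun X μ)
    (hident : ∀ k l, IdentDistrib (X k) (X l) μ μ)
    (hbound : ∀ k ω, X k ω ∈ Set.Icc (0 : ℝ) 1)
    (hmean : ∀ k, ∫ ω, X k ω ∂μ = μ₀)
    (M T : ℝ) (hM : 0 < M) (hT : 0 < T)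
    (m : ℕ) (hm : 1 ≤ m)
    (y : ℝ) (hy : 0 < y) :
    (μ {ω | y < μ₀ - (Finset.Icc 1 m).inf' (Finset.nonempty_Icc.mpr hm)
        (fun s => (∑ k ∈ Finset.range s, X k ω) / s +
          Real.sqrt ((2 / s) * max (Real.log (T / (M * s))) 0))}).toReal
      ≤ (9 / y ^ 2 + 6 / y ^ 4) * (M ^ 2 / T ^ 2) := by
  classical
  have hμ1 : μ₀ ≤ 1 := by
    rw [← hmean 0]
    calc ∫ ω, X 0 ω ∂μ ≤ ∫ _ω, (1:ℝ) ∂μ :=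
          integral_mono_of_nonneg (Filter.Eventually.of_forall fun ω => (hbound 0 ω).1)
            (integrable_const 1) (Filter.Eventually.of_forall fun ω => (hbound 0 ω).2)
      _ = 1 := by simp
  -- if y ≥ 1, the event is empty
  by_cases hy1 : 1 ≤ y
  · have hempty : {ω | y < μ₀ - (Finset.Icc 1 m).inf' (Finset.nonempty_Icc.mpr hm)
        (fun s => (∑ k ∈ Finset.range s, X k ω) / s +
          Real.sqrt ((2 / s) * max (Real.log (T / (M * s))) 0))} = (∅ : Set Ω) := by
      ext ω
      simp only [Set.mem_setOf_eq, Set.mem_empty_iff_false, iff_false, not_lt]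
      have hinf : (0:ℝ) ≤ (Finset.Icc 1 m).inf' (Finset.nonempty_Icc.mpr hm)
          (fun s => (∑ k ∈ Finset.range s, X k ω) / s +
            Real.sqrt ((2 / s) * max (Real.log (T / (M * s))) 0)) := by
        apply Finset.le_inf'
        intro s hs
        have h1 : (0:ℝ) ≤ (∑ k ∈ Finset.range s, X k ω) / s := by
          apply div_nonneg _ (Nat.cast_nonneg s)
          exact Finset.sum_nonneg fun k _ => (hbound k ω).1
        have h2 : (0:ℝ) ≤ Real.sqrt ((2 / s) * max (Real.log (T / (M * s))) 0) :=
          Real.sqrt_nonneg _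
        linarith
      linarith
    rw [hempty]
    simp only [measure_empty, ENNReal.toReal_zero]
    positivity
  push_neg at hy1
  -- notation
  set nj : ℕ → ℕ := fun j => ⌊((3:ℝ)/2)^(j+1)⌋₊ with hnj
  set Lj : ℕ → ℝ := fun j => max (Real.log (T/(M*((3:ℝ)/2)^(j+1)))) 0 with hLj
  set tj : ℕ → ℝ := fun j => ((3:ℝ)/2)^j*y + Real.sqrt (2*((3:ℝ)/2)^j * Lj j) with htj
  have hLjnn : ∀ j, 0 ≤ Lj j := fun j => le_max_right _ _
  have htjpos : ∀ j, 0 < tj j := by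
    intro j
    have h1 : (0:ℝ) < ((3:ℝ)/2)^j*y := by positivity
    have h2 : (0:ℝ) ≤ Real.sqrt (2*((3:ℝ)/2)^j * Lj j) := Real.sqrt_nonneg _
    simp only [htj]
    linarith
  have hnj1 : ∀ j, 1 ≤ nj j := by
    intro j
    apply Nat.le_floor
    have : (1:ℝ) ≤ ((3:ℝ)/2)^(j+1) := one_le_pow₀ (by norm_num)
    exact_mod_cast this
  -- event inclusion
  have hsubset : {ω | y < μ₀ - (Finset.Icc 1 m).inf' (Finset.nonempty_Icc.mpr hm)
        (fun s => (∑ k ∈ Finset.range s, X k ω) / s +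
          Real.sqrt ((2 / s) * max (Real.log (T / (M * s))) 0))} ⊆
      ⋃ j ∈ Finset.range (m+1),
        {ω | ∃ s, 1 ≤ s ∧ s ≤ nj j ∧ tj j ≤ ∑ k ∈ Finset.range s, (μ₀ - X k ω)} := by
    intro ω hω
    simp only [Set.mem_setOf_eq] at hω
    have hinf : (Finset.Icc 1 m).inf' (Finset.nonempty_Icc.mpr hm)
        (fun s => (∑ k ∈ Finset.range s, X k ω) / s +
          Real.sqrt ((2 / s) * max (Real.log (T / (M * s))) 0)) < μ₀ - y := by linarith
    obtain ⟨s, hsmem, hbad⟩ := (Finset.inf'_lt_iff _).mp hinf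
    obtain ⟨hs1, hsm⟩ := Finset.mem_Icc.mp hsmem
    have hscast : (0:ℝ) < (s:ℝ) := by exact_mod_cast hs1
    -- choose block index
    set J : ℕ := Nat.findGreatest (fun j => ((3:ℝ)/2)^j ≤ (s:ℝ)) m with hJ
    have hs1' : (1:ℝ) ≤ (s:ℝ) := by exact_mod_cast hs1
    have hJle : ((3:ℝ)/2)^J ≤ (s:ℝ) :=
      Nat.findGreatest_spec (P := fun j => ((3:ℝ)/2)^j ≤ (s:ℝ)) (Nat.zero_le m)
        (by simpa using hs1')
    have hJm : J ≤ m := Nat.findGreatest_le m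
    have hJlt : (s:ℝ) < ((3:ℝ)/2)^(J+1) := by
      by_cases hJm1 : J + 1 ≤ m
      · have := Nat.findGreatest_is_greatest (Nat.lt_succ_self J) hJm1
        push_neg at this
        exact this
      · have hJm' : J = m := by omega
        have hsm' : (s:ℝ) ≤ (m:ℝ) := by exact_mod_cast hsm
        calc (s:ℝ) ≤ (m:ℝ) := hsm'
          _ < (3/2)^(m+1) := moss_growth m
          _ = (3/2)^(J+1) := by rw [hJm']
    -- derive the sum lower bound
    set Ls : ℝ := max (Real.log (T/(M*(s:ℝ)))) 0 with hLs
    have hLsnn : 0 ≤ Ls := le_max_right _ _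
    have hsum : (s:ℝ)*y + Real.sqrt (2*(s:ℝ)*Ls) ≤ ∑ k ∈ Finset.range s, (μ₀ - X k ω) := by
      have hexp : ∑ k ∈ Finset.range s, (μ₀ - X k ω) =
          (s:ℝ)*μ₀ - ∑ k ∈ Finset.range s, X k ω := by
        rw [Finset.sum_sub_distrib, Finset.sum_const, Finset.card_range, nsmul_eq_mul]
      have h2 : (∑ k ∈ Finset.range s, X k ω) <
          (μ₀ - y - Real.sqrt ((2/(s:ℝ))*Ls)) * s := by
        rw [← div_lt_iff₀ hscast]
        have : (∑ k ∈ Finset.range s, X k ω)/(s:ℝ) + Real.sqrt ((2/(s:ℝ))*Ls) < μ₀ - y := hbad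
        linarith
      have hssqrt : (s:ℝ) * Real.sqrt ((2/(s:ℝ))*Ls) = Real.sqrt (2*(s:ℝ)*Ls) := by
        rw [show (2*(s:ℝ)*Ls) = (s:ℝ)^2 * ((2/(s:ℝ))*Ls) by field_simp]
        rw [Real.sqrt_mul (sq_nonneg _), Real.sqrt_sq hscast.le]
      rw [hexp]
      nlinarith [h2, hssqrt]
    have htjle : tj J ≤ (s:ℝ)*y + Real.sqrt (2*(s:ℝ)*Ls) := by
      have hp1 : ((3:ℝ)/2)^J * y ≤ (s:ℝ)*y := mul_le_mul_of_nonneg_right hJle hy.le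
      have hdiv : T/(M*((3:ℝ)/2)^(J+1)) ≤ T/(M*(s:ℝ)) := by
        rw [div_le_div_iff₀ (by positivity) (by positivity)]
        have := mul_le_mul_of_nonneg_left hJlt.le (mul_nonneg hT.le hM.le)
        linarith
      have hL : Lj J ≤ Ls := by
        simp only [hLj, hLs]
        exact max_le_max (Real.log_le_log (by positivity) hdiv) le_rfl
      have hp2 : Real.sqrt (2*((3:ℝ)/2)^J * Lj J) ≤ Real.sqrt (2*(s:ℝ)*Ls) := by
        apply Real.sqrt_le_sqrt
        nlinarith [mul_le_mul_of_nonneg_right hJle (hLjnn J),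
          mul_le_mul_of_nonneg_left hL (by positivity : (0:ℝ) ≤ 2*(s:ℝ))]
      simp only [htj]
      exact add_le_add hp1 hp2
    simp only [Set.mem_iUnion, Set.mem_setOf_eq]
    exact ⟨J, Finset.mem_range.mpr (by omega), s, hs1, Nat.le_floor hJlt.le,
      le_trans htjle hsum⟩
  -- measure bound via maximal inequality per block
  set c : ℕ → ℝ := fun j => (9/4)*(((3:ℝ)/2)^j)^2*(M^2/T^2)*Real.exp (-(4/3*y^2*(3/2)^j))
    with hc
  have hcnn : ∀ j, 0 ≤ c j := fun j => by simp only [hc]; positivity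
  have hexpj : ∀ j, Real.exp (-2*(tj j)^2/((nj j : ℕ):ℝ)) ≤ c j := by
    intro j
    set P : ℝ := ((3:ℝ)/2)^j with hP
    have hPpos : 0 < P := by positivity
    have hnfl : ((nj j : ℕ):ℝ) ≤ P*(3/2) := by
      have := Nat.floor_le (le_of_lt (by positivity : (0:ℝ) < ((3:ℝ)/2)^(j+1)))
      calc ((nj j : ℕ):ℝ) ≤ ((3:ℝ)/2)^(j+1) := this
        _ = P*(3/2) := by rw [hP, pow_succ]
    have hnpos : (0:ℝ) < ((nj j : ℕ):ℝ) := by exact_mod_cast hnj1 j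
    have hsq : (Real.sqrt (2*P*Lj j))^2 = 2*P*Lj j := Real.sq_sqrt (by positivity)
    have htsq : (tj j)^2 ≥ P^2*y^2 + 2*P*Lj j := by
      have h0 : tj j = P*y + Real.sqrt (2*P*Lj j) := by rw [htj]
      rw [h0]
      nlinarith [Real.sqrt_nonneg (2*P*Lj j), mul_nonneg (mul_nonneg hPpos.le hy.le)
        (Real.sqrt_nonneg (2*P*Lj j)), hsq]
    have hstep1 : -2*(tj j)^2/((nj j : ℕ):ℝ) ≤ -(4/3*y^2*P + 2*Lj j) := by
      have hA : (4/3*y^2*P + 2*Lj j) * (P*(3/2)) ≤ 2*(tj j)^2 := by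
        have hexpand : (4/3*y^2*P + 2*Lj j) * (P*(3/2)) = 2*y^2*P^2 + 3*(Lj j*P) := by ring
        rw [hexpand]
        have hLP : 0 ≤ Lj j * P := mul_nonneg (hLjnn j) hPpos.le
        linarith [htsq]
      have hB : (4/3*y^2*P + 2*Lj j) ≤ 2*(tj j)^2/(P*(3/2)) :=
        (le_div_iff₀ (by positivity)).mpr hA
      have hC : 2*(tj j)^2/(P*(3/2)) ≤ 2*(tj j)^2/((nj j : ℕ):ℝ) := by
        apply div_le_div_of_nonneg_left (by positivity) hnpos hnfl
      have hD : -2*(tj j)^2/((nj j : ℕ):ℝ) = -(2*(tj j)^2/((nj j : ℕ):ℝ)) := by ring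
      rw [hD]
      linarith
    have hstep2 : Real.exp (-2*(tj j)^2/((nj j : ℕ):ℝ)) ≤
        Real.exp (-(4/3*y^2*P))*Real.exp (-(2*Lj j)) := by
      rw [← Real.exp_add]
      apply Real.exp_le_exp.mpr
      have := hstep1
      linarith
    have hexp2 : Real.exp (-(2*Lj j)) ≤ (9/4)*P^2*(M^2/T^2) := by
      have hrpos : (0:ℝ) < T/(M*((3:ℝ)/2)^(j+1)) := by positivity
      have hQ : ((3:ℝ)/2)^(j+1) = P*(3/2) := by rw [hP, pow_succ]
      rcases le_or_gt (Real.log (T/(M*((3:ℝ)/2)^(j+1)))) 0 with hlog | hlog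
      · have hL0 : Lj j = 0 := by simp only [hLj]; exact max_eq_right hlog
        rw [hL0]
        simp only [mul_zero, neg_zero, Real.exp_zero]
        have hr1 : T/(M*((3:ℝ)/2)^(j+1)) ≤ 1 := (Real.log_nonpos_iff hrpos.le).mp hlog
        have hTle : T ≤ M*(P*(3/2)) := by
          rw [div_le_one (by positivity)] at hr1
          rw [← hQ]
          exact hr1
        have hT2 : T^2 ≤ (9/4)*P^2*M^2 := by nlinarith [hT.le, hM.le, hPpos.le]
        rw [show (9/4)*P^2*(M^2/T^2) = ((9/4)*P^2*M^2)/T^2 by ring]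
        rw [le_div_iff₀ (by positivity)]
        linarith
      · have hL1 : Lj j = Real.log (T/(M*((3:ℝ)/2)^(j+1))) := by
          simp only [hLj]; exact max_eq_left hlog.le
        rw [hL1]
        have h1 : Real.exp (-(2*Real.log (T/(M*((3:ℝ)/2)^(j+1))))) =
            1/((T/(M*((3:ℝ)/2)^(j+1)))^2) := by
          rw [Real.exp_neg]
          rw [show 2*Real.log (T/(M*((3:ℝ)/2)^(j+1)))
              = Real.log ((T/(M*((3:ℝ)/2)^(j+1)))^2) by
            rw [Real.log_pow]; push_cast; ring]
          rw [Real.exp_log (by positivity)]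
          rw [one_div]
        rw [h1, hQ]
        apply le_of_eq
        field_simp
        ring
    calc Real.exp (-2*(tj j)^2/((nj j : ℕ):ℝ))
        ≤ Real.exp (-(4/3*y^2*P))*Real.exp (-(2*Lj j)) := hstep2
      _ ≤ Real.exp (-(4/3*y^2*P)) * ((9/4)*P^2*(M^2/T^2)) :=
          mul_le_mul_of_nonneg_left hexp2 (Real.exp_pos _).le
      _ = c j := by simp only [hc, hP]; ring
  -- measure chain
  have hmax : ∀ j, μ {ω | ∃ s, 1 ≤ s ∧ s ≤ nj j ∧
      tj j ≤ ∑ k ∈ Finset.range s, (μ₀ - X k ω)} ≤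
      ENNReal.ofReal (Real.exp (-2*(tj j)^2/((nj j : ℕ):ℝ))) :=
    fun j => moss_maximal μ X μ₀ hmeas hindep hbound hmean (nj j) (hnj1 j) (tj j) (htjpos j)
  have h3 : μ {ω | y < μ₀ - (Finset.Icc 1 m).inf' (Finset.nonempty_Icc.mpr hm)
        (fun s => (∑ k ∈ Finset.range s, X k ω) / s +
          Real.sqrt ((2 / s) * max (Real.log (T / (M * s))) 0))} ≤
      ENNReal.ofReal (∑ j ∈ Finset.range (m+1), c j) := by
    calc μ _ ≤ μ (⋃ j ∈ Finset.range (m+1),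
          {ω | ∃ s, 1 ≤ s ∧ s ≤ nj j ∧ tj j ≤ ∑ k ∈ Finset.range s, (μ₀ - X k ω)}) :=
          measure_mono hsubset
      _ ≤ ∑ j ∈ Finset.range (m+1), μ {ω | ∃ s, 1 ≤ s ∧ s ≤ nj j ∧
            tj j ≤ ∑ k ∈ Finset.range s, (μ₀ - X k ω)} := measure_biUnion_finset_le _ _
      _ ≤ ∑ j ∈ Finset.range (m+1),
            ENNReal.ofReal (Real.exp (-2*(tj j)^2/((nj j : ℕ):ℝ))) :=
          Finset.sum_le_sum fun j _ => hmax j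
      _ ≤ ∑ j ∈ Finset.range (m+1), ENNReal.ofReal (c j) :=
          Finset.sum_le_sum fun j _ => ENNReal.ofReal_le_ofReal (hexpj j)
      _ = ENNReal.ofReal (∑ j ∈ Finset.range (m+1), c j) :=
          (ENNReal.ofReal_sum_of_nonneg (fun j _ => hcnn j)).symm
  have hmeasure := ENNReal.toReal_le_of_le_ofReal
    (Finset.sum_nonneg fun j _ => hcnn j) h3
  refine hmeasure.trans ?_
  -- final arithmetic via the series bound
  have hb0 : (0:ℝ) < 4/3*y^2 := by positivity
  have hb2 : (4:ℝ)/3*y^2 ≤ 2 := by nlinarith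
  have hser := mossSeries_main (m+1) (4/3*y^2) hb0 hb2
  have hterm : ∀ j, c j = (M^2/T^2)*((81/64)/y^4) * mossHf ((4/3*y^2)*(3/2)^j) := by
    intro j
    simp only [hc]
    unfold mossHf
    have hy0 : y ≠ 0 := hy.ne'
    field_simp
    ring
  rw [Finset.sum_congr rfl (fun j _ => hterm j), ← Finset.mul_sum]
  have key : (81/64:ℝ)*(17/5) ≤ 6 := by norm_num
  calc (M^2/T^2)*((81/64)/y^4) * ∑ j ∈ Finset.range (m+1), mossHf ((4/3*y^2)*(3/2)^j)
      ≤ (M^2/T^2)*((81/64)/y^4) * (17/5) :=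
        mul_le_mul_of_nonneg_left hser (by positivity)
    _ = ((81/64)*(17/5))*((M^2/T^2)/y^4) := by ring
    _ ≤ 6*((M^2/T^2)/y^4) := mul_le_mul_of_nonneg_right key (by positivity)
    _ = 6/y^4*(M^2/T^2) := by ring
    _ ≤ (9/y^2+6/y^4)*(M^2/T^2) := by
        apply mul_le_mul_of_nonneg_right _ (by positivity)
        have h9 : (0:ℝ) ≤ 9/y^2 := by positivity
        linarith
end

section
/- Expected MOSS underestimation bound: Let (X_k)_{k≥1} be i.i.d. random variables with X_k ∈ [0,1] and mean μ, and let X̄_s = (1/s)Σ_{k=1}^{s} X_k. Let M and T be reals with 0 < M ≤ T, m ≥ 1 an integer, and define ζ = μ − min_{1 ≤ s ≤ m} ( X̄_s + √( (2/s)·max( log(T/(M·s)), 0 ) ) ). Then E[max(ζ, 0)] ≤ 3√(M/T) + 6M/T. -/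
open MeasureTheory ProbabilityTheory

namespace MossAux

open Real

/-- Calculus core of Hoeffding's lemma. -/
lemma psi_le (c : ℝ) (hc1 : -1 ≤ c) (hc2 : c ≤ 1) (u : ℝ) (hu : 0 ≤ u) :
    ((1+c) * exp u + (1-c) * exp (-u)) / 2 ≤ exp (c*u + u^2/2) := by
  set ψ : ℝ → ℝ := fun v => ((1+c) * exp v + (1-c) * exp (-v)) / 2 with hψdef
  set ψ' : ℝ → ℝ := fun v => ((1+c) * exp v - (1-c) * exp (-v)) / 2 with hψ'def
  have hψpos : ∀ v, 0 < ψ v := by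
    intro v
    rcases lt_or_ge c 1 with h | h
    · have h1 := exp_pos v
      have h2 := exp_pos (-v)
      have : (0:ℝ) ≤ (1+c) * exp v := by nlinarith
      have : (0:ℝ) < (1-c) * exp (-v) := by nlinarith
      simp only [hψdef]
      linarith
    · have hc : c = 1 := le_antisymm hc2 h
      subst hc
      simp only [hψdef]
      have := exp_pos v
      norm_num
      linarith
  -- derivative facts
  have hdexpneg : ∀ v : ℝ, HasDerivAt (fun w => exp (-w)) (-exp (-v)) v := by
    intro v
    simpa using (hasDerivAt_neg v).exp
  have hdψ : ∀ v, HasDerivAt ψ (ψ' v) v := by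
    intro v
    have h1 := ((Real.hasDerivAt_exp v).const_mul (1+c)).add ((hdexpneg v).const_mul (1-c))
    have h2 := h1.div_const 2
    refine h2.congr_deriv ?_
    simp only [hψ'def]
    ring
  have hdψ' : ∀ v, HasDerivAt ψ' (ψ v) v := by
    intro v
    have h1 := ((Real.hasDerivAt_exp v).const_mul (1+c)).sub ((hdexpneg v).const_mul (1-c))
    have h2 := h1.div_const 2
    refine h2.congr_deriv ?_
    simp only [hψdef]
    ring
  set φ : ℝ → ℝ := fun v => c + v - ψ' v / ψ v with hφdef
  have hdφ : ∀ v, HasDerivAt φ ((ψ' v / ψ v)^2) v := by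
    intro v
    have hdiv : HasDerivAt (fun w => ψ' w / ψ w)
        ((ψ v * ψ v - ψ' v * ψ' v) / (ψ v)^2) v := (hdψ' v).div (hdψ v) (hψpos v).ne'
    have h1 := ((hasDerivAt_id v).const_add c).sub hdiv
    refine h1.congr_deriv ?_
    have h2 : ψ v ≠ 0 := (hψpos v).ne'
    field_simp
    ring
  have hφmono : Monotone φ :=
    monotone_of_deriv_nonneg (fun v => (hdφ v).differentiableAt)
      (fun v => by rw [(hdφ v).deriv]; positivity)
  have hφ0 : φ 0 = 0 := by
    simp only [hφdef, hψdef, hψ'def]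
    norm_num
  have hφnonneg : ∀ v, 0 ≤ v → 0 ≤ φ v := fun v hv => hφ0 ▸ hφmono hv
  set h : ℝ → ℝ := fun v => c*v + v^2/2 - Real.log (ψ v) with hhdef
  have hdh : ∀ v, HasDerivAt h (φ v) v := by
    intro v
    have hlog : HasDerivAt (fun w => Real.log (ψ w)) (ψ' v / ψ v) v :=
      (hdψ v).log (hψpos v).ne'
    have h1 := (((hasDerivAt_id v).const_mul c).add ((hasDerivAt_pow 2 v).div_const 2)).sub hlog
    refine h1.congr_deriv ?_
    simp only [hφdef]
    ring
  have hhmono : MonotoneOn h (Set.Ici (0:ℝ)) := by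
    apply monotoneOn_of_deriv_nonneg (convex_Ici 0)
    · exact fun v _ => (hdh v).continuousAt.continuousWithinAt
    · exact fun v _ => ((hdh v).differentiableAt).differentiableWithinAt
    · intro v hv
      rw [(hdh v).deriv]
      exact hφnonneg v (le_of_lt (by simpa using hv))
  have hh0 : h 0 = 0 := by
    simp only [hhdef, hψdef]
    norm_num
  have hhu : 0 ≤ h u := by
    have := hhmono (Set.self_mem_Ici) (Set.mem_Ici.mpr hu) hu
    rw [hh0] at this
    exact this
  have hlog : Real.log (ψ u) ≤ c*u + u^2/2 := by
    simp only [hhdef] at hhu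
    linarith
  calc ψ u ≤ exp (Real.log (ψ u)) := le_of_eq (Real.exp_log (hψpos u)).symm
    _ ≤ exp (c*u + u^2/2) := exp_le_exp.mpr hlog

/-- Hoeffding's lemma for a centered random variable in an interval of length 1. -/
lemma mgf_step {Ω : Type*} [MeasurableSpace Ω] (μ : Measure Ω) [IsProbabilityMeasure μ]
    (Y : Ω → ℝ) (hYm : Measurable Y) (a : ℝ) (ha1 : -1 ≤ a) (ha2 : a ≤ 0)
    (hY : ∀ ω, Y ω ∈ Set.Icc a (a+1)) (hY0 : ∫ ω, Y ω ∂μ = 0) (t : ℝ) (ht : 0 ≤ t) :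
    ∫ ω, exp (t * Y ω) ∂μ ≤ exp (t^2/8) := by
  have hYbd : ∀ ω, |Y ω| ≤ 1 := by
    intro ω
    have h := hY ω
    rw [abs_le]
    constructor <;> [linarith [h.1]; linarith [h.2]]
  have hYint : Integrable Y μ := by
    refine (integrable_const (1:ℝ)).mono' hYm.aestronglyMeasurable ?_
    exact Filter.Eventually.of_forall fun ω => by simpa using hYbd ω
  -- chord bound
  have chord : ∀ ω, exp (t * Y ω) ≤
      ((a+1) * exp (t*a) - a * exp (t*(a+1))) + Y ω * (exp (t*(a+1)) - exp (t*a)) := by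
    intro ω
    have hY1 := (hY ω).1
    have hY2 := (hY ω).2
    have hα : (0:ℝ) ≤ a + 1 - Y ω := by linarith
    have hβ : (0:ℝ) ≤ Y ω - a := by linarith
    have hαβ : (a + 1 - Y ω) + (Y ω - a) = 1 := by ring
    have hconv := convexOn_exp.2 (Set.mem_univ (t*a)) (Set.mem_univ (t*(a+1))) hα hβ hαβ
    simp only [smul_eq_mul] at hconv
    have harg : (a + 1 - Y ω) * (t*a) + (Y ω - a) * (t*(a+1)) = t * Y ω := by ring
    rw [harg] at hconv
    calc exp (t * Y ω) ≤ (a + 1 - Y ω) * exp (t*a) + (Y ω - a) * exp (t*(a+1)) := hconv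
      _ = ((a+1) * exp (t*a) - a * exp (t*(a+1))) + Y ω * (exp (t*(a+1)) - exp (t*a)) := by ring
  -- integrate
  have hint1 : Integrable (fun ω => exp (t * Y ω)) μ := by
    refine (integrable_const (exp t)).mono' (hYm.const_mul t).exp.aestronglyMeasurable ?_
    refine Filter.Eventually.of_forall fun ω => ?_
    rw [Real.norm_eq_abs, abs_of_pos (exp_pos _), exp_le_exp]
    calc t * Y ω ≤ t * 1 := mul_le_mul_of_nonneg_left (by linarith [(hY ω).2]) ht
      _ = t := mul_one t
  have hintRHS : Integrable (fun ω =>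
      ((a+1) * exp (t*a) - a * exp (t*(a+1))) + Y ω * (exp (t*(a+1)) - exp (t*a))) μ :=
    (integrable_const _).add (hYint.mul_const _)
  have step1 : ∫ ω, exp (t * Y ω) ∂μ ≤ (a+1) * exp (t*a) - a * exp (t*(a+1)) := by
    have h := integral_mono hint1 hintRHS chord
    rwa [integral_add (integrable_const _) (hYint.mul_const _), integral_const,
      MeasureTheory.integral_mul_const, hY0, zero_mul, add_zero, Measure.real, measure_univ, ENNReal.toReal_one,
      one_smul] at h
  -- algebra to ψ form
  set c : ℝ := -(2*a+1) with hcdef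
  set u : ℝ := t/2 with hudef
  have hc1 : -1 ≤ c := by simp only [hcdef]; linarith
  have hc2 : c ≤ 1 := by simp only [hcdef]; linarith
  have hu : 0 ≤ u := by simp only [hudef]; linarith
  have hform : (a+1) * exp (t*a) - a * exp (t*(a+1))
      = exp (-(c*u)) * (((1+c) * exp u + (1-c) * exp (-u)) / 2) := by
    have e1 : t*a = -(c*u) + -u := by simp only [hcdef, hudef]; ring
    have e2 : t*(a+1) = -(c*u) + u := by simp only [hcdef, hudef]; ring
    rw [e1, e2, Real.exp_add, Real.exp_add]
    have e3 : (1+c) = -(2*a) := by simp only [hcdef]; ring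
    have e4 : (1-c) = 2*a+2 := by simp only [hcdef]; ring
    rw [e3, e4]
    ring
  have step2 := psi_le c hc1 hc2 u hu
  calc ∫ ω, exp (t * Y ω) ∂μ ≤ (a+1) * exp (t*a) - a * exp (t*(a+1)) := step1
    _ = exp (-(c*u)) * (((1+c) * exp u + (1-c) * exp (-u)) / 2) := hform
    _ ≤ exp (-(c*u)) * exp (c*u + u^2/2) :=
        mul_le_mul_of_nonneg_left step2 (le_of_lt (exp_pos _))
    _ = exp (u^2/2) := by rw [← Real.exp_add]; ring_nf
    _ = exp (t^2/8) := by rw [hudef]; ring_nf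

/-- Ville-type maximal inequality for the exponential supermartingale, proved by an
elementary stopped-process induction. -/
lemma ville {Ω : Type*} [MeasurableSpace Ω] (μ : Measure Ω) [IsProbabilityMeasure μ]
    (X : ℕ → Ω → ℝ) (μ₀ : ℝ)
    (hmeas : ∀ k, Measurable (X k))
    (hindep : iIndepFun X μ)
    (hbound : ∀ k ω, X k ω ∈ Set.Icc (0 : ℝ) 1)
    (hmean : ∀ k, ∫ ω, X k ω ∂μ = μ₀)
    (l r : ℝ) (hl : 0 ≤ l) (n : ℕ) :
    (μ {ω | ∃ s ∈ Finset.Icc 1 n,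
        r ≤ l * (∑ k ∈ Finset.range s, (μ₀ - X k ω)) - s * l^2/8}).toReal ≤ exp (-r) := by
  classical
  -- basic facts about μ₀
  have hXint : ∀ k, Integrable (X k) μ := by
    intro k
    refine (integrable_const (1:ℝ)).mono' (hmeas k).aestronglyMeasurable ?_
    refine Filter.Eventually.of_forall fun ω => ?_
    rw [Real.norm_eq_abs, abs_le]
    exact ⟨by linarith [(hbound k ω).1], (hbound k ω).2⟩
  have hμ0 : 0 ≤ μ₀ := by
    rw [← hmean 0]
    exact integral_nonneg fun ω => (hbound 0 ω).1
  have hμ1 : μ₀ ≤ 1 := by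
    rw [← hmean 0]
    calc ∫ ω, X 0 ω ∂μ ≤ ∫ _, (1:ℝ) ∂μ :=
          integral_mono (hXint 0) (integrable_const 1) fun ω => (hbound 0 ω).2
      _ = 1 := by simp
  -- the partial sums and the exponential process
  set S : ℕ → Ω → ℝ := fun s ω => ∑ k ∈ Finset.range s, (μ₀ - X k ω) with hSdef
  have hSmeas : ∀ s, Measurable (S s) := fun s =>
    Finset.measurable_sum _ fun k _ => measurable_const.sub (hmeas k)
  have hSbd : ∀ s ω, S s ω ≤ s := by
    intro s ω
    calc S s ω ≤ ∑ k ∈ Finset.range s, (1:ℝ) :=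
          Finset.sum_le_sum fun k _ => by linarith [(hbound k ω).1, hμ1]
      _ = s := by simp
  set Mt : ℕ → Ω → ℝ := fun s ω => exp (l * S s ω - s * l^2/8) with hMdef
  have hMmeas : ∀ s, Measurable (Mt s) :=
    fun s => (((hSmeas s).const_mul l).sub measurable_const).exp
  have hMpos : ∀ s ω, 0 < Mt s ω := fun s ω => exp_pos _
  have hMbd : ∀ s ω, Mt s ω ≤ exp (l * s) := by
    intro s ω
    rw [hMdef, exp_le_exp]
    have h1 : l * S s ω ≤ l * s := mul_le_mul_of_nonneg_left (hSbd s ω) hl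
    have h2 : (0:ℝ) ≤ s * l^2/8 := by positivity
    linarith
  -- hitting and continuation sets
  set hit : ℕ → Ω → Prop := fun s ω => r ≤ l * S s ω - s * l^2/8 with hhitdef
  set C : ℕ → Set Ω := fun j => {ω | ∀ s ∈ Finset.Icc 1 j, ¬ hit s ω} with hCdef
  have hCmble : ∀ j, MeasurableSet (C j) := by
    intro j
    have : C j = ⋂ s ∈ Finset.Icc 1 j, {ω | l * S s ω - s * l^2/8 < r} := by
      ext ω
      simp only [hCdef, Set.mem_setOf_eq, Set.mem_iInter, hhitdef, not_le]
    rw [this]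
    exact MeasurableSet.biInter (Finset.Icc 1 j).countable_toSet fun s _ =>
      measurableSet_lt (((hSmeas s).const_mul l).sub measurable_const) measurable_const
  have hCanti : ∀ j, C (j+1) ⊆ C j := by
    intro j ω hω s hs
    exact hω s (Finset.mem_Icc.mpr ⟨(Finset.mem_Icc.mp hs).1, (Finset.mem_Icc.mp hs).2.trans (Nat.le_succ j)⟩)
  -- the stopped process
  set G : ℕ → Ω → ℝ := fun j => Nat.rec (fun _ => (1:ℝ))
    (fun i Gi ω => if ω ∈ C i then Mt (i+1) ω else Gi ω) j with hGdef
  have hG0 : G 0 = fun _ => (1:ℝ) := rfl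
  have hGsucc : ∀ j ω, G (j+1) ω = if ω ∈ C j then Mt (j+1) ω else G j ω := fun j ω => rfl
  have hGmeas : ∀ j, Measurable (G j) := by
    intro j
    induction j with
    | zero => exact measurable_const
    | succ i ih =>
      have : G (i+1) = fun ω => if ω ∈ C i then Mt (i+1) ω else G i ω := funext fun ω => hGsucc i ω
      rw [this]
      exact Measurable.ite (hCmble i) (hMmeas (i+1)) ih
  have hGpos : ∀ j ω, 0 < G j ω := by
    intro j
    induction j with
    | zero => intro ω; norm_num [hG0]
    | succ i ih =>
      intro ω
      rw [hGsucc]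
      split
      · exact hMpos _ _
      · exact ih ω
  have hGbd : ∀ j ω, G j ω ≤ exp (l * j) := by
    intro j
    induction j with
    | zero => intro ω; norm_num [hG0]
    | succ i ih =>
      intro ω
      rw [hGsucc]
      split
      · exact hMbd _ _
      · refine (ih ω).trans ?_
        rw [exp_le_exp]
        exact mul_le_mul_of_nonneg_left (Nat.cast_le.mpr (Nat.le_succ i)) hl
  have hGint : ∀ j, Integrable (G j) μ := by
    intro j
    refine (integrable_const (exp (l*j))).mono' (hGmeas j).aestronglyMeasurable ?_
    refine Filter.Eventually.of_forall fun ω => ?_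
    rw [Real.norm_eq_abs, abs_of_pos (hGpos j ω)]
    exact hGbd j ω
  -- G j = Mt j on C j
  have hGonC : ∀ j ω, ω ∈ C j → G j ω = Mt j ω := by
    intro j
    induction j with
    | zero =>
      intro ω _
      simp only [hG0, hMdef, hSdef]
      norm_num
    | succ i ih =>
      intro ω hω
      rw [hGsucc, if_pos (hCanti i hω)]
  -- G j ≥ exp r off C j
  have hGlow : ∀ j ω, ω ∉ C j → exp r ≤ G j ω := by
    intro j
    induction j with
    | zero =>
      intro ω hω
      exfalso
      apply hω
      intro s hs
      exact absurd hs (by simp)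
    | succ i ih =>
      intro ω hω
      rw [hGsucc]
      by_cases hc : ω ∈ C i
      · rw [if_pos hc]
        -- must hit exactly at i+1
        have hhit : hit (i+1) ω := by
          by_contra hno
          apply hω
          intro s hs
          rcases Finset.mem_Icc.mp hs with ⟨hs1, hs2⟩
          rcases Nat.lt_or_ge s (i+1) with h | h
          · exact hc s (Finset.mem_Icc.mpr ⟨hs1, by omega⟩)
          · have : s = i+1 := by omega
            rw [this]; exact hno
        exact Real.exp_le_exp.mpr hhit
      · rw [if_neg hc]
        exact ih ω hc
  -- key supermartingale step
  have hkey : ∀ j, ∫ ω, G (j+1) ω ∂μ ≤ ∫ ω, G j ω ∂μ := by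
    intro j
    set f : Ω → ℝ := (C j).indicator (Mt j) with hfdef
    set g : Ω → ℝ := fun ω => exp (l * (μ₀ - X j ω) - l^2/8) - 1 with hgdef
    have hptwise : ∀ ω, G (j+1) ω = G j ω + f ω * g ω := by
      intro ω
      rw [hGsucc]
      by_cases hc : ω ∈ C j
      · rw [if_pos hc, hfdef, Set.indicator_of_mem hc, hGonC j ω hc]
        have hsplit : Mt (j+1) ω = Mt j ω * exp (l * (μ₀ - X j ω) - l^2/8) := by
          simp only [hMdef, hSdef]
          rw [← Real.exp_add, Finset.sum_range_succ]
          congr 1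
          push_cast
          ring
        rw [hsplit, hgdef]
        ring
      · rw [if_neg hc, hfdef, Set.indicator_of_notMem hc]
        ring
    have hfmeas : Measurable f := (hMmeas j).indicator (hCmble j)
    have hfbd : ∀ ω, ‖f ω‖ ≤ exp (l * j) := by
      intro ω
      rw [Real.norm_eq_abs, hfdef]
      by_cases hc : ω ∈ C j
      · rw [Set.indicator_of_mem hc, abs_of_pos (hMpos j ω)]
        exact hMbd j ω
      · rw [Set.indicator_of_notMem hc]
        simp [exp_nonneg]
    have hfint : Integrable f μ :=
      (integrable_const (exp (l*j))).mono' hfmeas.aestronglyMeasurable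
        (Filter.Eventually.of_forall hfbd)
    have hgmeas : Measurable g :=
      (((measurable_const.sub (hmeas j)).const_mul l).sub measurable_const).exp.sub
        measurable_const
    have hgint : Integrable g μ := by
      refine (integrable_const (exp l + 1)).mono' hgmeas.aestronglyMeasurable ?_
      refine Filter.Eventually.of_forall fun ω => ?_
      rw [Real.norm_eq_abs, hgdef]
      have h1 : exp (l * (μ₀ - X j ω) - l^2/8) ≤ exp l := by
        rw [exp_le_exp]
        have hXj := hbound j ω
        have : μ₀ - X j ω ≤ 1 := by linarith [hXj.1]
        nlinarith
      have h2 : (0:ℝ) < exp (l * (μ₀ - X j ω) - l^2/8) := exp_pos _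
      rw [abs_le]
      constructor <;> nlinarith
    -- independence of f and g
    have hindepfg : IndepFun f g μ := by
      have hdisj : Disjoint (Finset.range j) ({j} : Finset ℕ) := by simp
      have hbase := hindep.indepFun_finset (Finset.range j) {j} hdisj hmeas
      set XX : ℕ → (↥(Finset.range j) → ℝ) → ℝ :=
        fun k v => if h : k ∈ Finset.range j then v ⟨k, h⟩ else 0 with hXXdef
      set SS : ℕ → (↥(Finset.range j) → ℝ) → ℝ :=
        fun s v => ∑ k ∈ Finset.range s, (μ₀ - XX k v) with hSSdef
      set CC : Set (↥(Finset.range j) → ℝ) :=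
        {v | ∀ s ∈ Finset.Icc 1 j, ¬ (r ≤ l * SS s v - s * l^2/8)} with hCCdef
      set F : (↥(Finset.range j) → ℝ) → ℝ :=
        CC.indicator (fun v => exp (l * SS j v - j * l^2/8)) with hFdef
      set Gf : (↥({j} : Finset ℕ) → ℝ) → ℝ :=
        fun v => exp (l * (μ₀ - v ⟨j, Finset.mem_singleton_self j⟩) - l^2/8) - 1 with hGfdef
      have hXXmeas : ∀ k, Measurable (XX k) := by
        intro k
        simp only [hXXdef]
        by_cases h : k ∈ Finset.range j
        · simp only [dif_pos h]
          exact measurable_pi_apply _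
        · simp only [dif_neg h]
          exact measurable_const
      have hSSmeas : ∀ s, Measurable (SS s) :=
        fun s => Finset.measurable_sum _ fun k _ => measurable_const.sub (hXXmeas k)
      have hCCmble : MeasurableSet CC := by
        have : CC = ⋂ s ∈ Finset.Icc 1 j, {v | l * SS s v - s * l^2/8 < r} := by
          ext v
          simp only [hCCdef, Set.mem_setOf_eq, Set.mem_iInter, not_le]
        rw [this]
        exact MeasurableSet.biInter (Finset.Icc 1 j).countable_toSet fun s _ =>
          measurableSet_lt (((hSSmeas s).const_mul l).sub measurable_const) measurable_const
      have hFmeas : Measurable F :=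
        ((((hSSmeas j).const_mul l).sub measurable_const).exp).indicator hCCmble
      have hGfmeas : Measurable Gf := by
        rw [hGfdef]; fun_prop
      have hcomp := hbase.comp hFmeas hGfmeas
      have hSS : ∀ ω, ∀ s ≤ j, SS s (fun i : ↥(Finset.range j) => X i.1 ω) = S s ω := by
        intro ω s hs
        simp only [hSSdef, hSdef]
        refine Finset.sum_congr rfl fun k hk => ?_
        have hkj : k ∈ Finset.range j :=
          Finset.mem_range.mpr (lt_of_lt_of_le (Finset.mem_range.mp hk) hs)
        simp only [hXXdef, dif_pos hkj]
      have hfeq : f = F ∘ (fun ω (i : ↥(Finset.range j)) => X i.1 ω) := by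
        funext ω
        have hCiff : (fun i : (Finset.range j : Finset ℕ) => X i.1 ω) ∈ CC ↔ ω ∈ C j := by
          simp only [hCCdef, hCdef, Set.mem_setOf_eq, hhitdef]
          constructor
          · intro h s hs
            have := h s hs
            rwa [hSS ω s (Finset.mem_Icc.mp hs).2] at this
          · intro h s hs
            have := h s hs
            rwa [← hSS ω s (Finset.mem_Icc.mp hs).2] at this
        simp only [Function.comp_apply, hfdef, hFdef]
        by_cases hc : ω ∈ C j
        · rw [Set.indicator_of_mem hc, Set.indicator_of_mem (hCiff.mpr hc)]
          simp only [hMdef]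
          rw [hSS ω j le_rfl]
        · rw [Set.indicator_of_notMem hc, Set.indicator_of_notMem (fun hx => hc (hCiff.mp hx))]
      have hgeq : g = Gf ∘ (fun ω (i : ↥({j} : Finset ℕ)) => X i.1 ω) := by
        funext ω
        simp only [Function.comp_apply, hgdef, hGfdef]
      rw [hfeq, hgeq]
      exact hcomp
    have hprod := hindepfg.integral_mul_eq_mul_integral hfint.aestronglyMeasurable hgint.aestronglyMeasurable
    -- expectation of g is nonpositive
    have hgle : ∫ ω, g ω ∂μ ≤ 0 := by
      have hrw : ∀ ω, g ω = exp (l * (μ₀ - X j ω)) * exp (-(l^2/8)) - 1 := by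
        intro ω
        rw [hgdef, ← Real.exp_add]
        ring_nf
      have hYint : Integrable (fun ω => exp (l * (μ₀ - X j ω))) μ := by
        refine (integrable_const (exp l)).mono'
          ((measurable_const.sub (hmeas j)).const_mul l).exp.aestronglyMeasurable ?_
        refine Filter.Eventually.of_forall fun ω => ?_
        rw [Real.norm_eq_abs, abs_of_pos (exp_pos _), exp_le_exp]
        have hXj := hbound j ω
        have : μ₀ - X j ω ≤ 1 := by linarith [hXj.1]
        nlinarith
      have hmg : ∫ ω, exp (l * (μ₀ - X j ω)) ∂μ ≤ exp (l^2/8) := by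
        refine mgf_step μ (fun ω => μ₀ - X j ω) (measurable_const.sub (hmeas j)) (μ₀ - 1)
          (by linarith) (by linarith) (fun ω => ?_) ?_ l hl
        · have hXj := hbound j ω
          constructor
          · show μ₀ - 1 ≤ μ₀ - X j ω
            linarith [hXj.2]
          · show μ₀ - X j ω ≤ μ₀ - 1 + 1
            linarith [hXj.1]
        · rw [integral_sub (integrable_const μ₀) (hXint j), integral_const, hmean j]
          simp
      calc ∫ ω, g ω ∂μ = ∫ ω, (exp (l * (μ₀ - X j ω)) * exp (-(l^2/8)) - 1) ∂μ := by
            exact integral_congr_ae (Filter.Eventually.of_forall hrw)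
        _ = (∫ ω, exp (l * (μ₀ - X j ω)) ∂μ) * exp (-(l^2/8)) - 1 := by
            rw [integral_sub (hYint.mul_const _) (integrable_const 1),
              MeasureTheory.integral_mul_const, integral_const]
            simp
        _ ≤ exp (l^2/8) * exp (-(l^2/8)) - 1 := by
            have := exp_pos (-(l^2/8))
            nlinarith
        _ = 0 := by rw [← Real.exp_add]; simp
    have hfnn : 0 ≤ ∫ ω, f ω ∂μ := by
      refine integral_nonneg fun ω => ?_
      exact Set.indicator_nonneg (fun ω _ => (hMpos j ω).le) ω
    have hfgint : Integrable (fun ω => f ω * g ω) μ := hgint.bdd_mul hfmeas.aestronglyMeasurable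
      (Filter.Eventually.of_forall hfbd)
    calc ∫ ω, G (j+1) ω ∂μ = ∫ ω, (G j ω + f ω * g ω) ∂μ :=
          integral_congr_ae (Filter.Eventually.of_forall hptwise)
      _ = (∫ ω, G j ω ∂μ) + ∫ ω, f ω * g ω ∂μ := integral_add (hGint j) hfgint
      _ = (∫ ω, G j ω ∂μ) + (∫ ω, f ω ∂μ) * ∫ ω, g ω ∂μ := by
            have hprod' : ∫ ω, f ω * g ω ∂μ = (∫ ω, f ω ∂μ) * ∫ ω, g ω ∂μ := hprod
            rw [hprod']
      _ ≤ ∫ ω, G j ω ∂μ := by nlinarith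
  -- iterate
  have hGint0 : ∀ j, ∫ ω, G j ω ∂μ ≤ 1 := by
    intro j
    induction j with
    | zero => simp [hG0]
    | succ i ih => exact (hkey i).trans ih
  -- identify the target set
  have htarget : {ω | ∃ s ∈ Finset.Icc 1 n,
      r ≤ l * (∑ k ∈ Finset.range s, (μ₀ - X k ω)) - s * l^2/8} = (C n)ᶜ := by
    ext ω
    simp only [hCdef, Set.mem_compl_iff, Set.mem_setOf_eq, hhitdef, hSdef, not_forall, not_not,
      exists_prop]
  have hmark : exp r * (μ (C n)ᶜ).toReal ≤ ∫ ω, G n ω ∂μ := by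
    have hind : ∫ ω, ((C n)ᶜ).indicator (fun _ => exp r) ω ∂μ = exp r * (μ (C n)ᶜ).toReal := by
      rw [integral_indicator (hCmble n).compl]
      simp [mul_comm, Measure.real]
    rw [← hind]
    refine integral_mono ((integrable_const (exp r)).indicator (hCmble n).compl) (hGint n)
      fun ω => ?_
    by_cases h : ω ∈ (C n)ᶜ
    · rw [Set.indicator_of_mem h]
      exact hGlow n ω h
    · rw [Set.indicator_of_notMem h]
      exact (hGpos n ω).le
  have hfinal : exp r * (μ (C n)ᶜ).toReal ≤ 1 := hmark.trans (hGint0 n)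
  rw [htarget, Real.exp_neg, ← one_div, le_div_iff₀ (exp_pos r)]
  linarith

end MossAux

open MossAux Real


set_option maxHeartbeats 2000000 in
/-- **Expected MOSS underestimation bound.** Let `(X k)` be i.i.d. `[0,1]`-valued with mean `μ₀`,
`X̄ s` the empirical mean of the first `s` samples, `0 < M ≤ T` reals, `m ≥ 1`, and
`ζ = μ₀ - min_{1 ≤ s ≤ m} (X̄ s + √((2/s)·max(log(T/(M·s)), 0)))`.
Then `E[max(ζ, 0)] ≤ 3√(M/T) + 6M/T`. -/
theorem moss_expected_underestimation
    {Ω : Type*} [MeasurableSpace Ω] (μ : Measure Ω) [IsProbabilityMeasure μ]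
    (X : ℕ → Ω → ℝ) (μ₀ : ℝ)
    (hmeas : ∀ k, Measurable (X k))
    (hindep : iIndepFun X μ)
    (hident : ∀ k l, IdentDistrib (X k) (X l) μ μ)
    (hbound : ∀ k ω, X k ω ∈ Set.Icc (0 : ℝ) 1)
    (hmean : ∀ k, ∫ ω, X k ω ∂μ = μ₀)
    (M T : ℝ) (hM : 0 < M) (hMT : M ≤ T)
    (m : ℕ) (hm : 1 ≤ m) :
    ∫ ω, max (μ₀ - (Finset.Icc 1 m).inf' (Finset.nonempty_Icc.mpr hm)
        (fun s => (∑ k ∈ Finset.range s, X k ω) / s +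
          Real.sqrt ((2 / s) * max (Real.log (T / (M * s))) 0))) 0 ∂μ
      ≤ 3 * Real.sqrt (M / T) + 6 * M / T := by
  classical
  have hT : 0 < T := lt_of_lt_of_le hM hMT
  have hβpos : 0 < M / T := div_pos hM hT
  have hXint : ∀ k, Integrable (X k) μ := by
    intro k
    refine (integrable_const (1:ℝ)).mono' (hmeas k).aestronglyMeasurable ?_
    refine Filter.Eventually.of_forall fun ω => ?_
    rw [Real.norm_eq_abs, abs_le]
    exact ⟨by linarith [(hbound k ω).1], (hbound k ω).2⟩
  have hμ0 : 0 ≤ μ₀ := by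
    rw [← hmean 0]; exact integral_nonneg fun ω => (hbound 0 ω).1
  have hμ1 : μ₀ ≤ 1 := by
    rw [← hmean 0]
    calc ∫ ω, X 0 ω ∂μ ≤ ∫ _, (1:ℝ) ∂μ :=
          integral_mono (hXint 0) (integrable_const 1) fun ω => (hbound 0 ω).2
      _ = 1 := by simp
  set hne := Finset.nonempty_Icc.mpr hm
  set idx : ℕ → Ω → ℝ := fun s ω => (∑ k ∈ Finset.range s, X k ω) / s +
      Real.sqrt ((2 / s) * max (Real.log (T / (M * s))) 0) with hidxdef
  set Z : Ω → ℝ := fun ω => max (μ₀ - (Finset.Icc 1 m).inf' hne (fun s => idx s ω)) 0 with hZdef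
  -- Z is between 0 and 1
  have hidx_nonneg : ∀ s ω, s ∈ Finset.Icc 1 m → 0 ≤ idx s ω := by
    intro s ω hs
    have h1 : (0:ℝ) ≤ ∑ k ∈ Finset.range s, X k ω :=
      Finset.sum_nonneg fun k _ => (hbound k ω).1
    have h2 : (0:ℝ) ≤ (s:ℝ) := Nat.cast_nonneg s
    have := Real.sqrt_nonneg ((2 / (s:ℝ)) * max (Real.log (T / (M * s))) 0)
    positivity
  have hZ01 : ∀ ω, 0 ≤ Z ω ∧ Z ω ≤ 1 := by
    intro ω
    refine ⟨le_max_right _ _, ?_⟩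
    refine max_le ?_ zero_le_one
    have h1 : (0:ℝ) ≤ (Finset.Icc 1 m).inf' hne (fun s => idx s ω) :=
      Finset.le_inf' hne _ fun s hs => hidx_nonneg s ω hs
    linarith
  -- measurability and integrability of Z
  have hinf_meas : Measurable (fun ω => (Finset.Icc 1 m).inf' hne (fun s => idx s ω)) := by
    have heq : (fun ω => (Finset.Icc 1 m).inf' hne (fun s => idx s ω))
        = (Finset.Icc 1 m).inf' hne (fun s => idx s) := by
      funext ω
      exact (Finset.inf'_apply hne idx ω).symm
    rw [heq]
    refine Finset.inf'_induction hne _ (fun f hf g hg => hf.inf hg) fun n _ => ?_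
    exact ((Finset.measurable_sum _ fun k _ => hmeas k).div_const _).add_const _
  have hZmeas : Measurable Z := (measurable_const.sub hinf_meas).max measurable_const
  have hZint : Integrable Z μ := by
    refine (integrable_const (1:ℝ)).mono' hZmeas.aestronglyMeasurable ?_
    refine Filter.Eventually.of_forall fun ω => ?_
    rw [Real.norm_eq_abs, abs_of_nonneg (hZ01 ω).1]
    exact (hZ01 ω).2
  -- trivial case
  by_cases h9 : T ≤ 9 * M
  · have hsq : (1:ℝ)/3 ≤ Real.sqrt (M/T) := by
      have h1 : (1:ℝ)/9 ≤ M/T := by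
        rw [div_le_div_iff₀ (by norm_num) hT]
        linarith
      have h2 := Real.sq_sqrt hβpos.le
      have h3 := Real.sqrt_nonneg (M/T)
      nlinarith
    have hint1 : ∫ ω, Z ω ∂μ ≤ 1 := by
      calc ∫ ω, Z ω ∂μ ≤ ∫ _, (1:ℝ) ∂μ :=
            integral_mono hZint (integrable_const 1) fun ω => (hZ01 ω).2
        _ = 1 := by simp
    have : (0:ℝ) ≤ 6 * M / T := by positivity
    linarith
  -- main case
  push_neg at h9
  set N : ℝ := T / M with hNdef
  have hN9 : 9 < N := by
    rw [hNdef, lt_div_iff₀ hM]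
    linarith
  have hNpos : 0 < N := by linarith
  have hβN : M / T = 1 / N := by
    rw [hNdef]
    field_simp
  -- dyadic exponent
  set nc : ℕ := ⌈N/4⌉₊ with hncdef
  have hnc2 : 2 ≤ nc := by
    have h : ((2:ℕ):ℝ) < N/4 := by push_cast; linarith
    have h2 := Nat.lt_ceil.mpr h
    rw [hncdef]
    omega
  set j₁ : ℕ := Nat.clog 2 nc with hj₁def
  have hj₁pos : 0 < j₁ := Nat.clog_pos one_lt_two hnc2
  have hj₁low : N/4 ≤ (2^j₁ : ℝ) := by
    have h1 : nc ≤ 2^j₁ := Nat.le_pow_clog one_lt_two nc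
    have h2 : N/4 ≤ (nc:ℝ) := Nat.le_ceil _
    calc N/4 ≤ (nc:ℝ) := h2
      _ ≤ ((2^j₁ : ℕ) : ℝ) := Nat.cast_le.mpr h1
      _ = (2:ℝ)^j₁ := by push_cast; ring
  have hj₁up : (2^j₁ : ℝ) < N/2 := by
    have h1 : (2:ℕ)^(j₁-1) < nc := by
      have := Nat.pow_pred_clog_lt_self one_lt_two (show 1 < nc by omega)
      simpa [hj₁def] using this
    have h2 : (2:ℝ)^(j₁-1) ≤ (nc:ℝ) - 1 := by
      have hh : (2:ℕ)^(j₁-1) + 1 ≤ nc := h1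
      have hh2 : (((2:ℕ)^(j₁-1) + 1 : ℕ) : ℝ) ≤ (nc:ℝ) := Nat.cast_le.mpr hh
      push_cast at hh2
      linarith
    have h3 : (nc:ℝ) - 1 < N/4 := by
      have := Nat.ceil_lt_add_one (show (0:ℝ) ≤ N/4 by linarith)
      rw [hncdef]
      linarith [this]
    have h4 : (2:ℝ)^(j₁-1) < N/4 := lt_of_le_of_lt h2 h3
    have h5 : (2:ℝ)^j₁ = 2 * (2:ℝ)^(j₁-1) := by
      conv_lhs => rw [show j₁ = (j₁ - 1) + 1 by omega]
      rw [pow_succ]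
      ring
    rw [h5]
    linarith
  -- block log quantities
  set Lb : ℕ → ℝ := fun j => Real.log (N / 2^(j+1)) with hLbdef
  have hLbfacts : ∀ j, j < j₁ → 0 ≤ Lb j ∧ (2:ℝ) ≤ N / 2^(j+1) := by
    intro j hj
    have h1 : (2:ℝ)^(j+1) ≤ (2:ℝ)^j₁ := by
      apply pow_le_pow_right₀ (by norm_num)
      omega
    have h2 : N / 2^j₁ ≤ N / 2^(j+1) :=
      div_le_div_of_nonneg_left hNpos.le (by positivity) h1
    have h3 : (2:ℝ) < N / 2^j₁ := by
      rw [lt_div_iff₀ (by positivity)]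
      linarith [hj₁up]
    refine ⟨Real.log_nonneg (by linarith), by linarith⟩
  set D : ℕ → ℝ := fun j => Real.sqrt ((2:ℝ)^(j+1) * Lb j) with hDdef
  set aB : ℕ → ℝ → ℝ := fun j t => (2^j : ℝ) * t + D j with haBdef
  -- the dominating tail function
  set H : ℝ → ℝ := fun t => exp (-(2*(2^j₁:ℝ)) * t^2)
      + ∑ j ∈ Finset.range j₁, ((2^(j+1):ℝ)/N)^2 * exp (-(2^j:ℝ) * t^2) with hHdef
  -- pointwise tail bound
  have htail : ∀ t : ℝ, 0 < t → (μ {a | t < Z a}).toReal ≤ H t := by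
    intro t ht
    set EvV : Set Ω := {ω | ∃ s ∈ Finset.Icc 1 m,
        2*(2^j₁:ℝ)*t^2 ≤ (4*t) * (∑ k ∈ Finset.range s, (μ₀ - X k ω)) - s*(4*t)^2/8} with hEvVdef
    set EvB : ℕ → Set Ω := fun j => {ω | ∃ s ∈ Finset.Icc 1 (2^(j+1)-1),
        2*(aB j t)^2/(2^(j+1):ℝ) ≤ (4*(aB j t)/(2^(j+1):ℝ)) *
          (∑ k ∈ Finset.range s, (μ₀ - X k ω)) - s*(4*(aB j t)/(2^(j+1):ℝ))^2/8} with hEvBdef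
    have hincl : {a | t < Z a} ⊆ EvV ∪ ⋃ j ∈ Finset.range j₁, EvB j := by
      intro ω hω
      simp only [Set.mem_setOf_eq, hZdef] at hω
      have h1 : (Finset.Icc 1 m).inf' hne (fun s => idx s ω) < μ₀ - t := by
        rcases lt_max_iff.mp hω with h | h
        · linarith
        · linarith
      rw [Finset.inf'_lt_iff] at h1
      obtain ⟨s, hsmem, hs⟩ := h1
      rcases Finset.mem_Icc.mp hsmem with ⟨hs1, hsm⟩
      have hspos : (0:ℝ) < (s:ℝ) := by exact_mod_cast Nat.lt_of_lt_of_le Nat.zero_lt_one hs1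
      set Lg : ℝ := max (Real.log (T / (M * s))) 0 with hLgdef
      have hLgnn : 0 ≤ Lg := le_max_right _ _
      have hSval : (s:ℝ)*t + Real.sqrt (2*s*Lg) < ∑ k ∈ Finset.range s, (μ₀ - X k ω) := by
        have hsum : ∑ k ∈ Finset.range s, (μ₀ - X k ω)
            = s*μ₀ - ∑ k ∈ Finset.range s, X k ω := by
          rw [Finset.sum_sub_distrib, Finset.sum_const, Finset.card_range, nsmul_eq_mul]
        have hcb : (s:ℝ) * Real.sqrt ((2/s) * Lg) = Real.sqrt (2*s*Lg) := by
          rw [show (2*(s:ℝ)*Lg) = (s:ℝ)^2 * ((2/s) * Lg) by field_simp,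
            Real.sqrt_mul (sq_nonneg _), Real.sqrt_sq hspos.le]
        have hidxval : idx s ω = (∑ k ∈ Finset.range s, X k ω) / s + Real.sqrt ((2/s)*Lg) := rfl
        rw [hidxval] at hs
        have hdiv : (∑ k ∈ Finset.range s, X k ω) / s < μ₀ - t - Real.sqrt ((2/s)*Lg) := by
          linarith
        have hmul : ∑ k ∈ Finset.range s, X k ω < (μ₀ - t - Real.sqrt ((2/s)*Lg)) * s :=
          (div_lt_iff₀ hspos).mp hdiv
        have hexp : (μ₀ - t - Real.sqrt ((2/s)*Lg)) * s
            = s*μ₀ - s*t - s*Real.sqrt ((2/s)*Lg) := by ring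
        rw [hsum, ← hcb]
        linarith
      by_cases hbig : (2:ℕ)^j₁ ≤ s
      · left
        rw [hEvVdef]
        refine Set.mem_setOf_eq ▸ ⟨s, hsmem, ?_⟩
        have hSge : (s:ℝ)*t ≤ ∑ k ∈ Finset.range s, (μ₀ - X k ω) := by
          have := Real.sqrt_nonneg (2*s*Lg)
          linarith
        have hcast : (2^j₁:ℝ) ≤ (s:ℝ) := by exact_mod_cast hbig
        nlinarith [mul_le_mul_of_nonneg_left hSge (show (0:ℝ) ≤ 4*t by positivity),
          mul_le_mul_of_nonneg_right hcast (show (0:ℝ) ≤ 2*t^2 by positivity)]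
      · right
        push_neg at hbig
        set j : ℕ := Nat.log 2 s with hjdef
        have hj2 : 2^j ≤ s := Nat.pow_log_le_self 2 (by omega)
        have hj3 : s < 2^(j+1) := Nat.lt_pow_succ_log_self one_lt_two s
        have hjlt : j < j₁ := by
          have : (2:ℕ)^j < 2^j₁ := lt_of_le_of_lt hj2 hbig
          exact (Nat.pow_lt_pow_iff_right one_lt_two).mp this
        refine Set.mem_iUnion₂.mpr ⟨j, Finset.mem_range.mpr hjlt, ?_⟩
        rw [hEvBdef]
        refine Set.mem_setOf_eq ▸ ⟨s, Finset.mem_Icc.mpr ⟨hs1, by omega⟩, ?_⟩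
        set K : ℝ := (2:ℝ)^(j+1) with hKdef
        have hKpos : (0:ℝ) < K := by positivity
        have hsK : (s:ℝ) ≤ K := by
          rw [hKdef]
          exact_mod_cast hj3.le
        have h2js : ((2:ℝ)^j) ≤ (s:ℝ) := by exact_mod_cast hj2
        obtain ⟨hLbnn, hLb2⟩ := hLbfacts j hjlt
        have hDle : D j ≤ Real.sqrt (2*s*Lg) := by
          apply Real.sqrt_le_sqrt
          have hK2 : K ≤ 2*(s:ℝ) := by
            rw [hKdef, pow_succ]
            nlinarith
          have hLbLg : Lb j ≤ Lg := by
            have harg : N / K ≤ N / s := by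
              apply div_le_div_of_nonneg_left hNpos.le hspos hsK
            have hlog : Real.log (N / K) ≤ Real.log (N / s) :=
              Real.log_le_log (by positivity) harg
            have heq : T / (M * s) = N / s := by
              rw [hNdef, div_div]
            rw [hLgdef, heq]
            exact le_trans hlog (le_max_left _ _)
          calc (2:ℝ)^(j+1) * Lb j = K * Lb j := by rw [hKdef]
            _ ≤ 2*(s:ℝ) * Lg := by
                apply mul_le_mul hK2 hLbLg hLbnn (by positivity)
            _ = 2*s*Lg := by ring
        have haBle : aB j t ≤ ∑ k ∈ Finset.range s, (μ₀ - X k ω) := by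
          have h1 : (2^j:ℝ)*t ≤ (s:ℝ)*t := mul_le_mul_of_nonneg_right h2js ht.le
          calc aB j t = (2^j:ℝ)*t + D j := rfl
            _ ≤ (s:ℝ)*t + Real.sqrt (2*s*Lg) := add_le_add h1 hDle
            _ ≤ _ := hSval.le
        have haBnn : 0 ≤ aB j t := by
          have := Real.sqrt_nonneg ((2:ℝ)^(j+1) * Lb j)
          have : (0:ℝ) ≤ D j := this
          have h2 : (0:ℝ) ≤ (2^j:ℝ)*t := by positivity
          rw [haBdef]
          dsimp only
          linarith
        set u : ℝ := aB j t with hudef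
        have hint1 : (4*u/K)*u ≤ (4*u/K) * (∑ k ∈ Finset.range s, (μ₀ - X k ω)) :=
          mul_le_mul_of_nonneg_left haBle (by positivity)
        have hint2 : (s:ℝ)*(4*u/K)^2 ≤ K*(4*u/K)^2 :=
          mul_le_mul_of_nonneg_right hsK (sq_nonneg _)
        have hint3 : (4*u/K)*u - K*(4*u/K)^2/8 = 2*u^2/K := by
          field_simp
          ring
        linarith
    -- measure bound via ville
    have hV := ville μ X μ₀ hmeas hindep hbound hmean (4*t) (2*(2^j₁:ℝ)*t^2)
      (by positivity) m
    have hB : ∀ j ∈ Finset.range j₁,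
        (μ (EvB j)).toReal ≤ ((2^(j+1):ℝ)/N)^2 * exp (-(2^j:ℝ)*t^2) := by
      intro j hj
      obtain ⟨hLbnn, hLb2⟩ := hLbfacts j (Finset.mem_range.mp hj)
      set K : ℝ := (2:ℝ)^(j+1) with hKdef
      have hKpos : (0:ℝ) < K := by positivity
      have haBnn : 0 ≤ aB j t := by
        have h1 : (0:ℝ) ≤ D j := Real.sqrt_nonneg _
        have h2 : (0:ℝ) ≤ (2^j:ℝ)*t := by positivity
        rw [haBdef]
        dsimp only
        linarith
      have hv := ville μ X μ₀ hmeas hindep hbound hmean (4*(aB j t)/K)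
        (2*(aB j t)^2/K) (by positivity) (2^(j+1)-1)
      refine le_trans (le_of_eq (by rw [hEvBdef])) (hv.trans ?_)
      -- exp(-(2 aB²/K)) ≤ (K/N)² exp(-(2^j) t²)
      have hD2 : (D j)^2 = (2:ℝ)^(j+1) * Lb j := Real.sq_sqrt (by positivity)
      have hKe : K = 2*(2:ℝ)^j := by rw [hKdef, pow_succ]; ring
      have hexp1 : (2^j:ℝ)*t^2 + 2*Lb j ≤ 2*(aB j t)^2/K := by
        rw [le_div_iff₀ hKpos]
        have hexpand : 2*(aB j t)^2 = 2*((2^j:ℝ)*t)^2 + 4*((2^j:ℝ)*t)*(D j) + 2*(D j)^2 := by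
          rw [haBdef]; dsimp only; ring
        have hcross : 0 ≤ 4*((2^j:ℝ)*t)*(D j) := by
          have := Real.sqrt_nonneg ((2:ℝ)^(j+1) * Lb j)
          positivity
        have hKLb : K * Lb j = (D j)^2 := by rw [hD2, hKdef]
        nlinarith [hKLb, hKe]
      have hsplit : exp (-(2*(aB j t)^2/K)) ≤ exp (-(2*Lb j)) * exp (-(2^j:ℝ)*t^2) := by
        rw [← Real.exp_add]
        apply Real.exp_le_exp.mpr
        linarith
      have hlogeq : exp (-(2*Lb j)) = (K/N)^2 := by
        have harg : (0:ℝ) < N/K := by positivity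
        have h2 : Real.log ((N/K)^2) = (2:ℝ)*Lb j := by
          rw [Real.log_pow]
          simp only [hLbdef, hKdef]
          push_cast
          ring
        rw [← h2, Real.exp_neg, Real.exp_log (by positivity), ← inv_pow, inv_div]
      calc exp (-(2*(aB j t)^2/K)) ≤ exp (-(2*Lb j)) * exp (-(2^j:ℝ)*t^2) := hsplit
        _ = (K/N)^2 * exp (-(2^j:ℝ)*t^2) := by rw [hlogeq]
        _ = ((2^(j+1):ℝ)/N)^2 * exp (-(2^j:ℝ)*t^2) := by rw [hKdef]
    -- combine
    have hsub : μ {a | t < Z a} ≤ μ EvV + ∑ j ∈ Finset.range j₁, μ (EvB j) := by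
      calc μ {a | t < Z a} ≤ μ (EvV ∪ ⋃ j ∈ Finset.range j₁, EvB j) := measure_mono hincl
        _ ≤ μ EvV + μ (⋃ j ∈ Finset.range j₁, EvB j) := measure_union_le _ _
        _ ≤ μ EvV + ∑ j ∈ Finset.range j₁, μ (EvB j) := by
            gcongr
            exact measure_biUnion_finset_le _ _
    have hne1 : μ EvV ≠ ⊤ := measure_ne_top μ _
    have hne2 : (∑ j ∈ Finset.range j₁, μ (EvB j)) ≠ ⊤ :=
      (ENNReal.sum_lt_top.mpr fun j _ => measure_lt_top μ _).ne
    calc (μ {a | t < Z a}).toReal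
        ≤ (μ EvV + ∑ j ∈ Finset.range j₁, μ (EvB j)).toReal :=
          ENNReal.toReal_mono (ENNReal.add_ne_top.mpr ⟨hne1, hne2⟩) hsub
      _ = (μ EvV).toReal + ∑ j ∈ Finset.range j₁, (μ (EvB j)).toReal := by
          rw [ENNReal.toReal_add hne1 hne2, ENNReal.toReal_sum fun j _ => measure_ne_top μ _]
      _ ≤ exp (-(2*(2^j₁:ℝ)*t^2)) + ∑ j ∈ Finset.range j₁,
            ((2^(j+1):ℝ)/N)^2 * exp (-(2^j:ℝ)*t^2) := by
          refine add_le_add (le_trans (le_of_eq (by rw [hEvVdef])) hV) (Finset.sum_le_sum hB)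
      _ = H t := by
          rw [hHdef]
          dsimp only
          congr 2
          ring
  -- layer cake
  have hLC := hZint.integral_eq_integral_meas_lt
    (Filter.Eventually.of_forall fun ω => (hZ01 ω).1)
  -- integrability of H on Ioi 0
  have hHint : Integrable H (volume.restrict (Set.Ioi (0:ℝ))) := by
    refine Integrable.add ?_ ?_
    · exact (integrable_exp_neg_mul_sq (by positivity)).restrict
    · refine integrable_finset_sum _ fun j _ => ?_
      exact ((integrable_exp_neg_mul_sq (by positivity)).restrict).const_mul _
  -- value of the integral of H
  have hHval : ∫ t in Set.Ioi (0:ℝ), H t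
      = Real.sqrt (π/(2*(2^j₁:ℝ)))/2
        + ∑ j ∈ Finset.range j₁, ((2^(j+1):ℝ)/N)^2 * (Real.sqrt (π/(2^j:ℝ))/2) := by
    rw [hHdef]
    rw [integral_add ((integrable_exp_neg_mul_sq (by positivity)).restrict)
      (integrable_finset_sum _ fun j _ =>
        ((integrable_exp_neg_mul_sq (by positivity)).restrict).const_mul _)]
    rw [integral_finset_sum _ fun j _ =>
      ((integrable_exp_neg_mul_sq (by positivity)).restrict).const_mul _]
    rw [integral_gaussian_Ioi]
    congr 1
    refine Finset.sum_congr rfl fun j _ => ?_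
    rw [MeasureTheory.integral_const_mul, integral_gaussian_Ioi]
  -- numeric bound for the first term
  have hVnum : Real.sqrt (π/(2*(2^j₁:ℝ)))/2 ≤ (3/2) * Real.sqrt (M/T) := by
    have hpi4 := Real.pi_le_four
    have hpinn := Real.pi_nonneg
    have h2j : N/2 ≤ 2*(2^j₁:ℝ) := by linarith [hj₁low]
    have h1 : π/(2*(2^j₁:ℝ)) ≤ 9 * (M/T) := by
      have hN2 : (0:ℝ) < N/2 := by linarith
      have ha : π/(2*(2^j₁:ℝ)) ≤ π/(N/2) := div_le_div_of_nonneg_left hpinn hN2 h2j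
      have hb : π/(N/2) = 2*π*(1/N) := by field_simp
      rw [hβN]
      have hc : (0:ℝ) < 1/N := by positivity
      nlinarith
    calc Real.sqrt (π/(2*(2^j₁:ℝ)))/2 ≤ Real.sqrt (9*(M/T))/2 := by
          have := Real.sqrt_le_sqrt h1
          linarith
      _ = 3*Real.sqrt (M/T)/2 := by
          rw [show (9:ℝ)*(M/T) = 3^2*(M/T) by norm_num,
            Real.sqrt_mul (by norm_num : (0:ℝ) ≤ 3^2), Real.sqrt_sq (by norm_num : (0:ℝ) ≤ 3)]
      _ = (3/2)*Real.sqrt (M/T) := by ring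
  -- numeric bound for the sum
  have hBnum : ∑ j ∈ Finset.range j₁, ((2^(j+1):ℝ)/N)^2 * (Real.sqrt (π/(2^j:ℝ))/2)
      ≤ (3/2) * Real.sqrt (M/T) := by
    set A : ℝ := Real.sqrt 2 with hAdef
    have hA2 : A^2 = 2 := Real.sq_sqrt (by norm_num)
    have hAnn : 0 ≤ A := Real.sqrt_nonneg 2
    have hA14 : 7/5 ≤ A := by nlinarith
    have hAexp : ∀ j : ℕ, Real.sqrt ((2:ℝ)^j) = A^j := by
      intro j
      induction j with
      | zero => simp
      | succ i ih => rw [pow_succ, pow_succ, Real.sqrt_mul (by positivity), ih]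
    have hsqrtpi : Real.sqrt π ≤ 2 := by
      have h1 : Real.sqrt π ≤ Real.sqrt 4 := Real.sqrt_le_sqrt Real.pi_le_four
      rw [show (4:ℝ) = 2^2 by norm_num, Real.sqrt_sq (by norm_num : (0:ℝ) ≤ 2)] at h1
      exact h1
    have hApow_pos : ∀ j : ℕ, (0:ℝ) < A^j := fun j => pow_pos (by nlinarith) j
    have hterm : ∀ j ∈ Finset.range j₁,
        ((2^(j+1):ℝ)/N)^2 * (Real.sqrt (π/(2^j:ℝ))/2) ≤ (4/N^2) * (2*A)^j := by
      intro j _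
      have h1 : Real.sqrt (π/(2^j:ℝ)) = Real.sqrt π / A^j := by
        rw [Real.sqrt_div Real.pi_nonneg, hAexp]
      have h2 : ((2^(j+1):ℝ)/N)^2 = 4*(2^j:ℝ)^2/N^2 := by
        rw [pow_succ]
        field_simp
        ring
      rw [h1, h2]
      have h3 : (2*A)^j = 4^j / A^j := by
        have : (2*A)*A = 4 := by nlinarith
        have h4A : (2:ℝ)*A = 4/A := by
          field_simp
          nlinarith
        rw [h4A, div_pow]
      rw [h3]
      have h5 : (0:ℝ) < N^2 := by positivity
      have h6 : ((2:ℝ)^j)^2 = 4^j := by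
        rw [← pow_mul, mul_comm j 2, pow_mul]
        norm_num
      rw [h6]
      rw [show (4:ℝ)/N^2 * (4^j/A^j) = 4 * 4^j * (1/A^j / N^2) by ring,
        show (4:ℝ)*4^j/N^2 * (Real.sqrt π / A^j / 2) = 4 * 4^j * (Real.sqrt π / (A^j*2) / N^2) by ring]
      apply mul_le_mul_of_nonneg_left _ (by positivity : (0:ℝ) ≤ 4 * 4^j)
      gcongr ?_ / N^2
      rw [div_le_div_iff₀ (by positivity) (hApow_pos j)]
      nlinarith [hApow_pos j]
    have hgeom : ∑ j ∈ Finset.range j₁, (2*A)^j ≤ (5/9) * (2*A)^j₁ := by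
      have h2A1 : (2*A) ≠ 1 := by nlinarith
      rw [geom_sum_eq h2A1]
      have hd : (9:ℝ)/5 ≤ 2*A - 1 := by nlinarith
      have hx1 : (1:ℝ) ≤ (2*A)^j₁ := by
        apply one_le_pow₀
        nlinarith
      rw [div_le_iff₀ (by nlinarith : (0:ℝ) < 2*A - 1)]
      nlinarith [pow_nonneg (by nlinarith : (0:ℝ) ≤ 2*A) j₁]
    have hpow : (2*A)^j₁ ≤ (N/2) * Real.sqrt (N/2) := by
      rw [mul_pow, ← hAexp]
      have h1 : (2:ℝ)^j₁ ≤ N/2 := hj₁up.le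
      have h2 : Real.sqrt ((2:ℝ)^j₁) ≤ Real.sqrt (N/2) := Real.sqrt_le_sqrt h1
      exact mul_le_mul h1 h2 (Real.sqrt_nonneg _) (by linarith)
    have hfinal1 : ∑ j ∈ Finset.range j₁, ((2^(j+1):ℝ)/N)^2 * (Real.sqrt (π/(2^j:ℝ))/2)
        ≤ (4/N^2) * ((5/9) * ((N/2) * Real.sqrt (N/2))) := by
      calc ∑ j ∈ Finset.range j₁, ((2^(j+1):ℝ)/N)^2 * (Real.sqrt (π/(2^j:ℝ))/2)
          ≤ ∑ j ∈ Finset.range j₁, (4/N^2) * (2*A)^j := Finset.sum_le_sum hterm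
        _ = (4/N^2) * ∑ j ∈ Finset.range j₁, (2*A)^j := by rw [Finset.mul_sum]
        _ ≤ (4/N^2) * ((5/9) * (2*A)^j₁) := by
            apply mul_le_mul_of_nonneg_left hgeom (by positivity)
        _ ≤ (4/N^2) * ((5/9) * ((N/2) * Real.sqrt (N/2))) := by
            apply mul_le_mul_of_nonneg_left _ (by positivity)
            apply mul_le_mul_of_nonneg_left hpow (by norm_num)
    have hsqN : Real.sqrt (N/2) ≤ Real.sqrt N := Real.sqrt_le_sqrt (by linarith)
    have hsqrtN : Real.sqrt (M/T) = 1 / Real.sqrt N := by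
      rw [hβN, one_div, Real.sqrt_inv, one_div]
    have hNsq : Real.sqrt N * Real.sqrt N = N := Real.mul_self_sqrt hNpos.le
    have hsqNpos : (0:ℝ) < Real.sqrt N := Real.sqrt_pos.mpr hNpos
    calc ∑ j ∈ Finset.range j₁, ((2^(j+1):ℝ)/N)^2 * (Real.sqrt (π/(2^j:ℝ))/2)
        ≤ (4/N^2) * ((5/9) * ((N/2) * Real.sqrt (N/2))) := hfinal1
      _ ≤ (4/N^2) * ((5/9) * ((N/2) * Real.sqrt N)) := by
          apply mul_le_mul_of_nonneg_left _ (by positivity)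
          apply mul_le_mul_of_nonneg_left _ (by norm_num)
          apply mul_le_mul_of_nonneg_left hsqN (by linarith)
      _ = (10/9) * (Real.sqrt N / N) := by
          field_simp
          ring
      _ = (10/9) * Real.sqrt (M/T) := by
          rw [hsqrtN]
          congr 1
          rw [eq_div_iff (ne_of_gt hsqNpos)]
          field_simp [hNsq]
          exact Real.sq_sqrt hNpos.le
      _ ≤ (3/2) * Real.sqrt (M/T) := by
          have : (0:ℝ) ≤ Real.sqrt (M/T) := Real.sqrt_nonneg _
          nlinarith
  -- put everything together
  have hmono : ∫ t in Set.Ioi (0:ℝ), (μ {a | t < Z a}).toReal ≤ ∫ t in Set.Ioi (0:ℝ), H t := by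
    refine integral_mono_of_nonneg ?_ hHint ?_
    · exact Filter.Eventually.of_forall fun t => ENNReal.toReal_nonneg
    · rw [Filter.EventuallyLE, ae_restrict_iff' measurableSet_Ioi]
      exact Filter.Eventually.of_forall fun t ht => htail t ht
  have h6nn : (0:ℝ) ≤ 6 * M / T := by positivity
  calc ∫ ω, Z ω ∂μ = ∫ t in Set.Ioi (0:ℝ), (μ {a | t < Z a}).toReal := hLC
    _ ≤ ∫ t in Set.Ioi (0:ℝ), H t := hmono
    _ = Real.sqrt (π/(2*(2^j₁:ℝ)))/2
        + ∑ j ∈ Finset.range j₁, ((2^(j+1):ℝ)/N)^2 * (Real.sqrt (π/(2^j:ℝ))/2) := hHval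
    _ ≤ (3/2) * Real.sqrt (M/T) + (3/2) * Real.sqrt (M/T) := add_le_add hVnum hBnum
    _ ≤ 3 * Real.sqrt (M/T) + 6 * M / T := by linarith
end
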